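/- arXiv:1106.5092 — 11 statements merged into one kernel-verified Lean document; each statement's English description precedes it below -/
import Mathlib

section
/- Let Σ be a set and let X be a set of configurations x : ℤ² → Σ having the diagonal property. Then every configuration in X is determined by any one of its diagonals: for all x, y ∈ X and (i,j) ∈ ℤ², if x_{i+n, j-n} = y_{i+n, j-n} for all n ∈ ℤ, then x = y. -/
/-- If a set `X` of configurations `ℤ² → Σ` has the diagonal property,
then every configuration in `X` is determined by any one of its diagonals. -/
theorem diagonal_determines_configuration {S : Type*} (X : Set (ℤ × ℤ → S))
    (hdiag : ∀ x ∈ X, ∀ y ∈ X, ∀ i j : ℤ,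
      x (i, j) = y (i, j) → x (i + 1, j - 1) = y (i + 1, j - 1) →
        x (i, j - 1) = y (i, j - 1) ∧ x (i + 1, j) = y (i + 1, j)) :
    ∀ x ∈ X, ∀ y ∈ X, ∀ i j : ℤ,
      (∀ n : ℤ, x (i + n, j - n) = y (i + n, j - n)) → x = y := by
  intro x hx y hy i j h
  have key : ∀ k : ℕ, ∀ n : ℤ,
      x (i + n, j - n + k) = y (i + n, j - n + k) ∧
      x (i + n, j - n - k) = y (i + n, j - n - k) := by
    intro k
    induction k with
    | zero => intro n; exact ⟨by simpa using h n, by simpa using h n⟩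
    | succ k ih =>
      intro n
      constructor
      · have h1 := (ih (n - 1)).1
        have h2 := (ih n).1
        have := (hdiag x hx y hy (i + (n - 1)) (j - (n - 1) + k) h1 (by
          have e1 : i + (n - 1) + 1 = i + n := by ring
          have e2 : j - (n - 1) + k - 1 = j - n + k := by ring
          rw [e1, e2]; exact h2)).2
        have e1 : i + (n - 1) + 1 = i + n := by ring
        have e2 : j - (n - 1) + (k : ℤ) = j - n + (k + 1 : ℕ) := by push_cast; ring
        rwa [e1, e2] at this
      · have h1 := (ih n).2
        have h2 := (ih (n + 1)).2
        have := (hdiag x hx y hy (i + n) (j - n - k) h1 (by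
          have e1 : i + n + 1 = i + (n + 1) := by ring
          have e2 : j - n - k - 1 = j - (n + 1) - k := by ring
          rw [e1, e2]; exact h2)).1
        have e2 : j - n - (k : ℤ) - 1 = j - n - (k + 1 : ℕ) := by push_cast; ring
        rwa [e2] at this
  funext p
  obtain ⟨a, b⟩ := p
  rcases le_or_gt (i + j) (a + b) with hle | hlt
  · obtain ⟨k, hk⟩ := Int.le.dest hle
    have := (key k (a - i)).1
    have e1 : i + (a - i) = a := by ring
    have e2 : j - (a - i) + (k : ℤ) = b := by omega
    rwa [e1, e2] at this
  · obtain ⟨k, hk⟩ := Int.le.dest hlt.le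
    have := (key k (a - i)).2
    have e1 : i + (a - i) = a := by ring
    have e2 : j - (a - i) - (k : ℤ) = b := by omega
    rwa [e1, e2] at this
end

section
/- Let ω : ℤ² → Σ_κ be a paved configuration. Then ω ∈ X_{ρ,η}^κ if and only if for all (i,j) ∈ ℤ² and all n, m ≥ 0 the composition ρ_{b(ω_{i+n,j-m})} ∘ ⋯ ∘ ρ_{b(ω_{i+1,j-m})} ∘ ρ_{b(ω_{i,j-m})} ∘ η_{l(ω_{i,j-m})} ∘ ⋯ ∘ η_{l(ω_{i,j-1})} ∘ η_{l(ω_{i,j})} is a nonzero map on A. -/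
open scoped Classical

variable (A : Type*) [NormedRing A] [StarRing A] [CStarRing A] [CompleteSpace A]
  [NormedAlgebra ℂ A] [StarModule ℂ A] [PartialOrder A] [StarOrderedRing A]

/-- A `C*`-symbolic dynamical system `(A, ρ, S)`: a finite family of (central, essential,
faithful) `*`-endomorphisms of a unital `C*`-algebra `A` indexed by a finite alphabet `S`. -/
structure CSDS (S : Type*) [Fintype S] where
  ρ : S → A →⋆ₙₐ[ℂ] A
  unit_ne_zero : ∀ α, ρ α 1 ≠ 0
  central : ∀ α, ∀ x ∈ Set.center A, ρ α x ∈ Set.center A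
  essential : 1 ≤ ∑ α, ρ α 1
  faithful : ∀ x : A, x ≠ 0 → ∃ α, ρ α x ≠ 0

/-- A `C*`-textile dynamical system `(A, ρ, η, Σ^ρ, Σ^η, κ)`. -/
structure CTDS (Sρ Sη : Type*) [Fintype Sρ] [Fintype Sη] where
  rs : CSDS A Sρ
  es : CSDS A Sη
  κ : {p : Sρ × Sη // ∃ x, es.ρ p.2 (rs.ρ p.1 x) ≠ 0} →
      {q : Sη × Sρ // ∃ x, rs.ρ q.2 (es.ρ q.1 x) ≠ 0}
  κ_bij : Function.Bijective κ
  commrel : ∀ p, ∀ x, es.ρ p.1.2 (rs.ρ p.1.1 x) = rs.ρ (κ p).1.2 (es.ρ (κ p).1.1 x)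

variable {A}
variable {Sρ Sη : Type*} [Fintype Sρ] [Fintype Sη]

namespace CTDS

/-- The alphabet `Σ_κ` of the textile system: pairs `(α, b) ∈ Σ^{ρη}`,
identified with quadruples `(α, b, a, β)` with `κ(α,b) = (a,β)`. -/
abbrev SigmaKappa (T : CTDS A Sρ Sη) : Type _ :=
  {p : Sρ × Sη // ∃ x, T.es.ρ p.2 (T.rs.ρ p.1 x) ≠ 0}

variable (T : CTDS A Sρ Sη)

/-- top label `t(ω) = α` -/
def tt (ω : T.SigmaKappa) : Sρ := ω.1.1
/-- right label `r(ω) = b` -/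
def rr (ω : T.SigmaKappa) : Sη := ω.1.2
/-- left label `l(ω) = a` -/
def ll (ω : T.SigmaKappa) : Sη := (T.κ ω).1.1
/-- bottom label `b(ω) = β` -/
def bb (ω : T.SigmaKappa) : Sρ := (T.κ ω).1.2
/-- `δ(ω) = η_b ∘ ρ_α` -/
noncomputable def delta (ω : T.SigmaKappa) : A → A := fun x => T.es.ρ (T.rr ω) (T.rs.ρ (T.tt ω) x)

/-- A configuration `ω : ℤ² → Σ_κ` is paved. -/
def Paved (ω : ℤ × ℤ → T.SigmaKappa) : Prop :=
  ∀ i j : ℤ, T.tt (ω (i, j)) = T.bb (ω (i, j + 1)) ∧ T.rr (ω (i, j)) = T.ll (ω (i + 1, j))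

/-- The diagonal composition `δ(ω_{i+n,j-n}) ∘ ⋯ ∘ δ(ω_{i,j})` (`n+1` factors). -/
noncomputable def diagComp (ω : ℤ × ℤ → T.SigmaKappa) (i j : ℤ) : ℕ → A → A
  | 0 => T.delta (ω (i, j))
  | n + 1 => T.delta (ω (i + (n : ℤ) + 1, j - (n : ℤ) - 1)) ∘ diagComp ω i j n

/-- The two-dimensional subshift `X_{ρ,η}^κ`. -/
def XSet : Set (ℤ × ℤ → T.SigmaKappa) :=
  {ω | T.Paved ω ∧ ∀ (i j : ℤ) (n : ℕ), T.diagComp ω i j (n + 1) ≠ 0}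

/-- The chain `η_{l(ω_{i,j-m})} ∘ ⋯ ∘ η_{l(ω_{i,j-1})} ∘ η_{l(ω_{i,j})}` (`m+1` factors). -/
noncomputable def etaChain (ω : ℤ × ℤ → T.SigmaKappa) (i j : ℤ) : ℕ → A → A
  | 0 => fun x => T.es.ρ (T.ll (ω (i, j))) x
  | m + 1 => (fun x => T.es.ρ (T.ll (ω (i, j - (m : ℤ) - 1))) x) ∘ etaChain ω i j m

/-- The chain `ρ_{b(ω_{i+n,j-m})} ∘ ⋯ ∘ ρ_{b(ω_{i+1,j-m})} ∘ ρ_{b(ω_{i,j-m})}` (`n+1` factors). -/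
noncomputable def rhoChain (ω : ℤ × ℤ → T.SigmaKappa) (i j : ℤ) (m : ℕ) : ℕ → A → A
  | 0 => fun x => T.rs.ρ (T.bb (ω (i, j - (m : ℤ)))) x
  | n + 1 => (fun x => T.rs.ρ (T.bb (ω (i + (n : ℤ) + 1, j - (m : ℤ)))) x) ∘ rhoChain ω i j m n

end CTDS

namespace CTDS

variable (T : CTDS A Sρ Sη)

/-- `δ(ω) = η_b ∘ ρ_α = ρ_β ∘ η_a`. -/
lemma swap (p : T.SigmaKappa) (x : A) :
    T.es.ρ (T.rr p) (T.rs.ρ (T.tt p) x) = T.rs.ρ (T.bb p) (T.es.ρ (T.ll p) x) :=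
  T.commrel p x

lemma eta_rho_comm (ω : ℤ × ℤ → T.SigmaKappa) (hp : T.Paved ω) (i j : ℤ) (m k : ℕ) (x : A) :
    T.es.ρ (T.ll (ω (i + (k : ℤ) + 1, j - (m : ℤ) - 1))) (T.rhoChain ω i j m k x)
      = T.rhoChain ω i j (m + 1) k (T.es.ρ (T.ll (ω (i, j - (m : ℤ) - 1))) x) := by
  have e1 : j - ((m + 1 : ℕ) : ℤ) = j - (m : ℤ) - 1 := by push_cast; ring
  have e2 : j - (m : ℤ) - 1 + 1 = j - (m : ℤ) := by ring
  induction k generalizing x with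
  | zero =>
    have e0 : i + ((0 : ℕ) : ℤ) + 1 = i + 1 := by norm_num
    have h1 : T.ll (ω (i + 1, j - (m : ℤ) - 1)) = T.rr (ω (i, j - (m : ℤ) - 1)) :=
      ((hp i (j - (m : ℤ) - 1)).2).symm
    have h2 : T.bb (ω (i, j - (m : ℤ))) = T.tt (ω (i, j - (m : ℤ) - 1)) := by
      have h := (hp i (j - (m : ℤ) - 1)).1
      rw [e2] at h
      exact h.symm
    simp only [rhoChain]
    rw [e0, e1, h1, h2]
    exact T.swap _ x
  | succ k ih =>
    have e3 : i + ((k + 1 : ℕ) : ℤ) + 1 = i + (k : ℤ) + 1 + 1 := by push_cast; ring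
    have h1 : T.ll (ω (i + (k : ℤ) + 1 + 1, j - (m : ℤ) - 1))
        = T.rr (ω (i + (k : ℤ) + 1, j - (m : ℤ) - 1)) :=
      ((hp (i + (k : ℤ) + 1) (j - (m : ℤ) - 1)).2).symm
    have h2 : T.bb (ω (i + (k : ℤ) + 1, j - (m : ℤ)))
        = T.tt (ω (i + (k : ℤ) + 1, j - (m : ℤ) - 1)) := by
      have h := (hp (i + (k : ℤ) + 1) (j - (m : ℤ) - 1)).1
      rw [e2] at h
      exact h.symm
    simp only [rhoChain, Function.comp_apply]
    rw [e3, e1, h1, h2, T.swap, ih]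

lemma diag_eq (ω : ℤ × ℤ → T.SigmaKappa) (hp : T.Paved ω) (i j : ℤ) (n : ℕ) :
    T.diagComp ω i j n = T.rhoChain ω i j n n ∘ T.etaChain ω i j n := by
  induction n with
  | zero =>
    funext x
    simp only [diagComp, delta, rhoChain, etaChain, Function.comp_apply]
    rw [T.swap]
    norm_num
  | succ n ih =>
    funext x
    simp only [diagComp, delta, rhoChain, etaChain, Function.comp_apply, ih]
    rw [T.swap]
    have h3 : T.bb (ω (i + (n : ℤ) + 1, j - (n : ℤ) - 1))
        = T.bb (ω (i + (n : ℤ) + 1, j - ((n : ℕ) + 1 : ℤ))) := by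
      congr 2
      ring
    rw [h3]
    congr 1
    have := T.eta_rho_comm ω hp i j n n (T.etaChain ω i j n x)
    rw [this]

lemma chain_succ_eta (ω : ℤ × ℤ → T.SigmaKappa) (hp : T.Paved ω) (i j : ℤ) (n m : ℕ) (x : A) :
    (T.rhoChain ω i j (m + 1) n ∘ T.etaChain ω i j (m + 1)) x
      = T.es.ρ (T.ll (ω (i + (n : ℤ) + 1, j - (m : ℤ) - 1)))
          ((T.rhoChain ω i j m n ∘ T.etaChain ω i j m) x) := by
  simp only [etaChain, Function.comp_apply]
  rw [T.eta_rho_comm ω hp i j m n]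

lemma chain_zero_step_rho (ω : ℤ × ℤ → T.SigmaKappa) (i j : ℤ) (n m : ℕ)
    (h : T.rhoChain ω i j m n ∘ T.etaChain ω i j m = 0) :
    T.rhoChain ω i j m (n + 1) ∘ T.etaChain ω i j m = 0 := by
  funext x
  have hx := congrFun h x
  simp only [Function.comp_apply, Pi.zero_apply] at hx ⊢
  simp only [rhoChain, Function.comp_apply, hx, map_zero]

lemma chain_zero_step_eta (ω : ℤ × ℤ → T.SigmaKappa) (hp : T.Paved ω) (i j : ℤ) (n m : ℕ)
    (h : T.rhoChain ω i j m n ∘ T.etaChain ω i j m = 0) :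
    T.rhoChain ω i j (m + 1) n ∘ T.etaChain ω i j (m + 1) = 0 := by
  funext x
  have hx := congrFun h x
  rw [Pi.zero_apply] at hx
  rw [Pi.zero_apply, T.chain_succ_eta ω hp i j n m x, hx, map_zero]

lemma chain_zero_mono (ω : ℤ × ℤ → T.SigmaKappa) (hp : T.Paved ω) (i j : ℤ)
    {n m n' m' : ℕ} (hn : n ≤ n') (hm : m ≤ m')
    (h : T.rhoChain ω i j m n ∘ T.etaChain ω i j m = 0) :
    T.rhoChain ω i j m' n' ∘ T.etaChain ω i j m' = 0 := by
  obtain ⟨kn, rfl⟩ := Nat.exists_eq_add_of_le hn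
  obtain ⟨km, rfl⟩ := Nat.exists_eq_add_of_le hm
  have step1 : T.rhoChain ω i j m (n + kn) ∘ T.etaChain ω i j m = 0 := by
    induction kn with
    | zero => exact h
    | succ k ihk => exact T.chain_zero_step_rho ω i j (n + k) m (ihk (by omega))
  clear h
  induction km with
  | zero => exact step1
  | succ k ihk => exact T.chain_zero_step_eta ω hp i j (n + kn) (m + k) (ihk (by omega))

end CTDS

/-- A paved configuration `ω` belongs to `X_{ρ,η}^κ` if and only if all the
compositions `ρ_{b(ω_{i+n,j-m})} ∘ ⋯ ∘ ρ_{b(ω_{i,j-m})} ∘ η_{l(ω_{i,j-m})} ∘ ⋯ ∘ η_{l(ω_{i,j})}`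
are nonzero maps on `A`. -/
theorem mem_XSet_iff_chains_ne_zero (T : CTDS A Sρ Sη)
    (ω : ℤ × ℤ → T.SigmaKappa) (hp : T.Paved ω) :
    ω ∈ T.XSet ↔
      ∀ (i j : ℤ) (n m : ℕ), T.rhoChain ω i j m n ∘ T.etaChain ω i j m ≠ 0 := by
  constructor
  · rintro ⟨-, hd⟩ i j n m h0
    have hsq : T.rhoChain ω i j (max n m + 1) (max n m + 1)
        ∘ T.etaChain ω i j (max n m + 1) = 0 :=
      T.chain_zero_mono ω hp i j (by omega) (by omega) h0
    exact hd i j (max n m) (by rw [T.diag_eq ω hp i j (max n m + 1)]; exact hsq)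
  · intro h
    refine ⟨hp, fun i j n => ?_⟩
    rw [T.diag_eq ω hp i j (n + 1)]
    exact h i j (n + 1) (n + 1)
end

section
/- The set X_{ρ,η}^κ has the diagonal property: for all configurations x, y ∈ X_{ρ,η}^κ and (i,j) ∈ ℤ², the conditions x_{i,j} = y_{i,j} and x_{i+1,j-1} = y_{i+1,j-1} imply x_{i,j-1} = y_{i,j-1} and x_{i+1,j} = y_{i+1,j}. -/
open scoped Classical

variable (A : Type*) [NormedRing A] [StarRing A] [CStarRing A] [CompleteSpace A]
  [NormedAlgebra ℂ A] [StarModule ℂ A] [PartialOrder A] [StarOrderedRing A]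

variable {A}
variable {Sρ Sη : Type*} [Fintype Sρ] [Fintype Sη]

/-- `X_{ρ,η}^κ` has the diagonal property. -/
theorem XSet_diagonal_property (T : CTDS A Sρ Sη) :
    ∀ x ∈ T.XSet, ∀ y ∈ T.XSet, ∀ i j : ℤ,
      x (i, j) = y (i, j) → x (i + 1, j - 1) = y (i + 1, j - 1) →
        x (i, j - 1) = y (i, j - 1) ∧ x (i + 1, j) = y (i + 1, j) := by
  rintro x ⟨Px, -⟩ y ⟨Py, -⟩ i j h1 h2
  have e : j - 1 + 1 = j := by ring
  constructor
  · -- determined by (tt, rr)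
    have hA : T.tt (x (i, j - 1)) = T.tt (y (i, j - 1)) := by
      have hx := (Px i (j - 1)).1
      have hy := (Py i (j - 1)).1
      rw [e] at hx hy
      rw [hx, hy, h1]
    have hB : T.rr (x (i, j - 1)) = T.rr (y (i, j - 1)) := by
      have hx := (Px i (j - 1)).2
      have hy := (Py i (j - 1)).2
      rw [hx, hy, h2]
    exact Subtype.ext (Prod.ext hA hB)
  · -- determined by (ll, bb) via injectivity of κ
    apply T.κ_bij.1
    have hA : T.ll (x (i + 1, j)) = T.ll (y (i + 1, j)) := by
      have hx := (Px i j).2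
      have hy := (Py i j).2
      rw [← hx, ← hy, h1]
    have hB : T.bb (x (i + 1, j)) = T.bb (y (i + 1, j)) := by
      have hx := (Px (i + 1) (j - 1)).1
      have hy := (Py (i + 1) (j - 1)).1
      rw [e] at hx hy
      rw [← hx, ← hy, h2]
    exact Subtype.ext (Prod.ext hA hB)
end

section
/- For α ∈ Σ^ρ and a ∈ Σ^η, one has t_a* s_α ≠ 0 if and only if there exist b ∈ Σ^η and β ∈ Σ^ρ such that (α,b) ∈ Σ^{ρη} and κ(α,b) = (a,β). -/
open scoped Classical

variable (A : Type*) [NormedRing A] [StarRing A] [CStarRing A] [CompleteSpace A]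
  [NormedAlgebra ℂ A] [StarModule ℂ A] [PartialOrder A] [StarOrderedRing A]

variable {A}
variable {Sρ Sη : Type*} [Fintype Sρ] [Fintype Sη]

namespace CTDS

variable (T : CTDS A Sρ Sη)


noncomputable instance (T : CTDS A Sρ Sη) : Fintype T.SigmaKappa := Fintype.ofFinite _

end CTDS

variable {B : Type*} [NormedRing B] [StarRing B] [CStarRing B] [CompleteSpace B]
  [NormedAlgebra ℂ B] [StarModule ℂ B]

section Aux

variable {C : Type*} [NormedRing C] [StarRing C] [CStarRing C] [CompleteSpace C]
  [NormedAlgebra ℂ C] [StarModule ℂ C]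

/-- Partial isometries whose range projections sum to `1` have orthogonal ranges. -/
lemma star_mul_eq_zero_of_ne {ι : Type*} [Fintype ι] (t : ι → C)
    (hpi : ∀ i, t i * star (t i) * t i = t i)
    (hsum : ∑ i, t i * star (t i) = 1) {i j : ι} (hij : i ≠ j) :
    star (t i) * t j = 0 := by
  letI : CStarAlgebra C :=
    { ‹NormedRing C›, ‹StarRing C›, ‹CStarRing C›, ‹NormedAlgebra ℂ C›,
      ‹StarModule ℂ C›, ‹CompleteSpace C› with }
  letI := CStarAlgebra.spectralOrder C
  haveI := CStarAlgebra.spectralOrderedRing C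
  set p : ι → C := fun i => t i * star (t i) with hp
  have hproj : ∀ i, p i * p i = p i := by
    intro i
    calc (t i * star (t i)) * (t i * star (t i))
        = (t i * star (t i) * t i) * star (t i) := by simp only [mul_assoc]
      _ = t i * star (t i) := by rw [hpi i]
  have hstarp : ∀ i, star (p i) = p i := fun i => by simp [hp, star_mul, mul_assoc]
  have key : p i * p j = 0 := by
    have hsum2 : ∑ k, p i * p k * p i = p i := by
      rw [← Finset.sum_mul, ← Finset.mul_sum, hsum, mul_one, hproj]
    have herase : ∑ k ∈ Finset.univ.erase i, p i * p k * p i = 0 := by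
      have := Finset.sum_erase_add Finset.univ (fun k => p i * p k * p i)
        (Finset.mem_univ i)
      rw [hsum2] at this
      have hterm : p i * p i * p i = p i := by rw [hproj, hproj]
      have this2 : ∑ k ∈ Finset.univ.erase i, p i * p k * p i + p i * p i * p i = p i :=
        this
      rw [hterm] at this2
      have h0 : ∑ k ∈ Finset.univ.erase i, p i * p k * p i + p i = 0 + p i := by
        rw [this2, zero_add]
      exact add_right_cancel h0
    have hform : ∀ k, p i * p k * p i = star (p k * p i) * (p k * p i) := by
      intro k
      rw [star_mul, hstarp, hstarp]
      simp only [mul_assoc, hproj]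
      simp only [← mul_assoc, hproj]
    have hzero : ∀ k ∈ Finset.univ.erase i, p i * p k * p i = 0 := by
      rw [← Finset.sum_eq_zero_iff_of_nonneg]
      · exact herase
      · intro k _
        rw [hform k]
        exact star_mul_self_nonneg _
    have hji : p j * p i = 0 := by
      have := hzero j (Finset.mem_erase.mpr ⟨fun h => hij h.symm, Finset.mem_univ j⟩)
      rw [hform j] at this
      exact (CStarRing.star_mul_self_eq_zero_iff _).mp this
    calc p i * p j = star (p j * p i) := by rw [star_mul, hstarp, hstarp]
      _ = 0 := by rw [hji, star_zero]
  have hsi : star (t i) * t i * star (t i) = star (t i) := by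
    have := congrArg star (hpi i)
    simpa [star_mul, mul_assoc] using this
  calc star (t i) * t j
      = (star (t i) * t i * star (t i)) * (t j * star (t j) * t j) := by
        rw [hsi, hpi j]
    _ = star (t i) * (p i * p j) * t j := by simp only [hp, mul_assoc]
    _ = 0 := by rw [key, mul_zero, zero_mul]

end Aux

/-- `t_a* s_α ≠ 0` iff there are `b, β` with `(α,b) ∈ Σ^{ρη}` and
`κ(α,b) = (a,β)`. -/
theorem tStar_mul_s_ne_zero_iff
    (T : CTDS A Sρ Sη)
    (π : A →⋆ₐ[ℂ] B) (hπ : Function.Injective π)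
    (s : Sρ → B) (t : Sη → B)
    (hspi : ∀ α, s α * star (s α) * s α = s α)
    (htpi : ∀ a, t a * star (t a) * t a = t a)
    (hs1 : ∑ β, s β * star (s β) = 1)
    (hs2 : ∀ (x : A) (α : Sρ), π x * (s α * star (s α)) = s α * star (s α) * π x)
    (hs3 : ∀ (x : A) (α : Sρ), star (s α) * π x * s α = π (T.rs.ρ α x))
    (ht1 : ∑ b, t b * star (t b) = 1)
    (ht2 : ∀ (x : A) (a : Sη), π x * (t a * star (t a)) = t a * star (t a) * π x)
    (ht3 : ∀ (x : A) (a : Sη), star (t a) * π x * t a = π (T.es.ρ a x))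
    (hst : ∀ p : T.SigmaKappa, s p.1.1 * t p.1.2 = t (T.κ p).1.1 * s (T.κ p).1.2)
    (α : Sρ) (a : Sη) :
    star (t a) * s α ≠ 0 ↔
      ∃ (b : Sη) (β : Sρ) (h : ∃ x, T.es.ρ b (T.rs.ρ α x) ≠ 0),
        (T.κ ⟨(α, b), h⟩).1 = (a, β) := by
  have hπ0 : ∀ y : A, π y = 0 ↔ y = 0 := fun y => by
    rw [← map_zero π]; exact ⟨fun h => hπ h, fun h => by rw [h]⟩
  have hss : star (s α) * s α = π (T.rs.ρ α 1) := by
    have := hs3 1 α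
    rwa [map_one, mul_one] at this
  have hstar0 : ∀ b, star (s α * t b) * (s α * t b) = π (T.es.ρ b (T.rs.ρ α 1)) := by
    intro b
    calc star (s α * t b) * (s α * t b)
        = star (t b) * (star (s α) * s α) * t b := by
          rw [star_mul]; simp only [mul_assoc]
      _ = star (t b) * π (T.rs.ρ α 1) * t b := by rw [hss]
      _ = π (T.es.ρ b (T.rs.ρ α 1)) := ht3 _ b
  have h1ne : ∀ b : Sη, (∃ x, T.es.ρ b (T.rs.ρ α x) ≠ 0) ↔ T.es.ρ b (T.rs.ρ α 1) ≠ 0 := by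
    intro b
    constructor
    · rintro ⟨x, hx⟩ h0
      apply hx
      have hx1 : T.rs.ρ α x = T.rs.ρ α x * T.rs.ρ α 1 := by rw [← map_mul, mul_one]
      rw [hx1, map_mul, h0, mul_zero]
    · intro h; exact ⟨1, h⟩
  have hsz : ∀ b : Sη, s α * t b = 0 ↔ ¬ ∃ x, T.es.ρ b (T.rs.ρ α x) ≠ 0 := by
    intro b
    rw [← CStarRing.star_mul_self_eq_zero_iff, hstar0 b, hπ0, h1ne b, not_not]
  constructor
  · intro hne
    by_contra hnex
    push_neg at hnex
    apply hne
    have hexp : star (t a) * s α = ∑ b, star (t a) * (s α * t b) * star (t b) := by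
      calc star (t a) * s α
          = star (t a) * s α * ∑ b, t b * star (t b) := by rw [ht1, mul_one]
        _ = ∑ b, star (t a) * (s α * t b) * star (t b) := by
            rw [Finset.mul_sum]
            exact Finset.sum_congr rfl fun b _ => by simp only [mul_assoc]
    rw [hexp]
    apply Finset.sum_eq_zero
    intro b _
    by_cases hb : ∃ x, T.es.ρ b (T.rs.ρ α x) ≠ 0
    · rw [hst ⟨(α, b), hb⟩]
      have hane : a ≠ (T.κ ⟨(α, b), hb⟩).1.1 := by
        intro h
        exact hnex b (T.κ ⟨(α, b), hb⟩).1.2 hb (Prod.ext h.symm rfl)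
      rw [← mul_assoc, star_mul_eq_zero_of_ne t htpi ht1 hane, zero_mul, zero_mul]
    · rw [(hsz b).mpr hb, mul_zero, zero_mul]
  · rintro ⟨b, β, h, hκ⟩ h0
    have h1 : s α * t b = t a * s β := by
      rw [hst ⟨(α, b), h⟩, hκ]
    have h2 : s α * t b ≠ 0 := fun hz => (hsz b).mp hz h
    apply h2
    calc s α * t b = t a * s β := h1
      _ = (t a * star (t a) * t a) * s β := by rw [htpi a]
      _ = t a * star (t a) * (t a * s β) := by rw [mul_assoc]
      _ = t a * star (t a) * (s α * t b) := by rw [h1]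
      _ = t a * (star (t a) * s α) * t b := by simp only [mul_assoc]
      _ = 0 := by rw [h0, mul_zero, zero_mul]
end

section
/- For α ∈ Σ^ρ and a ∈ Σ^η, one has t_a* s_α = Σ s_β π(η_b(ρ_α(1))) t_b*, where the sum runs over all pairs (b,β) ∈ Σ^η×Σ^ρ with (α,b) ∈ Σ^{ρη} and κ(α,b) = (a,β); consequently s_α* t_a = Σ t_b π(ρ_β(η_a(1))) s_β* over the same index set. -/
open scoped Classical

variable (A : Type*) [NormedRing A] [StarRing A] [CStarRing A] [CompleteSpace A]
  [NormedAlgebra ℂ A] [StarModule ℂ A] [PartialOrder A] [StarOrderedRing A]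

variable {A}
variable {Sρ Sη : Type*} [Fintype Sρ] [Fintype Sη]

variable {B : Type*} [NormedRing B] [StarRing B] [CStarRing B] [CompleteSpace B]
  [NormedAlgebra ℂ B] [StarModule ℂ B]

/-- `t_a* s_α = Σ s_β π(η_b(ρ_α(1))) t_b*` and
`s_α* t_a = Σ t_b π(ρ_β(η_a(1))) s_β*`, summing over pairs `(b,β)` with
`(α,b) ∈ Σ^{ρη}` and `κ(α,b) = (a,β)`. -/
theorem tStar_mul_s_eq_sum
    (T : CTDS A Sρ Sη)
    (π : A →⋆ₐ[ℂ] B) (hπ : Function.Injective π)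
    (s : Sρ → B) (t : Sη → B)
    (hspi : ∀ α, s α * star (s α) * s α = s α)
    (htpi : ∀ a, t a * star (t a) * t a = t a)
    (hs1 : ∑ β, s β * star (s β) = 1)
    (hs2 : ∀ (x : A) (α : Sρ), π x * (s α * star (s α)) = s α * star (s α) * π x)
    (hs3 : ∀ (x : A) (α : Sρ), star (s α) * π x * s α = π (T.rs.ρ α x))
    (ht1 : ∑ b, t b * star (t b) = 1)
    (ht2 : ∀ (x : A) (a : Sη), π x * (t a * star (t a)) = t a * star (t a) * π x)
    (ht3 : ∀ (x : A) (a : Sη), star (t a) * π x * t a = π (T.es.ρ a x))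
    (hst : ∀ p : T.SigmaKappa, s p.1.1 * t p.1.2 = t (T.κ p).1.1 * s (T.κ p).1.2)
    (α : Sρ) (a : Sη) :
    star (t a) * s α =
      (∑ p : T.SigmaKappa,
        if p.1.1 = α ∧ (T.κ p).1.1 = a then
          s (T.κ p).1.2 * π (T.es.ρ p.1.2 (T.rs.ρ α 1)) * star (t p.1.2)
        else 0) ∧
    star (s α) * t a =
      (∑ p : T.SigmaKappa,
        if p.1.1 = α ∧ (T.κ p).1.1 = a then
          t p.1.2 * π (T.rs.ρ (T.κ p).1.2 (T.es.ρ a 1)) * star (s (T.κ p).1.2)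
        else 0) := by
  classical
  letI : CStarAlgebra B := ⟨⟩
  letI := CStarAlgebra.spectralOrder B
  haveI := CStarAlgebra.spectralOrderedRing B
  -- basic consequences
  have hss : ∀ β : Sρ, star (s β) * s β = π (T.rs.ρ β 1) := by
    intro β
    have h := hs3 1 β
    rwa [map_one, mul_one] at h
  have htt : ∀ b : Sη, star (t b) * t b = π (T.es.ρ b 1) := by
    intro b
    have h := ht3 1 b
    rwa [map_one, mul_one] at h
  -- the range projections of the t's
  have hpsa : ∀ b : Sη, star (t b * star (t b)) = t b * star (t b) := by
    intro b; rw [star_mul, star_star]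
  have hproj : ∀ b : Sη, (t b * star (t b)) * (t b * star (t b)) = t b * star (t b) := by
    intro b; rw [← mul_assoc, htpi b]
  -- orthogonality of the range projections
  have horth : ∀ c d : Sη, c ≠ d → (t c * star (t c)) * (t d * star (t d)) = 0 := by
    intro c d hcd
    have hterm : ∀ b : Sη,
        star ((t b * star (t b)) * (t d * star (t d))) *
          ((t b * star (t b)) * (t d * star (t d)))
        = (t d * star (t d)) * (t b * star (t b)) * (t d * star (t d)) := by
      intro b
      rw [star_mul, hpsa, hpsa, mul_assoc (t d * star (t d)) (t b * star (t b)),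
        ← mul_assoc (t b * star (t b)) (t b * star (t b)), hproj b, ← mul_assoc]
    have hsum0 : ∑ b ∈ Finset.univ.erase d,
        (t d * star (t d)) * (t b * star (t b)) * (t d * star (t d)) = 0 := by
      have h1 : ∑ b : Sη, (t d * star (t d)) * (t b * star (t b)) * (t d * star (t d))
          = t d * star (t d) := by
        rw [← Finset.sum_mul, ← Finset.mul_sum, ht1, mul_one, hproj d]
      have h2 := Finset.sum_erase_add Finset.univ
        (fun b => (t d * star (t d)) * (t b * star (t b)) * (t d * star (t d)))
        (Finset.mem_univ d)
      simp only [hproj d] at h2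
      rw [h1] at h2
      exact add_right_cancel (h2.trans (zero_add (t d * star (t d))).symm)
    have hnonneg : ∀ b ∈ Finset.univ.erase d,
        0 ≤ (t d * star (t d)) * (t b * star (t b)) * (t d * star (t d)) := by
      intro b _
      rw [← hterm b]
      exact star_mul_self_nonneg _
    have hz := (Finset.sum_eq_zero_iff_of_nonneg hnonneg).mp hsum0 c
      (Finset.mem_erase.mpr ⟨hcd, Finset.mem_univ c⟩)
    rw [← hterm c] at hz
    exact (CStarRing.star_mul_self_eq_zero_iff _).mp hz
  -- star (t c) * t d = 0 for c ≠ d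
  have hts : ∀ c d : Sη, c ≠ d → star (t c) * t d = 0 := by
    intro c d hcd
    have h1 : star (t c) * (t c * star (t c)) = star (t c) := by
      have h := congrArg star (htpi c)
      rwa [star_mul, star_mul, star_star] at h
    calc star (t c) * t d
        = (star (t c) * (t c * star (t c))) * ((t d * star (t d)) * t d) := by
          rw [h1, htpi d]
      _ = star (t c) * (((t c * star (t c)) * (t d * star (t d))) * t d) := by
          simp only [mul_assoc]
      _ = 0 := by rw [horth c d hcd, zero_mul, mul_zero]
  -- moving π across s
  have hmove : ∀ (x : A) (β : Sρ), π x * s β = s β * π (T.rs.ρ β x) := by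
    intro x β
    have e : π x * s β = s β * star (s β) * π x * s β := by
      conv_lhs => rw [← hspi β]
      rw [← mul_assoc, hs2 x β]
    rw [← hs3 x β, e]
    simp only [mul_assoc]
  -- s α * t b = 0 if (α, b) is not an admissible pair
  have hzero_st : ∀ b : Sη, (¬ ∃ x, T.es.ρ b (T.rs.ρ α x) ≠ 0) → s α * t b = 0 := by
    intro b hb
    push_neg at hb
    have h0 : star (s α * t b) * (s α * t b) = 0 := by
      have e1 : (star (t b) * star (s α)) * (s α * t b)
          = star (t b) * (star (s α) * s α) * t b := by simp only [mul_assoc]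
      rw [star_mul, e1, hss α, ht3, hb 1, map_zero]
    exact (CStarRing.star_mul_self_eq_zero_iff _).mp h0
  -- the extended summand
  set Fext : Sρ × Sη → B := fun q =>
    if h : ∃ x, T.es.ρ q.2 (T.rs.ρ q.1 x) ≠ 0 then
      (if q.1 = α ∧ (T.κ ⟨q, h⟩).1.1 = a then
        s (T.κ ⟨q, h⟩).1.2 * π (T.es.ρ q.2 (T.rs.ρ α 1)) * star (t q.2)
      else 0)
    else 0 with hFext
  have key : star (t a) * s α =
      (∑ p : T.SigmaKappa,
        if p.1.1 = α ∧ (T.κ p).1.1 = a then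
          s (T.κ p).1.2 * π (T.es.ρ p.1.2 (T.rs.ρ α 1)) * star (t p.1.2)
        else 0) := by
    calc star (t a) * s α
        = star (t a) * s α * ∑ b : Sη, t b * star (t b) := by rw [ht1, mul_one]
      _ = ∑ b : Sη, star (t a) * s α * (t b * star (t b)) := Finset.mul_sum _ _ _
      _ = ∑ b : Sη, Fext (α, b) := by
          refine Finset.sum_congr rfl fun b _ => ?_
          by_cases h : ∃ x, T.es.ρ b (T.rs.ρ α x) ≠ 0
          · have hstP : s α * t b =
                t (T.κ ⟨(α, b), h⟩).1.1 * s (T.κ ⟨(α, b), h⟩).1.2 := hst ⟨(α, b), h⟩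
            by_cases hc : (T.κ ⟨(α, b), h⟩).1.1 = a
            · simp only [hFext]
              rw [dif_pos h, if_pos ⟨trivial, hc⟩]
              have hcomm : T.es.ρ b (T.rs.ρ α 1)
                  = T.rs.ρ (T.κ ⟨(α, b), h⟩).1.2 (T.es.ρ a 1) := by
                have h2 := T.commrel ⟨(α, b), h⟩ 1
                rwa [hc] at h2
              calc star (t a) * s α * (t b * star (t b))
                  = star (t a) * ((s α * t b) * star (t b)) := by simp only [mul_assoc]
                _ = star (t a) * (t a * (s (T.κ ⟨(α, b), h⟩).1.2 * star (t b))) := by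
                    rw [hstP, hc]; simp only [mul_assoc]
                _ = (star (t a) * t a) * (s (T.κ ⟨(α, b), h⟩).1.2 * star (t b)) := by
                    simp only [mul_assoc]
                _ = π (T.es.ρ a 1) * s (T.κ ⟨(α, b), h⟩).1.2 * star (t b) := by
                    rw [htt a, ← mul_assoc]
                _ = s (T.κ ⟨(α, b), h⟩).1.2 *
                      π (T.rs.ρ (T.κ ⟨(α, b), h⟩).1.2 (T.es.ρ a 1)) * star (t b) := by
                    rw [hmove]
                _ = s (T.κ ⟨(α, b), h⟩).1.2 * π (T.es.ρ b (T.rs.ρ α 1)) * star (t b) := by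
                    rw [hcomm]
            · simp only [hFext]
              rw [dif_pos h, if_neg (fun hand => hc hand.2)]
              calc star (t a) * s α * (t b * star (t b))
                  = (star (t a) * t (T.κ ⟨(α, b), h⟩).1.1) *
                      (s (T.κ ⟨(α, b), h⟩).1.2 * star (t b)) := by
                    rw [mul_assoc, ← mul_assoc (s α), hstP]; simp only [mul_assoc]
                _ = 0 := by rw [hts a _ (fun hh => hc hh.symm), zero_mul]
          · simp only [hFext]
            rw [dif_neg h, mul_assoc, ← mul_assoc (s α), hzero_st b h, zero_mul, mul_zero]
      _ = ∑ q : Sρ × Sη, Fext q := by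
          rw [Fintype.sum_prod_type]
          refine (Fintype.sum_eq_single (f := fun α' => ∑ b : Sη, Fext (α', b)) α fun α' hα' => ?_).symm
          refine Finset.sum_eq_zero fun b _ => ?_
          simp only [hFext]
          by_cases h : ∃ x, T.es.ρ b (T.rs.ρ α' x) ≠ 0
          · rw [dif_pos h, if_neg (fun hand => hα' hand.1)]
          · rw [dif_neg h]
      _ = ∑ q ∈ Finset.univ.filter (fun q : Sρ × Sη => ∃ x, T.es.ρ q.2 (T.rs.ρ q.1 x) ≠ 0),
            Fext q := by
          refine (Finset.sum_filter_of_ne fun q _ hq => ?_).symm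
          by_contra h
          exact hq (by simp only [hFext]; rw [dif_neg h])
      _ = ∑ p : T.SigmaKappa, Fext ↑p := by
          exact Finset.sum_subtype _ (fun q => by simp) Fext
      _ = ∑ p : T.SigmaKappa,
            (if p.1.1 = α ∧ (T.κ p).1.1 = a then
              s (T.κ p).1.2 * π (T.es.ρ p.1.2 (T.rs.ρ α 1)) * star (t p.1.2)
            else 0) := by
          refine Finset.sum_congr rfl fun p _ => ?_
          simp only [hFext]
          rw [dif_pos (Subtype.coe_eta p p.2 ▸ p.2)]
  refine ⟨key, ?_⟩
  have hflip : star (s α) * t a = star (star (t a) * s α) := by rw [star_mul, star_star]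
  rw [hflip, key, star_sum]
  refine Finset.sum_congr rfl fun p _ => ?_
  by_cases hc : p.1.1 = α ∧ (T.κ p).1.1 = a
  · rw [if_pos hc, if_pos hc]
    have hcomm : T.es.ρ p.1.2 (T.rs.ρ α 1) = T.rs.ρ (T.κ p).1.2 (T.es.ρ a 1) := by
      have h2 := T.commrel p 1
      rwa [hc.1, hc.2] at h2
    have hsa : star (T.es.ρ p.1.2 (T.rs.ρ α 1)) = T.es.ρ p.1.2 (T.rs.ρ α 1) := by
      simp only [← map_star, star_one]
    calc star (s (T.κ p).1.2 * π (T.es.ρ p.1.2 (T.rs.ρ α 1)) * star (t p.1.2))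
        = t p.1.2 * (star (π (T.es.ρ p.1.2 (T.rs.ρ α 1))) * star (s (T.κ p).1.2)) := by
          simp only [star_mul, star_star, mul_assoc]
      _ = t p.1.2 * π (T.rs.ρ (T.κ p).1.2 (T.es.ρ a 1)) * star (s (T.κ p).1.2) := by
          rw [← map_star, hsa, hcomm, ← mul_assoc]
  · rw [if_neg hc, if_neg hc, star_zero]
end

section
/- For α ∈ Σ^ρ and a ∈ Σ^η, one has t_a t_a* s_α s_α* = Σ s_α t_b t_b* s_α*, where the sum runs over all b ∈ Σ^η such that (α,b) ∈ Σ^{ρη} and κ(α,b) = (a,β) for some β ∈ Σ^ρ. In particular, t_a t_a* commutes with s_α s_α*. -/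
open scoped Classical

variable (A : Type*) [NormedRing A] [StarRing A] [CStarRing A] [CompleteSpace A]
  [NormedAlgebra ℂ A] [StarModule ℂ A] [PartialOrder A] [StarOrderedRing A]

variable {A}
variable {Sρ Sη : Type*} [Fintype Sρ] [Fintype Sη]

variable {B : Type*} [NormedRing B] [StarRing B] [CStarRing B] [CompleteSpace B]
  [NormedAlgebra ℂ B] [StarModule ℂ B]

/-- `t_a t_a* s_α s_α* = Σ_b s_α t_b t_b* s_α*` over `b` with
`(α,b) ∈ Σ^{ρη}`, `κ(α,b) = (a,β)` for some `β`; in particular `t_a t_a*` commutes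
with `s_α s_α*`. -/
theorem range_projections_commute
    (T : CTDS A Sρ Sη)
    (π : A →⋆ₐ[ℂ] B) (hπ : Function.Injective π)
    (s : Sρ → B) (t : Sη → B)
    (hspi : ∀ α, s α * star (s α) * s α = s α)
    (htpi : ∀ a, t a * star (t a) * t a = t a)
    (hs1 : ∑ β, s β * star (s β) = 1)
    (hs2 : ∀ (x : A) (α : Sρ), π x * (s α * star (s α)) = s α * star (s α) * π x)
    (hs3 : ∀ (x : A) (α : Sρ), star (s α) * π x * s α = π (T.rs.ρ α x))
    (ht1 : ∑ b, t b * star (t b) = 1)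
    (ht2 : ∀ (x : A) (a : Sη), π x * (t a * star (t a)) = t a * star (t a) * π x)
    (ht3 : ∀ (x : A) (a : Sη), star (t a) * π x * t a = π (T.es.ρ a x))
    (hst : ∀ p : T.SigmaKappa, s p.1.1 * t p.1.2 = t (T.κ p).1.1 * s (T.κ p).1.2)
    (α : Sρ) (a : Sη) :
    t a * star (t a) * (s α * star (s α)) =
      (∑ b : Sη,
        if ∃ h : (∃ x, T.es.ρ b (T.rs.ρ α x) ≠ 0), (T.κ ⟨(α, b), h⟩).1.1 = a then
          s α * (t b * star (t b)) * star (s α)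
        else 0) ∧
    Commute (t a * star (t a)) (s α * star (s α)) := by
  -- the range projections of the `t`'s
  have he_idem : ∀ b : Sη, (t b * star (t b)) * (t b * star (t b)) = t b * star (t b) := by
    intro b
    rw [← mul_assoc, htpi]
  have he_star : ∀ b : Sη, star (t b * star (t b)) = t b * star (t b) := by
    intro b; simp [star_mul]
  -- mutual orthogonality of the range projections of the `t`'s
  have horth : ∀ a' b : Sη, a' ≠ b →
      (t a' * star (t a')) * (t b * star (t b)) = 0 := by
    intro a' b hab
    letI : CStarAlgebra B := {}
    letI : PartialOrder B := CStarAlgebra.spectralOrder B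
    haveI : StarOrderedRing B := CStarAlgebra.spectralOrderedRing B
    haveI : IsOrderedAddMonoid B := inferInstance
    set e : Sη → B := fun c => t c * star (t c) with he
    have he_idem' : ∀ c : Sη, e c * e c = e c := he_idem
    have he_star' : ∀ c : Sη, star (e c) = e c := he_star
    have hsum : ∑ c ∈ Finset.univ.erase a', e a' * e c * e a' = 0 := by
      have h1 : ∑ c : Sη, e a' * e c * e a' = e a' := by
        rw [← Finset.sum_mul, ← Finset.mul_sum, ht1, mul_one, he_idem]
      have h2 : ∑ c ∈ Finset.univ.erase a', e a' * e c * e a'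
          = (∑ c : Sη, e a' * e c * e a') - (e a' * e a' * e a') := by
        rw [eq_sub_iff_add_eq, Finset.sum_erase_add _ _ (Finset.mem_univ a')]
      rw [h2, h1, he_idem, he_idem, sub_self]
    have hterm : ∀ c ∈ Finset.univ.erase a', e a' * e c * e a' = 0 := by
      have := (Finset.sum_eq_zero_iff_of_nonneg ?_).mp hsum
      · exact this
      · intro c _
        have : e a' * e c * e a' = star (e c * e a') * (e c * e a') := by
          calc e a' * e c * e a' = e a' * (e c * e c) * e a' := by rw [he_idem']
            _ = e a' * e c * (e c * e a') := by simp only [mul_assoc]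
            _ = star (e c * e a') * (e c * e a') := by rw [star_mul, he_star', he_star']
        rw [this]
        exact star_mul_self_nonneg _
    have hba : e b * e a' = 0 := by
      have h0 : star (e b * e a') * (e b * e a') = 0 := by
        calc star (e b * e a') * (e b * e a')
            = e a' * (e b * (e b * e a')) := by rw [star_mul, he_star', he_star', mul_assoc]
          _ = e a' * (e b * e b) * e a' := by simp only [mul_assoc]
          _ = e a' * e b * e a' := by rw [he_idem']
          _ = 0 := hterm b (Finset.mem_erase.mpr ⟨fun h => hab h.symm, Finset.mem_univ b⟩)
      exact (CStarRing.star_mul_self_eq_zero_iff _).mp h0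
    calc e a' * e b = star (e b * e a') := by rw [star_mul, he_star', he_star']
      _ = 0 := by rw [hba, star_zero]
  -- if `(α, b) ∉ Σ^{ρη}`, then `s α * t b = 0`
  have hzero : ∀ b : Sη, (¬ ∃ x, T.es.ρ b (T.rs.ρ α x) ≠ 0) → s α * t b = 0 := by
    intro b hb
    push_neg at hb
    have hss : star (s α) * s α = π (T.rs.ρ α 1) := by
      have := hs3 1 α
      rwa [map_one, mul_one] at this
    have h0 : star (s α * t b) * (s α * t b) = 0 := by
      rw [star_mul, mul_assoc, ← mul_assoc (star (s α)), hss, ← mul_assoc, ht3,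
        hb 1, map_zero]
    exact (CStarRing.star_mul_self_eq_zero_iff _).mp h0
  -- the key term-by-term identity
  have key : ∀ b : Sη, t a * star (t a) * (s α * (t b * star (t b)) * star (s α)) =
      (if ∃ h : (∃ x, T.es.ρ b (T.rs.ρ α x) ≠ 0), (T.κ ⟨(α, b), h⟩).1.1 = a then
        s α * (t b * star (t b)) * star (s α) else 0) := by
    intro b
    by_cases h : ∃ x, T.es.ρ b (T.rs.ρ α x) ≠ 0
    · have hstb := hst ⟨(α, b), h⟩
      simp only at hstb
      by_cases ha : (T.κ ⟨(α, b), (h : ∃ x, T.es.ρ b (T.rs.ρ α x) ≠ 0)⟩).1.1 = a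
      · rw [if_pos ⟨h, ha⟩]
        calc t a * star (t a) * (s α * (t b * star (t b)) * star (s α))
            = (t a * star (t a) * (s α * t b)) * (star (t b) * star (s α)) := by
              simp only [mul_assoc]
          _ = (t a * star (t a) * (t (T.κ ⟨(α, b), h⟩).1.1 * s (T.κ ⟨(α, b), h⟩).1.2))
                * (star (t b) * star (s α)) := by rw [hstb]
          _ = ((t a * star (t a) * t a) * s (T.κ ⟨(α, b), h⟩).1.2)
                * (star (t b) * star (s α)) := by rw [ha]; simp only [mul_assoc]
          _ = (t (T.κ ⟨(α, b), h⟩).1.1 * s (T.κ ⟨(α, b), h⟩).1.2)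
                * (star (t b) * star (s α)) := by rw [htpi, ha]
          _ = (s α * t b) * (star (t b) * star (s α)) := by rw [← hstb]
          _ = s α * (t b * star (t b)) * star (s α) := by simp only [mul_assoc]
      · rw [if_neg]
        · set a' := (T.κ ⟨(α, b), h⟩).1.1 with ha'
          have h1 : t a * star (t a) * t a' = 0 := by
            have : t a * star (t a) * t a'
                = (t a * star (t a) * (t a' * star (t a'))) * t a' := by
              rw [mul_assoc (t a * star (t a)), htpi]
            rw [this, horth a a' (fun hh => ha hh.symm), zero_mul]
          calc t a * star (t a) * (s α * (t b * star (t b)) * star (s α))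
              = (t a * star (t a) * (s α * t b)) * (star (t b) * star (s α)) := by
                simp only [mul_assoc]
            _ = ((t a * star (t a) * t a') * s (T.κ ⟨(α, b), h⟩).1.2)
                  * (star (t b) * star (s α)) := by rw [hstb]; simp only [mul_assoc]
            _ = 0 := by rw [h1, zero_mul, zero_mul]
        · rintro ⟨h', hq⟩
          exact ha hq
    · rw [if_neg (fun ⟨h', _⟩ => h h')]
      have h0 : s α * (t b * star (t b)) = 0 := by
        rw [← mul_assoc, hzero b h, zero_mul]
      rw [h0, zero_mul, mul_zero]
  -- main identity
  have main : t a * star (t a) * (s α * star (s α)) =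
      ∑ b : Sη,
        if ∃ h : (∃ x, T.es.ρ b (T.rs.ρ α x) ≠ 0), (T.κ ⟨(α, b), h⟩).1.1 = a then
          s α * (t b * star (t b)) * star (s α)
        else 0 := by
    calc t a * star (t a) * (s α * star (s α))
        = t a * star (t a) * (s α * (∑ b, t b * star (t b)) * star (s α)) := by
          rw [ht1, mul_one]
      _ = ∑ b : Sη, t a * star (t a) * (s α * (t b * star (t b)) * star (s α)) := by
          rw [Finset.mul_sum, Finset.sum_mul, Finset.mul_sum]
      _ = _ := Finset.sum_congr rfl fun b _ => key b
  refine ⟨main, ?_⟩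
  -- the right-hand side is selfadjoint, hence the projections commute
  have hsa : star (t a * star (t a) * (s α * star (s α)))
      = t a * star (t a) * (s α * star (s α)) := by
    conv_lhs => rw [main]
    rw [star_sum]
    rw [main]
    refine Finset.sum_congr rfl fun b _ => ?_
    split
    · rw [star_mul, star_mul, he_star, star_star]; simp only [mul_assoc]
    · exact star_zero _
  have := hsa
  rw [star_mul, he_star, star_mul, star_star] at this
  exact this.symm
end

section
/- Suppose in addition that A is commutative. Then for all α ∈ Σ^ρ, a ∈ Σ^η and x, y ∈ A, the element t_a π(y) t_a* commutes with s_α π(x) s_α*. -/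
open scoped Classical

variable (A : Type*) [NormedRing A] [StarRing A] [CStarRing A] [CompleteSpace A]
  [NormedAlgebra ℂ A] [StarModule ℂ A] [PartialOrder A] [StarOrderedRing A]

variable {A}
variable {Sρ Sη : Type*} [Fintype Sρ] [Fintype Sη]

variable {B : Type*} [NormedRing B] [StarRing B] [CStarRing B] [CompleteSpace B]
  [NormedAlgebra ℂ B] [StarModule ℂ B]

/-- In a unital C*-algebra, if a family of partial isometries has range projections
summing to `1`, then the partial isometries have orthogonal ranges. -/
lemma aux_range_ortho {B : Type*} [NormedRing B] [StarRing B] [CStarRing B]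
    [CompleteSpace B] [NormedAlgebra ℂ B] [StarModule ℂ B]
    {ι : Type*} [Fintype ι] (u : ι → B)
    (hu : ∀ i, u i * star (u i) * u i = u i)
    (h1 : ∑ i, u i * star (u i) = 1)
    {i j : ι} (hij : i ≠ j) : star (u i) * u j = 0 := by
  letI : CStarAlgebra B :=
    { ‹NormedRing B›, ‹StarRing B›, ‹CStarRing B›, ‹NormedAlgebra ℂ B›,
      ‹StarModule ℂ B›, ‹CompleteSpace B› with }
  letI := CStarAlgebra.spectralOrder B
  haveI := CStarAlgebra.spectralOrderedRing B
  set Q : ι → B := fun k => u k * star (u k) with hQ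
  have hQs : ∀ k, star (Q k) = Q k := fun k => by simp [hQ, star_mul]
  have hQ2 : ∀ k, Q k * Q k = Q k := fun k => by
    show u k * star (u k) * (u k * star (u k)) = u k * star (u k)
    rw [← mul_assoc, hu]
  have step : ∑ k, Q j * Q k * Q j = Q j := by
    have h2 : Q j * (∑ k, Q k) * Q j = Q j := by rw [h1, mul_one, hQ2]
    rw [Finset.mul_sum, Finset.sum_mul] at h2
    exact h2
  have hrepr : ∀ k, Q j * Q k * Q j = star (star (u k) * Q j) * (star (u k) * Q j) := by
    intro k
    rw [star_mul, hQs, star_star]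
    simp only [hQ, mul_assoc]
  have sumzero : ∑ k ∈ Finset.univ.erase j, Q j * Q k * Q j = 0 := by
    have h3 := step
    rw [← Finset.add_sum_erase _ _ (Finset.mem_univ j)] at h3
    have hjj : Q j * Q j * Q j = Q j := by rw [hQ2, hQ2]
    rw [hjj] at h3
    exact (add_eq_left).mp h3
  have hterm : Q j * Q i * Q j = 0 := by
    refine (Finset.sum_eq_zero_iff_of_nonneg ?_).mp sumzero i
      (Finset.mem_erase.mpr ⟨hij, Finset.mem_univ i⟩)
    intro k _
    rw [hrepr k]
    exact star_mul_self_nonneg _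
  have hz : star (u i) * Q j = 0 := by
    apply (CStarRing.star_mul_self_eq_zero_iff _).mp
    rw [← hrepr i]
    exact hterm
  calc star (u i) * u j = star (u i) * (u j * star (u j) * u j) := by rw [hu]
  _ = star (u i) * (u j * star (u j)) * u j := by rw [← mul_assoc]
  _ = 0 := by rw [hz, zero_mul]

/-- If `A` is commutative then `t_a π(y) t_a*` commutes with
`s_α π(x) s_α*`. -/
theorem compressions_commute_of_comm
    (T : CTDS A Sρ Sη)
    (π : A →⋆ₐ[ℂ] B) (hπ : Function.Injective π)
    (s : Sρ → B) (t : Sη → B)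
    (hspi : ∀ α, s α * star (s α) * s α = s α)
    (htpi : ∀ a, t a * star (t a) * t a = t a)
    (hs1 : ∑ β, s β * star (s β) = 1)
    (hs2 : ∀ (x : A) (α : Sρ), π x * (s α * star (s α)) = s α * star (s α) * π x)
    (hs3 : ∀ (x : A) (α : Sρ), star (s α) * π x * s α = π (T.rs.ρ α x))
    (ht1 : ∑ b, t b * star (t b) = 1)
    (ht2 : ∀ (x : A) (a : Sη), π x * (t a * star (t a)) = t a * star (t a) * π x)
    (ht3 : ∀ (x : A) (a : Sη), star (t a) * π x * t a = π (T.es.ρ a x))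
    (hst : ∀ p : T.SigmaKappa, s p.1.1 * t p.1.2 = t (T.κ p).1.1 * s (T.κ p).1.2)
    (hA : ∀ x y : A, x * y = y * x)
    (α : Sρ) (a : Sη) (x y : A) :
    Commute (t a * π y * star (t a)) (s α * π x * star (s α)) := by
  -- basic commutation facts
  have hpt : ∀ (z : A) (b : Sη), π z * t b = t b * π (T.es.ρ b z) := by
    intro z b
    conv_lhs => rw [← htpi b]
    rw [← mul_assoc, ht2 z b, mul_assoc (t b) (star (t b)) (π z), mul_assoc, ht3 z b]
  have hps : ∀ (z : A) (β : Sρ), π z * s β = s β * π (T.rs.ρ β z) := by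
    intro z β
    conv_lhs => rw [← hspi β]
    rw [← mul_assoc, hs2 z β, mul_assoc (s β) (star (s β)) (π z), mul_assoc, hs3 z β]
  have htp : ∀ (z : A) (b : Sη), star (t b) * π z = π (T.es.ρ b z) * star (t b) := by
    intro z b
    simpa only [star_mul, ← map_star, star_star] using congrArg star (hpt (star z) b)
  have hsp : ∀ (z : A) (β : Sρ), star (s β) * π z = π (T.rs.ρ β z) * star (s β) := by
    intro z β
    simpa only [star_mul, ← map_star, star_star] using congrArg star (hps (star z) β)
  have htt : ∀ b, star (t b) * t b = π (T.es.ρ b 1) := by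
    intro b
    have h := ht3 1 b
    rw [map_one, mul_one] at h
    exact h
  have hss : ∀ β, star (s β) * s β = π (T.rs.ρ β 1) := by
    intro β
    have h := hs3 1 β
    rw [map_one, mul_one] at h
    exact h
  -- chain helpers
  have cpp : ∀ (u v : A) (r : B), π u * (π v * r) = π (u * v) * r := fun u v r => by
    rw [← mul_assoc, ← map_mul]
  have ctt : ∀ (b : Sη) (r : B), star (t b) * (t b * r) = π (T.es.ρ b 1) * r := fun b r => by
    rw [← mul_assoc, htt b]
  have css : ∀ (β : Sρ) (r : B), star (s β) * (s β * r) = π (T.rs.ρ β 1) * r := fun β r => by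
    rw [← mul_assoc, hss β]
  have cps : ∀ (z : A) (β : Sρ) (r : B), π z * (s β * r) = s β * (π (T.rs.ρ β z) * r) :=
    fun z β r => by rw [← mul_assoc, hps, mul_assoc]
  have cpt : ∀ (z : A) (b : Sη) (r : B), π z * (t b * r) = t b * (π (T.es.ρ b z) * r) :=
    fun z b r => by rw [← mul_assoc, hpt, mul_assoc]
  have czero : ∀ {u v : B}, u * v = 0 → ∀ r : B, u * (v * r) = 0 := fun h r => by
    rw [← mul_assoc, h, zero_mul]
  -- orthogonality
  have ortho_t : ∀ {a₁ a₂ : Sη}, a₁ ≠ a₂ → star (t a₁) * t a₂ = 0 :=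
    fun h => aux_range_ortho t htpi ht1 h
  have ortho_s : ∀ {β₁ β₂ : Sρ}, β₁ ≠ β₂ → star (s β₁) * s β₂ = 0 :=
    fun h => aux_range_ortho s hspi hs1 h
  -- vanishing products
  have stz : ∀ (b : Sη), ¬(∃ z, T.es.ρ b (T.rs.ρ α z) ≠ 0) → s α * t b = 0 := by
    intro b hno
    have h0 : ∀ z, T.es.ρ b (T.rs.ρ α z) = 0 := by push_neg at hno; exact hno
    apply (CStarRing.star_mul_self_eq_zero_iff _).mp
    rw [star_mul, mul_assoc, ← mul_assoc (star (s α)) (s α) (t b), hss α, hpt, h0]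
    simp
  have tsz : ∀ (β : Sρ), ¬(∃ z, T.rs.ρ β (T.es.ρ a z) ≠ 0) → t a * s β = 0 := by
    intro β hno
    have h0 : ∀ z, T.rs.ρ β (T.es.ρ a z) = 0 := by push_neg at hno; exact hno
    apply (CStarRing.star_mul_self_eq_zero_iff _).mp
    rw [star_mul, mul_assoc, ← mul_assoc (star (t a)) (t a) (s β), htt a, hps, h0]
    simp
  -- the inverse of κ
  have hκinv : ∀ q, T.κ ((Equiv.ofBijective T.κ T.κ_bij).symm q) = q :=
    fun q => (Equiv.ofBijective T.κ T.κ_bij).apply_symm_apply q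
  have hκinv2 : ∀ p, (Equiv.ofBijective T.κ T.κ_bij).symm (T.κ p) = p :=
    fun p => (Equiv.ofBijective T.κ T.κ_bij).symm_apply_apply p
  -- key computation 1
  have key1 : ∀ (b : Sη) (hw : ∃ z, T.es.ρ b (T.rs.ρ α z) ≠ 0),
      (T.κ ⟨(α, b), hw⟩).1.1 = a →
      (t a * π y * star (t a)) * ((s α * t b) * ((star (t b) * π x) * star (s α)))
      = t a * s ((T.κ ⟨(α, b), hw⟩).1.2)
          * π (T.rs.ρ ((T.κ ⟨(α, b), hw⟩).1.2) y * T.es.ρ b x)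
          * star (s ((T.κ ⟨(α, b), hw⟩).1.2)) * star (t a) := by
    intro b hw ha'
    have hst' : s α * t b = t a * s ((T.κ ⟨(α, b), hw⟩).1.2) := by
      have h0 := hst ⟨(α, b), hw⟩
      rw [ha'] at h0
      exact h0
    set β := (T.κ (⟨(α, b), hw⟩ : T.SigmaKappa)).1.2 with hβ
    have hstar' : star (t b) * star (s α) = star (s β) * star (t a) := by
      rw [← star_mul, hst', star_mul]
    have habs0 : t a * s β = t a * s β * π (T.rs.ρ β (T.es.ρ a 1)) := by
      conv_lhs => rw [← htpi a]
      rw [mul_assoc, mul_assoc, ctt a, hps]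
      simp only [mul_assoc]
    have habs1 : ∀ r : B, t a * (s β * (π (T.rs.ρ β (T.es.ρ a 1)) * r)) = t a * (s β * r) := by
      intro r
      calc t a * (s β * (π (T.rs.ρ β (T.es.ρ a 1)) * r))
          = t a * s β * π (T.rs.ρ β (T.es.ρ a 1)) * r := by simp only [mul_assoc]
      _ = t a * s β * r := by rw [← habs0]
      _ = t a * (s β * r) := by rw [mul_assoc]
    have harg1 : T.rs.ρ β (y * T.es.ρ a 1) * T.es.ρ b x
        = T.rs.ρ β (T.es.ρ a 1) * (T.rs.ρ β y * T.es.ρ b x) := by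
      rw [map_mul, hA (T.rs.ρ β y) (T.rs.ρ β (T.es.ρ a 1)), mul_assoc]
    have hR1 : t a * s β * π (T.rs.ρ β y * T.es.ρ b x) * star (s β) * star (t a)
        = t a * (s β * (π (T.rs.ρ β y * T.es.ρ b x) * (star (s β) * star (t a)))) := by
      simp only [mul_assoc]
    rw [hR1]
    rw [hst', htp x b, mul_assoc (π (T.es.ρ b x)) (star (t b)) (star (s α)), hstar']
    simp only [mul_assoc]
    rw [ctt a, cpp, cps, cpp, harg1, ← cpp, habs1]
  -- key computation 2
  have key2 : ∀ (β : Sρ) (hw : ∃ z, T.rs.ρ β (T.es.ρ a z) ≠ 0),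
      ((Equiv.ofBijective T.κ T.κ_bij).symm ⟨(a, β), hw⟩).1.1 = α →
      (s α * π x * star (s α)) * ((t a * s β) * ((star (s β) * π y) * star (t a)))
      = t a * s β
          * π (T.rs.ρ β y * T.es.ρ (((Equiv.ofBijective T.κ T.κ_bij).symm ⟨(a, β), hw⟩).1.2) x)
          * star (s β) * star (t a) := by
    intro β hw hα'
    have h1 : t a * s β
        = s α * t (((Equiv.ofBijective T.κ T.κ_bij).symm ⟨(a, β), hw⟩).1.2) := by
      have h0 := hst ((Equiv.ofBijective T.κ T.κ_bij).symm ⟨(a, β), hw⟩)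
      rw [hκinv, hα'] at h0
      exact h0.symm
    set b' := (((Equiv.ofBijective T.κ T.κ_bij).symm ⟨(a, β), hw⟩) : T.SigmaKappa).1.2 with hb'
    have hstar' : star (s β) * star (t a) = star (t b') * star (s α) := by
      rw [← star_mul, h1, star_mul]
    have habs0 : s α * t b' = s α * t b' * π (T.es.ρ b' (T.rs.ρ α 1)) := by
      conv_lhs => rw [← hspi α]
      rw [mul_assoc, mul_assoc, css α, hpt]
      simp only [mul_assoc]
    have habs2 : ∀ r : B, s α * (t b' * (π (T.es.ρ b' (T.rs.ρ α 1)) * r)) = s α * (t b' * r) := by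
      intro r
      calc s α * (t b' * (π (T.es.ρ b' (T.rs.ρ α 1)) * r))
          = s α * t b' * π (T.es.ρ b' (T.rs.ρ α 1)) * r := by simp only [mul_assoc]
      _ = s α * t b' * r := by rw [← habs0]
      _ = s α * (t b' * r) := by rw [mul_assoc]
    have harg2 : T.es.ρ b' (x * T.rs.ρ α 1) * T.rs.ρ β y
        = T.es.ρ b' (T.rs.ρ α 1) * (T.rs.ρ β y * T.es.ρ b' x) := by
      rw [map_mul, hA (T.es.ρ b' x) (T.es.ρ b' (T.rs.ρ α 1)), mul_assoc,
        hA (T.es.ρ b' x) (T.rs.ρ β y)]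
    have hR2 : t a * s β * π (T.rs.ρ β y * T.es.ρ b' x) * star (s β) * star (t a)
        = s α * (t b' * (π (T.rs.ρ β y * T.es.ρ b' x) * (star (t b') * star (s α)))) := by
      simp only [mul_assoc]
      rw [← mul_assoc, h1, hstar', mul_assoc]
    rw [hR2]
    rw [h1, hsp y β, mul_assoc (π (T.rs.ρ β y)) (star (s β)) (star (t a)), hstar']
    simp only [mul_assoc]
    rw [css α, cpp, cpt, cpp, harg2, ← cpp, habs2]
  -- Part 1
  have expand1 : (t a * π y * star (t a)) * (s α * π x * star (s α))
      = ∑ b : Sη, (t a * π y * star (t a))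
          * ((s α * t b) * ((star (t b) * π x) * star (s α))) := by
    rw [← Finset.mul_sum]
    congr 1
    calc s α * π x * star (s α) = s α * (π x * star (s α)) := by rw [mul_assoc]
    _ = s α * (1 * (π x * star (s α))) := by rw [one_mul]
    _ = s α * ((∑ b, t b * star (t b)) * (π x * star (s α))) := by rw [ht1]
    _ = ∑ b, (s α * t b) * ((star (t b) * π x) * star (s α)) := by
        rw [Finset.sum_mul, Finset.mul_sum]
        exact Finset.sum_congr rfl fun b _ => by simp only [mul_assoc]
  have hsupp1 : ∀ b ∈ (Finset.univ : Finset Sη),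
      (t a * π y * star (t a)) * ((s α * t b) * ((star (t b) * π x) * star (s α))) ≠ 0 →
      (∃ h : (∃ z, T.es.ρ b (T.rs.ρ α z) ≠ 0), (T.κ ⟨(α, b), h⟩).1.1 = a) := by
    intro b _ hne
    by_contra hnc
    apply hne
    by_cases hw : ∃ z, T.es.ρ b (T.rs.ρ α z) ≠ 0
    · have hka : (T.κ (⟨(α, b), hw⟩ : T.SigmaKappa)).1.1 ≠ a := fun hh => hnc ⟨hw, hh⟩
      have h1 : s α * t b
          = t ((T.κ (⟨(α, b), hw⟩ : T.SigmaKappa)).1.1)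
            * s ((T.κ (⟨(α, b), hw⟩ : T.SigmaKappa)).1.2) := hst ⟨(α, b), hw⟩
      rw [h1]
      simp only [mul_assoc]
      rw [czero (ortho_t (Ne.symm hka))]
      simp
    · rw [stz b hw]
      simp
  have part1 : (t a * π y * star (t a)) * (s α * π x * star (s α))
      = ∑ p ∈ Finset.univ.filter (fun p : T.SigmaKappa => p.1.1 = α ∧ (T.κ p).1.1 = a),
          (t a * s ((T.κ p).1.2) * π (T.rs.ρ ((T.κ p).1.2) y * T.es.ρ p.1.2 x)
            * star (s ((T.κ p).1.2)) * star (t a)) := by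
    rw [expand1, ← Finset.sum_filter_of_ne hsupp1]
    refine Finset.sum_bij'
      (fun b hb => (⟨(α, b), ((Finset.mem_filter.mp hb).2).choose⟩ : T.SigmaKappa))
      (fun p _ => p.1.2) ?_ ?_ ?_ ?_ ?_
    · intro b hb
      exact Finset.mem_filter.mpr
        ⟨Finset.mem_univ _, rfl, ((Finset.mem_filter.mp hb).2).choose_spec⟩
    · intro p hp
      have hp' := (Finset.mem_filter.mp hp).2
      have hw : ∃ z, T.es.ρ p.1.2 (T.rs.ρ α z) ≠ 0 := by rw [← hp'.1]; exact p.2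
      refine Finset.mem_filter.mpr ⟨Finset.mem_univ _, hw, ?_⟩
      have hpeq : (⟨(α, p.1.2), hw⟩ : T.SigmaKappa) = p :=
        Subtype.ext (by show (α, (↑p : Sρ × Sη).2) = ↑p; rw [← hp'.1])
      rw [hpeq]
      exact hp'.2
    · intro b hb
      rfl
    · intro p hp
      exact Subtype.ext
        (by show (α, (↑p : Sρ × Sη).2) = ↑p; rw [← ((Finset.mem_filter.mp hp).2).1])
    · intro b hb
      exact key1 b ((Finset.mem_filter.mp hb).2).choose ((Finset.mem_filter.mp hb).2).choose_spec
  -- Part 2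
  have expand2 : (s α * π x * star (s α)) * (t a * π y * star (t a))
      = ∑ β : Sρ, (s α * π x * star (s α))
          * ((t a * s β) * ((star (s β) * π y) * star (t a))) := by
    rw [← Finset.mul_sum]
    congr 1
    calc t a * π y * star (t a) = t a * (π y * star (t a)) := by rw [mul_assoc]
    _ = t a * (1 * (π y * star (t a))) := by rw [one_mul]
    _ = t a * ((∑ β, s β * star (s β)) * (π y * star (t a))) := by rw [hs1]
    _ = ∑ β, (t a * s β) * ((star (s β) * π y) * star (t a)) := by
        rw [Finset.sum_mul, Finset.mul_sum]
        exact Finset.sum_congr rfl fun β _ => by simp only [mul_assoc]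
  have hsupp2 : ∀ β ∈ (Finset.univ : Finset Sρ),
      (s α * π x * star (s α)) * ((t a * s β) * ((star (s β) * π y) * star (t a))) ≠ 0 →
      (∃ h : (∃ z, T.rs.ρ β (T.es.ρ a z) ≠ 0),
        ((Equiv.ofBijective T.κ T.κ_bij).symm ⟨(a, β), h⟩).1.1 = α) := by
    intro β _ hne
    by_contra hnc
    apply hne
    by_cases hw : ∃ z, T.rs.ρ β (T.es.ρ a z) ≠ 0
    · have hka : (((Equiv.ofBijective T.κ T.κ_bij).symm ⟨(a, β), hw⟩) : T.SigmaKappa).1.1 ≠ α :=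
        fun hh => hnc ⟨hw, hh⟩
      have h1 : t a * s β
          = s ((((Equiv.ofBijective T.κ T.κ_bij).symm ⟨(a, β), hw⟩) : T.SigmaKappa).1.1)
            * t ((((Equiv.ofBijective T.κ T.κ_bij).symm ⟨(a, β), hw⟩) : T.SigmaKappa).1.2) := by
        have h0 := hst ((Equiv.ofBijective T.κ T.κ_bij).symm ⟨(a, β), hw⟩)
        rw [hκinv] at h0
        exact h0.symm
      rw [h1]
      simp only [mul_assoc]
      rw [czero (ortho_s (Ne.symm hka))]
      simp
    · rw [tsz β hw]
      simp
  have part2 : (s α * π x * star (s α)) * (t a * π y * star (t a))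
      = ∑ p ∈ Finset.univ.filter (fun p : T.SigmaKappa => p.1.1 = α ∧ (T.κ p).1.1 = a),
          (t a * s ((T.κ p).1.2) * π (T.rs.ρ ((T.κ p).1.2) y * T.es.ρ p.1.2 x)
            * star (s ((T.κ p).1.2)) * star (t a)) := by
    rw [expand2, ← Finset.sum_filter_of_ne hsupp2]
    refine Finset.sum_bij'
      (fun β hb => ((Equiv.ofBijective T.κ T.κ_bij).symm
        ⟨(a, β), ((Finset.mem_filter.mp hb).2).choose⟩ : T.SigmaKappa))
      (fun p _ => (T.κ p).1.2) ?_ ?_ ?_ ?_ ?_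
    · intro β hb
      refine Finset.mem_filter.mpr
        ⟨Finset.mem_univ _, ((Finset.mem_filter.mp hb).2).choose_spec, ?_⟩
      exact congrArg
        (fun q : {q : Sη × Sρ // ∃ z, T.rs.ρ q.2 (T.es.ρ q.1 z) ≠ 0} => q.1.1)
        (hκinv ⟨(a, β), ((Finset.mem_filter.mp hb).2).choose⟩)
    · intro p hp
      have hp' := (Finset.mem_filter.mp hp).2
      have hw : ∃ z, T.rs.ρ (T.κ p).1.2 (T.es.ρ a z) ≠ 0 := by rw [← hp'.2]; exact (T.κ p).2
      refine Finset.mem_filter.mpr ⟨Finset.mem_univ _, hw, ?_⟩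
      have hqeq : (⟨(a, (T.κ p).1.2), hw⟩ :
          {q : Sη × Sρ // ∃ z, T.rs.ρ q.2 (T.es.ρ q.1 z) ≠ 0}) = T.κ p :=
        Subtype.ext (by show (a, (↑(T.κ p) : Sη × Sρ).2) = ↑(T.κ p); rw [← hp'.2])
      rw [hqeq, hκinv2]
      exact hp'.1
    · intro β hb
      rw [hκinv ⟨(a, β), ((Finset.mem_filter.mp hb).2).choose⟩]
    · intro p hp
      have hp' := (Finset.mem_filter.mp hp).2
      rw [Equiv.symm_apply_eq]
      have h2 : ∀ (hw : ∃ z, T.rs.ρ (T.κ p).1.2 (T.es.ρ a z) ≠ 0),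
          (⟨(a, (T.κ p).1.2), hw⟩ :
            {q : Sη × Sρ // ∃ z, T.rs.ρ q.2 (T.es.ρ q.1 z) ≠ 0}) = T.κ p :=
        fun hw => Subtype.ext (by show (a, (↑(T.κ p) : Sη × Sρ).2) = ↑(T.κ p); rw [← hp'.2])
      exact h2 _
    · intro β hb
      rw [hκinv ⟨(a, β), ((Finset.mem_filter.mp hb).2).choose⟩]
      exact key2 β ((Finset.mem_filter.mp hb).2).choose ((Finset.mem_filter.mp hb).2).choose_spec
  exact part1.trans part2.symm
end

section
/- Suppose in addition that A is commutative. Then the C*-subalgebra of B generated by the set {s_μ t_ζ π(x) t_ζ* s_μ* : μ a finite word over Σ^ρ, ζ a finite word over Σ^η, x ∈ A} is commutative. -/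
open scoped Classical

variable (A : Type*) [NormedRing A] [StarRing A] [CStarRing A] [CompleteSpace A]
  [NormedAlgebra ℂ A] [StarModule ℂ A] [PartialOrder A] [StarOrderedRing A]

variable {A}
variable {Sρ Sη : Type*} [Fintype Sρ] [Fintype Sη]

variable {B : Type*} [NormedRing B] [StarRing B] [CStarRing B] [CompleteSpace B]
  [NormedAlgebra ℂ B] [StarModule ℂ B]

section Aux

/-- Pairwise orthogonality of a finite family of projections summing to 1. -/
theorem ortho_family {ι : Type*} [Fintype ι] (p : ι → B)
    (hsa : ∀ i, star (p i) = p i) (hid : ∀ i, p i * p i = p i)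
    (hsum : ∑ i, p i = 1) {i j : ι} (hij : i ≠ j) : p i * p j = 0 := by
  letI : CStarAlgebra B := {}
  letI := CStarAlgebra.spectralOrder B
  haveI := CStarAlgebra.spectralOrderedRing B
  have key : ∑ k ∈ Finset.univ.erase j, p j * p k * p j = 0 := by
    have h1 : ∑ k, p j * p k * p j = p j := by
      rw [← Finset.sum_mul, ← Finset.mul_sum, hsum, mul_one, hid]
    have h2 : ∑ k, p j * p k * p j
        = p j * p j * p j + ∑ k ∈ Finset.univ.erase j, p j * p k * p j :=
      (Finset.add_sum_erase _ _ (Finset.mem_univ j)).symm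
    have h3 : p j * p j * p j = p j := by rw [hid, hid]
    rw [h1, h3] at h2
    exact (left_eq_add.mp h2)
  have hrw : ∀ k, p j * p k * p j = star (p k * p j) * (p k * p j) := by
    intro k
    rw [star_mul, hsa, hsa]
    rw [show p j * p k * (p k * p j) = p j * (p k * p k) * p j by simp only [mul_assoc], hid]
  have hnn : ∀ k ∈ Finset.univ.erase j, 0 ≤ p j * p k * p j := fun k _ => by
    rw [hrw]; exact star_mul_self_nonneg _
  have hz : p j * p i * p j = 0 :=
    (Finset.sum_eq_zero_iff_of_nonneg hnn).mp key i (Finset.mem_erase.mpr ⟨hij, Finset.mem_univ i⟩)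
  rw [hrw] at hz
  exact (CStarRing.star_mul_self_eq_zero_iff _).mp hz

end Aux
section Aux2
set_option linter.unusedSectionVars false

/-- Bundle of the Cuntz–Krieger type relations `(ρ,η;κ)`. -/
structure Ctx (T : CTDS A Sρ Sη) (π : A →⋆ₐ[ℂ] B) (s : Sρ → B) (t : Sη → B) : Prop where
  hspi : ∀ α, s α * star (s α) * s α = s α
  htpi : ∀ a, t a * star (t a) * t a = t a
  hs1 : ∑ β, s β * star (s β) = 1
  hs2 : ∀ (x : A) (α : Sρ), π x * (s α * star (s α)) = s α * star (s α) * π x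
  hs3 : ∀ (x : A) (α : Sρ), star (s α) * π x * s α = π (T.rs.ρ α x)
  ht1 : ∑ b, t b * star (t b) = 1
  ht2 : ∀ (x : A) (a : Sη), π x * (t a * star (t a)) = t a * star (t a) * π x
  ht3 : ∀ (x : A) (a : Sη), star (t a) * π x * t a = π (T.es.ρ a x)
  hst : ∀ p : T.SigmaKappa, s p.1.1 * t p.1.2 = t (T.κ p).1.1 * s (T.κ p).1.2
  hA : ∀ x y : A, x * y = y * x

variable (s : Sρ → B) (t : Sη → B) (π : A →⋆ₐ[ℂ] B) (T : CTDS A Sρ Sη)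

/-- Product of a word of `s`-isometries. -/
def SP (μ : List Sρ) : B := (μ.map s).prod
/-- Product of a word of `t`-isometries. -/
def TP (ζ : List Sη) : B := (ζ.map t).prod
/-- `sgen μ x = s_μ π(x) s_μ*`. -/
def sgen (μ : List Sρ) (x : A) : B := SP s μ * π x * star (SP s μ)
/-- `fgen ζ μ x = t_ζ s_μ π(x) s_μ* t_ζ*`. -/
def fgen (ζ : List Sη) (μ : List Sρ) (x : A) : B := TP t ζ * sgen s π μ x * star (TP t ζ)
/-- `smap μ z = ρ_μ(z)`. -/
noncomputable def smap (μ : List Sρ) (z : A) : A := μ.foldl (fun w α => T.rs.ρ α w) z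
/-- `emap ζ z = η_ζ(z)`. -/
noncomputable def emap (ζ : List Sη) (z : A) : A := ζ.foldl (fun w a => T.es.ρ a w) z

@[simp] lemma SP_nil : SP s ([] : List Sρ) = 1 := rfl
@[simp] lemma SP_cons (α : Sρ) (μ : List Sρ) : SP s (α :: μ) = s α * SP s μ := by
  simp [SP]
@[simp] lemma TP_nil : TP t ([] : List Sη) = 1 := rfl
@[simp] lemma TP_cons (a : Sη) (ζ : List Sη) : TP t (a :: ζ) = t a * TP t ζ := by
  simp [TP]
@[simp] lemma smap_nil (z : A) : smap T ([] : List Sρ) z = z := rfl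
@[simp] lemma smap_cons (α : Sρ) (μ : List Sρ) (z : A) :
    smap T (α :: μ) z = smap T μ (T.rs.ρ α z) := rfl
@[simp] lemma emap_nil (z : A) : emap T ([] : List Sη) z = z := rfl
@[simp] lemma emap_cons (a : Sη) (ζ : List Sη) (z : A) :
    emap T (a :: ζ) z = emap T ζ (T.es.ρ a z) := rfl

lemma smap_star (μ : List Sρ) (z : A) : smap T μ (star z) = star (smap T μ z) := by
  induction μ generalizing z with
  | nil => rfl
  | cons α μ ih => simp [map_star, ih]

lemma emap_star (ζ : List Sη) (z : A) : emap T ζ (star z) = star (emap T ζ z) := by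
  induction ζ generalizing z with
  | nil => rfl
  | cons a ζ ih => simp [map_star, ih]

variable {s t π T}

@[simp] lemma sgen_nil (x : A) : sgen s π ([] : List Sρ) x = π x := by simp [sgen]

lemma sgen_cons (α : Sρ) (μ : List Sρ) (x : A) :
    sgen s π (α :: μ) x = s α * sgen s π μ x * star (s α) := by
  simp only [sgen, SP_cons, star_mul, mul_assoc]

lemma sgen_star (μ : List Sρ) (x : A) : star (sgen s π μ x) = sgen s π μ (star x) := by
  simp only [sgen, star_mul, map_star, star_star, mul_assoc]

@[simp] lemma fgen_nil (μ : List Sρ) (x : A) : fgen s t π ([] : List Sη) μ x = sgen s π μ x := by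
  simp [fgen]

lemma fgen_nil' (ζ : List Sη) (x : A) :
    fgen s t π ζ ([] : List Sρ) x = TP t ζ * π x * star (TP t ζ) := by
  simp [fgen]

lemma fgen_cons (a : Sη) (ζ : List Sη) (μ : List Sρ) (x : A) :
    fgen s t π (a :: ζ) μ x = t a * fgen s t π ζ μ x * star (t a) := by
  simp only [fgen, TP_cons, star_mul, mul_assoc]

lemma fgen_star (ζ : List Sη) (μ : List Sρ) (x : A) :
    star (fgen s t π ζ μ x) = fgen s t π ζ μ (star x) := by
  simp only [fgen, star_mul, star_star, mul_assoc, sgen_star]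

namespace Ctx

variable (h : Ctx T π s t)
include h

lemma pi_s (z : A) (α : Sρ) : π z * s α = s α * π (T.rs.ρ α z) := by
  conv_lhs => rw [← h.hspi α]
  rw [← mul_assoc, h.hs2, mul_assoc (s α), mul_assoc, h.hs3]

lemma pi_t (z : A) (a : Sη) : π z * t a = t a * π (T.es.ρ a z) := by
  conv_lhs => rw [← h.htpi a]
  rw [← mul_assoc, h.ht2, mul_assoc (t a), mul_assoc, h.ht3]

lemma star_s_pi (z : A) (α : Sρ) : star (s α) * π z = π (T.rs.ρ α z) * star (s α) := by
  have := congrArg star (h.pi_s (star z) α)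
  simpa [star_mul, map_star] using this

lemma star_t_pi (z : A) (a : Sη) : star (t a) * π z = π (T.es.ρ a z) * star (t a) := by
  have := congrArg star (h.pi_t (star z) a)
  simpa [star_mul, map_star] using this

lemma ss_one (α : Sρ) : star (s α) * s α = π (T.rs.ρ α 1) := by
  simpa using h.hs3 1 α

lemma tt_one (a : Sη) : star (t a) * t a = π (T.es.ρ a 1) := by
  simpa using h.ht3 1 a

lemma s_pi_one (α : Sρ) : s α * π (T.rs.ρ α 1) = s α := by
  rw [← h.ss_one, ← mul_assoc, h.hspi]

lemma t_pi_one (a : Sη) : t a * π (T.es.ρ a 1) = t a := by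
  rw [← h.tt_one, ← mul_assoc, h.htpi]

lemma pi_one_star_t (a : Sη) : π (T.es.ρ a 1) * star (t a) = star (t a) := by
  have h1 := congrArg star (h.t_pi_one a)
  rw [star_mul, ← map_star, ← map_star, star_one] at h1
  exact h1

lemma pi_SP (z : A) (μ : List Sρ) : π z * SP s μ = SP s μ * π (smap T μ z) := by
  induction μ generalizing z with
  | nil => simp
  | cons α μ ih => rw [SP_cons, ← mul_assoc, h.pi_s, mul_assoc, ih, ← mul_assoc, smap_cons]

lemma pi_TP (z : A) (ζ : List Sη) : π z * TP t ζ = TP t ζ * π (emap T ζ z) := by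
  induction ζ generalizing z with
  | nil => simp
  | cons a ζ ih => rw [TP_cons, ← mul_assoc, h.pi_t, mul_assoc, ih, ← mul_assoc, emap_cons]

lemma starSP_pi (z : A) (μ : List Sρ) :
    star (SP s μ) * π z = π (smap T μ z) * star (SP s μ) := by
  have := congrArg star (h.pi_SP (star z) μ)
  simpa [star_mul, map_star, smap_star] using this

lemma starTP_pi (z : A) (ζ : List Sη) :
    star (TP t ζ) * π z = π (emap T ζ z) * star (TP t ζ) := by
  have := congrArg star (h.pi_TP (star z) ζ)
  simpa [star_mul, map_star, emap_star] using this


lemma pi_sgen (z : A) (μ : List Sρ) (x : A) :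
    π z * sgen s π μ x = sgen s π μ (smap T μ z * x) := by
  simp only [sgen, ← mul_assoc, h.pi_SP, map_mul]

lemma sgen_pi (z : A) (μ : List Sρ) (x : A) :
    sgen s π μ x * π z = sgen s π μ (x * smap T μ z) := by
  simp only [sgen, map_mul, mul_assoc, h.starSP_pi]

lemma pi_comm_sgen (z : A) (μ : List Sρ) (x : A) :
    π z * sgen s π μ x = sgen s π μ x * π z := by
  rw [h.pi_sgen, h.sgen_pi, h.hA]

lemma pi_fgen (z : A) (ζ : List Sη) (μ : List Sρ) (x : A) :
    π z * fgen s t π ζ μ x = fgen s t π ζ μ (smap T μ (emap T ζ z) * x) := by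
  unfold fgen
  rw [← mul_assoc, ← mul_assoc, h.pi_TP, mul_assoc (TP t ζ), h.pi_sgen]

lemma fgen_pi (z : A) (ζ : List Sη) (μ : List Sρ) (x : A) :
    fgen s t π ζ μ x * π z = fgen s t π ζ μ (x * smap T μ (emap T ζ z)) := by
  unfold fgen
  rw [mul_assoc, h.starTP_pi, ← mul_assoc, mul_assoc (TP t ζ), h.sgen_pi]

lemma pi_comm_fgen (z : A) (ζ : List Sη) (μ : List Sρ) (x : A) :
    π z * fgen s t π ζ μ x = fgen s t π ζ μ x * π z := by
  rw [h.pi_fgen, h.fgen_pi, h.hA]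

end Ctx

end Aux2
section Aux3
set_option linter.unusedSectionVars false

variable (s : Sρ → B) (t : Sη → B) (π : A →⋆ₐ[ℂ] B) (T : CTDS A Sρ Sη)

/-- The set of pure-`s` generators. -/
def genSet : Set B := {z | ∃ (ν : List Sρ) (y : A), z = sgen s π ν y}

/-- The additive submonoid generated by the pure-`s` generators. -/
def SS : AddSubmonoid B := AddSubmonoid.closure (genSet s π)

/-- The `β`-term in the resolution of `sgen (α::μ) x ⋅ t_c t_c*`. -/
noncomputable def Eterm (α : Sρ) (c : Sη) (μ : List Sρ) (y : A) (β : Sρ) : B :=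
  if hx : ∃ w, T.rs.ρ β (T.es.ρ c w) ≠ 0 then
    (if (Function.surjInv T.κ_bij.2 ⟨(c,β),hx⟩).1.1 = α then
      (t c * s β) * (star (t (Function.surjInv T.κ_bij.2 ⟨(c,β),hx⟩).1.2) *
        sgen s π μ y * t (Function.surjInv T.κ_bij.2 ⟨(c,β),hx⟩).1.2) * star (t c * s β)
    else 0)
  else 0

lemma Eterm_star (α : Sρ) (c : Sη) (μ : List Sρ) (y : A) (β : Sρ) :
    star (Eterm s t π T α c μ (star y) β) = Eterm s t π T α c μ y β := by
  unfold Eterm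
  split_ifs with h1 h2 <;>
    simp [star_mul, sgen_star, star_star, mul_assoc]

variable {s t π T}

namespace Ctx

variable (h : Ctx T π s t)
include h

lemma s_orth {α β : Sρ} (hab : α ≠ β) : star (s α) * s β = 0 := by
  have horth : (s α * star (s α)) * (s β * star (s β)) = 0 :=
    ortho_family (fun γ => s γ * star (s γ))
      (fun γ => by rw [star_mul, star_star])
      (fun γ => by rw [← mul_assoc, h.hspi]) h.hs1 hab
  have hsa : star (s α) * (s α * star (s α)) = star (s α) := by
    have := congrArg star (h.hspi α)
    rwa [star_mul, star_mul, star_star] at this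
  calc star (s α) * s β
      = (star (s α) * (s α * star (s α))) * ((s β * star (s β)) * s β) := by
        rw [hsa, h.hspi]
    _ = star (s α) * (((s α * star (s α)) * (s β * star (s β))) * s β) := by
        simp only [mul_assoc]
    _ = 0 := by rw [horth, zero_mul, mul_zero]

lemma t_orth {a b : Sη} (hab : a ≠ b) : star (t a) * t b = 0 := by
  have horth : (t a * star (t a)) * (t b * star (t b)) = 0 :=
    ortho_family (fun γ => t γ * star (t γ))
      (fun γ => by rw [star_mul, star_star])
      (fun γ => by rw [← mul_assoc, h.htpi]) h.ht1 hab
  have hsa : star (t a) * (t a * star (t a)) = star (t a) := by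
    have := congrArg star (h.htpi a)
    rwa [star_mul, star_mul, star_star] at this
  calc star (t a) * t b
      = (star (t a) * (t a * star (t a))) * ((t b * star (t b)) * t b) := by
        rw [hsa, h.htpi]
    _ = star (t a) * (((t a * star (t a)) * (t b * star (t b))) * t b) := by
        simp only [mul_assoc]
    _ = 0 := by rw [horth, zero_mul, mul_zero]

lemma st_zero {α : Sρ} {c : Sη} (hx : ¬ ∃ w, T.es.ρ c (T.rs.ρ α w) ≠ 0) :
    s α * t c = 0 := by
  push_neg at hx
  apply (CStarRing.star_mul_self_eq_zero_iff _).mp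
  have : star (s α * t c) * (s α * t c)
      = star (t c) * (star (s α) * s α) * t c := by
    simp only [star_mul, mul_assoc]
  rw [this, h.ss_one, h.ht3, hx 1, map_zero]

lemma ts_zero {c : Sη} {β : Sρ} (hx : ¬ ∃ w, T.rs.ρ β (T.es.ρ c w) ≠ 0) :
    t c * s β = 0 := by
  push_neg at hx
  apply (CStarRing.star_mul_self_eq_zero_iff _).mp
  have : star (t c * s β) * (t c * s β)
      = star (s β) * (star (t c) * t c) * s β := by
    simp only [star_mul, mul_assoc]
  rw [this, h.tt_one, h.hs3, hx 1, map_zero]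

lemma st_cases (α : Sρ) (c : Sη) :
    s α * t c = 0 ∨ ∃ (a : Sη) (β : Sρ), s α * t c = t a * s β := by
  by_cases hx : ∃ w, T.es.ρ c (T.rs.ρ α w) ≠ 0
  · exact Or.inr ⟨(T.κ ⟨(α,c),hx⟩).1.1, (T.κ ⟨(α,c),hx⟩).1.2, h.hst ⟨(α,c),hx⟩⟩
  · exact Or.inl (h.st_zero hx)

lemma conj_mem (w : A) (β : Sρ) {z : B} (hz : z ∈ SS s π) :
    π w * s β * z * star (π w * s β) ∈ SS s π := by
  induction hz using AddSubmonoid.closure_induction with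
  | mem z hzg =>
    obtain ⟨ν, y, rfl⟩ := hzg
    apply AddSubmonoid.subset_closure
    refine ⟨β :: ν, smap T ν (T.rs.ρ β w) * y * star (smap T ν (T.rs.ρ β w)), ?_⟩
    rw [h.pi_s, star_mul, ← map_star]
    calc s β * π (T.rs.ρ β w) * sgen s π ν y * (π (star (T.rs.ρ β w)) * star (s β))
        = s β * (π (T.rs.ρ β w) * sgen s π ν y * π (star (T.rs.ρ β w))) * star (s β) := by
          simp only [mul_assoc]
      _ = s β * sgen s π ν (smap T ν (T.rs.ρ β w) * y * star (smap T ν (T.rs.ρ β w))) * star (s β) := by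
          rw [h.pi_sgen, h.sgen_pi, smap_star]
      _ = sgen s π (β :: ν) (smap T ν (T.rs.ρ β w) * y * star (smap T ν (T.rs.ρ β w))) := by
          rw [sgen_cons]
  | zero => simpa using (SS s π).zero_mem
  | add x y _ _ ihx ihy =>
    rw [mul_add, add_mul]
    exact (SS s π).add_mem ihx ihy

end Ctx

end Aux3
section Aux4
set_option linter.unusedSectionVars false

variable {s : Sρ → B} {t : Sη → B} {π : A →⋆ₐ[ℂ] B} {T : CTDS A Sρ Sη}

namespace Ctx

variable (h : Ctx T π s t)
include h

/-- Resolution of the unit: `t_c t_c* = ∑_β (t_c s_β)(t_c s_β)*`. -/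
lemma tc_resolution (c : Sη) :
    t c * star (t c) = ∑ β, (t c * s β) * star (t c * s β) := by
  have h0 : t c * star (t c) = t c * ((∑ β, s β * star (s β)) * star (t c)) := by
    rw [h.hs1, one_mul]
  rw [h0, Finset.sum_mul, Finset.mul_sum]
  apply Finset.sum_congr rfl
  intro β _
  simp only [star_mul, mul_assoc]

/-- The key resolution formula for `sgen (α::μ) x ⋅ (t_c t_c*)`. -/
lemma Eformula (μ : List Sρ) (α : Sρ) (c : Sη) (x : A)
    (ihF : ∀ (y : A) (b : Sη),
      sgen s π μ y * (t b * star (t b)) = (t b * star (t b)) * sgen s π μ y) :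
    sgen s π (α :: μ) x * (t c * star (t c)) = ∑ β, Eterm s t π T α c μ x β := by
  rw [h.tc_resolution c, Finset.mul_sum]
  apply Finset.sum_congr rfl
  intro β _
  unfold Eterm
  split_ifs with hx hb
  · -- (c,β) ∈ Σ^{ηρ} and the corresponding α' equals α
    set p := Function.surjInv T.κ_bij.2 ⟨(c,β),hx⟩ with hpdef
    have hκ : T.κ p = ⟨(c,β),hx⟩ := Function.surjInv_eq T.κ_bij.2 _
    have hcs : t c * s β = s α * t p.1.2 := by
      have h1 := h.hst p
      rw [hκ, hb] at h1
      exact h1.symm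
    have c4 : sgen s π μ x * t p.1.2
        = t p.1.2 * (star (t p.1.2) * sgen s π μ x * t p.1.2) := by
      calc sgen s π μ x * t p.1.2
          = sgen s π μ x * (t p.1.2 * star (t p.1.2) * t p.1.2) := by rw [h.htpi]
        _ = sgen s π μ x * (t p.1.2 * star (t p.1.2)) * t p.1.2 := by
            simp only [mul_assoc]
        _ = t p.1.2 * star (t p.1.2) * sgen s π μ x * t p.1.2 := by
            rw [ihF x p.1.2]
        _ = t p.1.2 * (star (t p.1.2) * sgen s π μ x * t p.1.2) := by
            simp only [mul_assoc]
    calc sgen s π (α :: μ) x * ((t c * s β) * star (t c * s β))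
        = s α * sgen s π μ x * (star (s α) * (s α * (t p.1.2 * star (t c * s β)))) := by
          rw [sgen_cons, hcs]; simp only [mul_assoc]
      _ = s α * sgen s π μ x * (π (T.rs.ρ α 1) * (t p.1.2 * star (t c * s β))) := by
          rw [← mul_assoc (star (s α)), h.ss_one]
      _ = s α * (sgen s π μ x * π (T.rs.ρ α 1)) * (t p.1.2 * star (t c * s β)) := by
          simp only [mul_assoc]
      _ = s α * (π (T.rs.ρ α 1) * sgen s π μ x) * (t p.1.2 * star (t c * s β)) := by
          rw [h.pi_comm_sgen]
      _ = (s α * π (T.rs.ρ α 1)) * (sgen s π μ x * t p.1.2) * star (t c * s β) := by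
          simp only [mul_assoc]
      _ = s α * (t p.1.2 * (star (t p.1.2) * sgen s π μ x * t p.1.2)) * star (t c * s β) := by
          rw [h.s_pi_one, c4]
      _ = (s α * t p.1.2) * (star (t p.1.2) * sgen s π μ x * t p.1.2) * star (t c * s β) := by
          simp only [mul_assoc]
      _ = (t c * s β) * (star (t p.1.2) * sgen s π μ x * t p.1.2) * star (t c * s β) := by
          rw [hcs]
  · -- the corresponding α' differs from α : the term vanishes
    set p := Function.surjInv T.κ_bij.2 ⟨(c,β),hx⟩ with hpdef
    have hκ : T.κ p = ⟨(c,β),hx⟩ := Function.surjInv_eq T.κ_bij.2 _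
    have hcs : t c * s β = s p.1.1 * t p.1.2 := by
      have h1 := h.hst p
      rw [hκ] at h1
      exact h1.symm
    have : star (s α) * (t c * s β) = 0 := by
      rw [hcs, ← mul_assoc, h.s_orth (fun hh => hb hh.symm), zero_mul]
    calc sgen s π (α :: μ) x * ((t c * s β) * star (t c * s β))
        = s α * sgen s π μ x * (star (s α) * (t c * s β)) * star (t c * s β) := by
          rw [sgen_cons]; simp only [mul_assoc]
      _ = 0 := by rw [this, mul_zero, zero_mul]
  · -- `t_c s_β = 0`
    rw [h.ts_zero hx]; simp

/-- Joint induction: pure-`s` generators commute with `t`-range projections, and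
compression by `t_c` maps them into `SS`. -/
lemma fg (μ : List Sρ) : ∀ (x : A) (c : Sη),
    sgen s π μ x * (t c * star (t c)) = (t c * star (t c)) * sgen s π μ x ∧
    star (t c) * sgen s π μ x * t c ∈ SS s π := by
  induction μ with
  | nil =>
    intro x c
    constructor
    · simpa using (h.ht2 x c)
    · rw [sgen_nil, h.ht3]
      exact AddSubmonoid.subset_closure ⟨[], T.es.ρ c x, by simp⟩
  | cons α μ ih =>
    intro x c
    have ihF : ∀ (y : A) (b : Sη),
        sgen s π μ y * (t b * star (t b)) = (t b * star (t b)) * sgen s π μ y :=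
      fun y b => (ih y b).1
    have hE := fun y => h.Eformula μ α c y ihF
    have hE2 : (t c * star (t c)) * sgen s π (α :: μ) x = ∑ β, Eterm s t π T α c μ x β := by
      have h1 := congrArg star (hE (star x))
      rw [star_mul, star_sum] at h1
      simp only [Eterm_star] at h1
      rw [star_mul, star_star, sgen_star, star_star] at h1
      exact h1
    constructor
    · rw [hE x, hE2]
    · have h4 : star (t c) * sgen s π (α :: μ) x * t c
          = ∑ β, star (t c) * (Eterm s t π T α c μ x β * t c) := by
        calc star (t c) * sgen s π (α :: μ) x * t c
            = star (t c) * (sgen s π (α :: μ) x * (t c * star (t c) * t c)) := by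
              rw [h.htpi]; simp only [mul_assoc]
          _ = star (t c) * (sgen s π (α :: μ) x * (t c * star (t c)) * t c) := by
              simp only [mul_assoc]
          _ = star (t c) * ((∑ β, Eterm s t π T α c μ x β) * t c) := by rw [hE x]
          _ = ∑ β, star (t c) * (Eterm s t π T α c μ x β * t c) := by
              rw [Finset.sum_mul, Finset.mul_sum]
      rw [h4]
      apply AddSubmonoid.sum_mem
      intro β _
      unfold Eterm
      split_ifs with hx hb
      · -- main case
        set p := Function.surjInv T.κ_bij.2 ⟨(c,β),hx⟩ with hpdef
        have hκ : T.κ p = ⟨(c,β),hx⟩ := Function.surjInv_eq T.κ_bij.2 _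
        have hcs : t c * s β = s p.1.1 * t p.1.2 := by
          have h1 := h.hst p
          rw [hκ] at h1
          exact h1.symm
        have hmid : star (t p.1.2) * sgen s π μ x * t p.1.2 ∈ SS s π := (ih x p.1.2).2
        have key : star (t c) * ((t c * s β) *
              (star (t p.1.2) * sgen s π μ x * t p.1.2) * star (t c * s β) * t c)
            = π (T.es.ρ c 1) * s β * (star (t p.1.2) * sgen s π μ x * t p.1.2)
              * star (π (T.es.ρ c 1) * s β) := by
          have e1 : star (t c) * (t c * s β) = π (T.es.ρ c 1) * s β := by
            rw [← mul_assoc, h.tt_one]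
          have e2 : star (t c * s β) * t c = star (π (T.es.ρ c 1) * s β) := by
            have := congrArg star e1
            rwa [star_mul, star_star] at this
          calc star (t c) * ((t c * s β) *
                (star (t p.1.2) * sgen s π μ x * t p.1.2) * star (t c * s β) * t c)
              = (star (t c) * (t c * s β)) *
                (star (t p.1.2) * sgen s π μ x * t p.1.2) * (star (t c * s β) * t c) := by
                simp only [mul_assoc]
            _ = π (T.es.ρ c 1) * s β * (star (t p.1.2) * sgen s π μ x * t p.1.2)
                  * star (π (T.es.ρ c 1) * s β) := by rw [e1, e2]
        rw [key]
        exact h.conj_mem (T.es.ρ c 1) β hmid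
      · simpa using (SS s π).zero_mem
      · simpa using (SS s π).zero_mem

end Ctx

end Aux4
section Aux5
set_option linter.unusedSectionVars false

variable {s : Sρ → B} {t : Sη → B} {π : A →⋆ₐ[ℂ] B} {T : CTDS A Sρ Sη}

namespace Ctx

variable (h : Ctx T π s t)
include h

lemma pi_one_star_s (α : Sρ) : π (T.rs.ρ α 1) * star (s α) = star (s α) := by
  have h1 := congrArg star (h.s_pi_one α)
  rw [star_mul, ← map_star, ← map_star, star_one] at h1
  exact h1

/-- Pure-`s` generators commute. -/
lemma sgen_comm (μ : List Sρ) : ∀ (ν : List Sρ) (x y : A),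
    sgen s π μ x * sgen s π ν y = sgen s π ν y * sgen s π μ x := by
  induction μ with
  | nil => intro ν x y; rw [sgen_nil]; exact h.pi_comm_sgen x ν y
  | cons α μ ih =>
    intro ν x y
    cases ν with
    | nil => rw [sgen_nil]; exact (h.pi_comm_sgen y (α :: μ) x).symm
    | cons β ν =>
      by_cases hab : α = β
      · subst hab
        have hmid : ∀ (ν' : List Sρ) (v : A),
            star (s α) * s α * (sgen s π ν' v * star (s α)) = sgen s π ν' v * star (s α) := by
          intro ν' v
          rw [h.ss_one, ← mul_assoc, h.pi_comm_sgen, mul_assoc, h.pi_one_star_s]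
        have key : ∀ (μ' ν' : List Sρ) (u v : A),
            sgen s π (α :: μ') u * sgen s π (α :: ν') v
              = s α * (sgen s π μ' u * sgen s π ν' v * star (s α)) := by
          intro μ' ν' u v
          calc sgen s π (α :: μ') u * sgen s π (α :: ν') v
              = s α * (sgen s π μ' u * (star (s α) * s α * (sgen s π ν' v * star (s α)))) := by
                rw [sgen_cons, sgen_cons]; simp only [mul_assoc]
            _ = s α * (sgen s π μ' u * (sgen s π ν' v * star (s α))) := by rw [hmid]
            _ = s α * (sgen s π μ' u * sgen s π ν' v * star (s α)) := by
                simp only [mul_assoc]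
        rw [key μ ν x y, key ν μ y x, ih ν x y]
      · have l : ∀ (γ δ : Sρ) (X Y : B), star (s γ) * s δ = 0 →
            (s γ * X * star (s γ)) * (s δ * Y * star (s δ)) = 0 := by
          intro γ δ X Y h0
          calc (s γ * X * star (s γ)) * (s δ * Y * star (s δ))
              = s γ * (X * ((star (s γ) * s δ) * (Y * star (s δ)))) := by
                simp only [mul_assoc]
            _ = 0 := by rw [h0, zero_mul, mul_zero, mul_zero]
        rw [sgen_cons, sgen_cons, l α β _ _ (h.s_orth hab),
          l β α _ _ (h.s_orth (Ne.symm hab))]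

/-- `fgen`s commute with pure-`s` generators. -/
lemma fgen_sgen_comm (ζ : List Sη) : ∀ (μ ν : List Sρ) (x y : A),
    fgen s t π ζ μ x * sgen s π ν y = sgen s π ν y * fgen s t π ζ μ x := by
  induction ζ with
  | nil => intro μ ν x y; rw [fgen_nil]; exact h.sgen_comm μ ν x y
  | cons a ζ ih =>
    intro μ ν x y
    have c1 : sgen s π ν y * (t a * star (t a)) = (t a * star (t a)) * sgen s π ν y :=
      (h.fg ν y a).1
    have c2 : star (t a) * sgen s π ν y * t a ∈ SS s π := (h.fg ν y a).2
    have c3 : ∀ z ∈ SS s π, fgen s t π ζ μ x * z = z * fgen s t π ζ μ x := by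
      intro z hz
      induction hz using AddSubmonoid.closure_induction with
      | mem z hzg => obtain ⟨ν', y', rfl⟩ := hzg; exact ih μ ν' x y'
      | zero => simp
      | add u v _ _ ihu ihv => rw [mul_add, add_mul, ihu, ihv]
    have hta : star (t a) * (t a * star (t a)) = star (t a) := by
      have := congrArg star (h.htpi a)
      rwa [star_mul, star_mul, star_star] at this
    have e1 : star (t a) * sgen s π ν y
        = (star (t a) * sgen s π ν y * t a) * star (t a) := by
      calc star (t a) * sgen s π ν y
          = (star (t a) * (t a * star (t a))) * sgen s π ν y := by rw [hta]
        _ = star (t a) * ((t a * star (t a)) * sgen s π ν y) := by simp only [mul_assoc]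
        _ = star (t a) * (sgen s π ν y * (t a * star (t a))) := by rw [← c1]
        _ = (star (t a) * sgen s π ν y * t a) * star (t a) := by simp only [mul_assoc]
    have e2 : sgen s π ν y * t a = t a * (star (t a) * sgen s π ν y * t a) := by
      calc sgen s π ν y * t a
          = sgen s π ν y * (t a * star (t a) * t a) := by rw [h.htpi]
        _ = sgen s π ν y * (t a * star (t a)) * t a := by simp only [mul_assoc]
        _ = (t a * star (t a)) * sgen s π ν y * t a := by rw [c1]
        _ = t a * (star (t a) * sgen s π ν y * t a) := by simp only [mul_assoc]
    calc fgen s t π (a :: ζ) μ x * sgen s π ν y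
        = t a * (fgen s t π ζ μ x * (star (t a) * sgen s π ν y)) := by
          rw [fgen_cons]; simp only [mul_assoc]
      _ = t a * (fgen s t π ζ μ x * ((star (t a) * sgen s π ν y * t a) * star (t a))) := by
          conv_lhs => rw [e1]
      _ = t a * ((fgen s t π ζ μ x * (star (t a) * sgen s π ν y * t a)) * star (t a)) := by
          simp only [mul_assoc]
      _ = t a * (((star (t a) * sgen s π ν y * t a) * fgen s t π ζ μ x) * star (t a)) := by
          rw [c3 _ c2]
      _ = (t a * (star (t a) * sgen s π ν y * t a)) * (fgen s t π ζ μ x * star (t a)) := by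
          simp only [mul_assoc]
      _ = (sgen s π ν y * t a) * (fgen s t π ζ μ x * star (t a)) := by rw [← e2]
      _ = sgen s π ν y * fgen s t π (a :: ζ) μ x := by
          rw [fgen_cons]; simp only [mul_assoc]

/-- All `fgen`s commute. -/
lemma fgen_comm (ζ : List Sη) : ∀ (ξ : List Sη) (μ ν : List Sρ) (x y : A),
    fgen s t π ζ μ x * fgen s t π ξ ν y = fgen s t π ξ ν y * fgen s t π ζ μ x := by
  induction ζ with
  | nil => intro ξ μ ν x y; rw [fgen_nil]; exact (h.fgen_sgen_comm ξ ν μ y x).symm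
  | cons a ζ ih =>
    intro ξ μ ν x y
    cases ξ with
    | nil => rw [fgen_nil]; exact h.fgen_sgen_comm (a :: ζ) μ ν x y
    | cons b ξ =>
      by_cases hab : a = b
      · subst hab
        have hmid : ∀ (ξ' : List Sη) (ν' : List Sρ) (v : A),
            star (t a) * t a * (fgen s t π ξ' ν' v * star (t a))
              = fgen s t π ξ' ν' v * star (t a) := by
          intro ξ' ν' v
          rw [h.tt_one, ← mul_assoc, h.pi_comm_fgen, mul_assoc, h.pi_one_star_t]
        have key : ∀ (ζ' ξ' : List Sη) (μ' ν' : List Sρ) (u v : A),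
            fgen s t π (a :: ζ') μ' u * fgen s t π (a :: ξ') ν' v
              = t a * (fgen s t π ζ' μ' u * fgen s t π ξ' ν' v * star (t a)) := by
          intro ζ' ξ' μ' ν' u v
          calc fgen s t π (a :: ζ') μ' u * fgen s t π (a :: ξ') ν' v
              = t a * (fgen s t π ζ' μ' u *
                  (star (t a) * t a * (fgen s t π ξ' ν' v * star (t a)))) := by
                rw [fgen_cons, fgen_cons]; simp only [mul_assoc]
            _ = t a * (fgen s t π ζ' μ' u * (fgen s t π ξ' ν' v * star (t a))) := by
                rw [hmid]
            _ = t a * (fgen s t π ζ' μ' u * fgen s t π ξ' ν' v * star (t a)) := by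
                simp only [mul_assoc]
        rw [key ζ ξ μ ν x y, key ξ ζ ν μ y x, ih ξ μ ν x y]
      · have l : ∀ (γ δ : Sη) (X Y : B), star (t γ) * t δ = 0 →
            (t γ * X * star (t γ)) * (t δ * Y * star (t δ)) = 0 := by
          intro γ δ X Y h0
          calc (t γ * X * star (t γ)) * (t δ * Y * star (t δ))
              = t γ * (X * ((star (t γ) * t δ) * (Y * star (t δ)))) := by
                simp only [mul_assoc]
            _ = 0 := by rw [h0, zero_mul, mul_zero, mul_zero]
        rw [fgen_cons, fgen_cons, l a b _ _ (h.t_orth hab),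
          l b a _ _ (h.t_orth (Ne.symm hab))]

/-- Moving a single `s` past a `t`-word. -/
lemma sTP_cases (ζ : List Sη) : ∀ (α : Sρ),
    s α * TP t ζ = 0 ∨ ∃ (ζ' : List Sη) (β : Sρ), s α * TP t ζ = TP t ζ' * s β := by
  induction ζ with
  | nil => intro α; exact Or.inr ⟨[], α, by simp⟩
  | cons c ζ ih =>
    intro α
    rcases h.st_cases α c with h0 | ⟨a, β, hst1⟩
    · left; rw [TP_cons, ← mul_assoc, h0, zero_mul]
    · rcases ih β with h0 | ⟨ζ', β', h1⟩
      · left; rw [TP_cons, ← mul_assoc, hst1, mul_assoc, h0, mul_zero]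
      · right
        exact ⟨a :: ζ', β', by
          rw [TP_cons, ← mul_assoc, hst1, mul_assoc, h1, TP_cons, mul_assoc]⟩

/-- Moving an `s`-word past a `t`-word. -/
lemma SPTP_cases (μ : List Sρ) : ∀ (ζ : List Sη),
    SP s μ * TP t ζ = 0 ∨
    ∃ (ζ' : List Sη) (μ' : List Sρ), SP s μ * TP t ζ = TP t ζ' * SP s μ' := by
  induction μ with
  | nil => intro ζ; exact Or.inr ⟨ζ, [], by simp⟩
  | cons α μ ih =>
    intro ζ
    rcases ih ζ with h0 | ⟨ζ', μ', h1⟩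
    · left; rw [SP_cons, mul_assoc, h0, mul_zero]
    · rcases h.sTP_cases ζ' α with h0 | ⟨ζ'', β, h2⟩
      · left; rw [SP_cons, mul_assoc, h1, ← mul_assoc, h0, zero_mul]
      · right
        exact ⟨ζ'', β :: μ', by
          rw [SP_cons, mul_assoc, h1, ← mul_assoc, h2, SP_cons, mul_assoc]⟩

/-- Every generator is zero or an `fgen`. -/
lemma gen_form (μ : List Sρ) (ζ : List Sη) (x : A) :
    SP s μ * TP t ζ * π x * star (TP t ζ) * star (SP s μ) = 0 ∨
    ∃ ζ' μ', SP s μ * TP t ζ * π x * star (TP t ζ) * star (SP s μ)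
        = fgen s t π ζ' μ' x := by
  have e : SP s μ * TP t ζ * π x * star (TP t ζ) * star (SP s μ)
      = (SP s μ * TP t ζ) * π x * star (SP s μ * TP t ζ) := by
    rw [star_mul]; simp only [mul_assoc]
  rcases h.SPTP_cases μ ζ with h0 | ⟨ζ', μ', h1⟩
  · left; rw [e, h0, zero_mul, zero_mul]
  · right
    refine ⟨ζ', μ', ?_⟩
    rw [e, h1, star_mul]
    unfold fgen sgen
    simp only [mul_assoc]

end Ctx

end Aux5
/-- If `A` is commutative then the `C*`-subalgebra of `B` generated by
the elements `s_μ t_ζ π(x) t_ζ* s_μ*` is commutative. -/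
theorem diagonal_subalgebra_commutative
    (T : CTDS A Sρ Sη)
    (π : A →⋆ₐ[ℂ] B) (hπ : Function.Injective π)
    (s : Sρ → B) (t : Sη → B)
    (hspi : ∀ α, s α * star (s α) * s α = s α)
    (htpi : ∀ a, t a * star (t a) * t a = t a)
    (hs1 : ∑ β, s β * star (s β) = 1)
    (hs2 : ∀ (x : A) (α : Sρ), π x * (s α * star (s α)) = s α * star (s α) * π x)
    (hs3 : ∀ (x : A) (α : Sρ), star (s α) * π x * s α = π (T.rs.ρ α x))
    (ht1 : ∑ b, t b * star (t b) = 1)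
    (ht2 : ∀ (x : A) (a : Sη), π x * (t a * star (t a)) = t a * star (t a) * π x)
    (ht3 : ∀ (x : A) (a : Sη), star (t a) * π x * t a = π (T.es.ρ a x))
    (hst : ∀ p : T.SigmaKappa, s p.1.1 * t p.1.2 = t (T.κ p).1.1 * s (T.κ p).1.2)
    (hA : ∀ x y : A, x * y = y * x) :
    ∀ z ∈ (StarAlgebra.adjoin ℂ
        {z : B | ∃ (μ : List Sρ) (ζ : List Sη) (x : A),
          z = (μ.map s).prod * (ζ.map t).prod * π x *
              star ((ζ.map t).prod) * star ((μ.map s).prod)}).topologicalClosure,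
      ∀ w ∈ (StarAlgebra.adjoin ℂ
        {z : B | ∃ (μ : List Sρ) (ζ : List Sη) (x : A),
          z = (μ.map s).prod * (ζ.map t).prod * π x *
              star ((ζ.map t).prod) * star ((μ.map s).prod)}).topologicalClosure,
        Commute z w := by
  intro z hz w hw
  have hctx : Ctx T π s t := ⟨hspi, htpi, hs1, hs2, hs3, ht1, ht2, ht3, hst, hA⟩
  set G : Set B := {z : B | ∃ (μ : List Sρ) (ζ : List Sη) (x : A),
      z = (μ.map s).prod * (ζ.map t).prod * π x *
          star ((ζ.map t).prod) * star ((μ.map s).prod)} with hG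
  have hgen : ∀ u ∈ G, ∀ v ∈ G, u * v = v * u := by
    rintro u ⟨μ₁, ζ₁, x₁, rfl⟩ v ⟨μ₂, ζ₂, x₂, rfl⟩
    have e : ∀ (μ : List Sρ) (ζ : List Sη) (x : A),
        (μ.map s).prod * (ζ.map t).prod * π x * star ((ζ.map t).prod) * star ((μ.map s).prod)
          = SP s μ * TP t ζ * π x * star (TP t ζ) * star (SP s μ) := fun _ _ _ => rfl
    rw [e, e]
    rcases hctx.gen_form μ₁ ζ₁ x₁ with h1 | ⟨ζ₁', μ₁', h1⟩ <;>
      rcases hctx.gen_form μ₂ ζ₂ x₂ with h2 | ⟨ζ₂', μ₂', h2⟩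
    · rw [h1, h2]
    · rw [h1, h2, zero_mul, mul_zero]
    · rw [h1, h2, zero_mul, mul_zero]
    · rw [h1, h2]
      exact hctx.fgen_comm ζ₁' ζ₂' μ₁' μ₂' x₁ x₂
  have hstar : ∀ u ∈ G, star u ∈ G := by
    rintro u ⟨μ, ζ, x, rfl⟩
    refine ⟨μ, ζ, star x, ?_⟩
    simp only [star_mul, star_star, map_star, mul_assoc]
  set Adj := StarAlgebra.adjoin ℂ G with hAdj
  have hadj1 : ∀ u ∈ Adj, ∀ g ∈ G, u * g = g * u := by
    intro u hu
    induction hu using StarAlgebra.adjoin_induction with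
    | mem v hv => intro g hg; exact hgen v hv g hg
    | algebraMap r => intro g hg; exact Algebra.commutes r g
    | add u v _ _ ihu ihv => intro g hg; rw [add_mul, mul_add, ihu g hg, ihv g hg]
    | mul u v _ _ ihu ihv =>
        intro g hg; rw [mul_assoc, ihv g hg, ← mul_assoc, ihu g hg, mul_assoc]
    | star u _ ihu =>
        intro g hg
        have h1 := ihu (star g) (hstar g hg)
        have h2 := congrArg star h1
        rw [star_mul, star_mul, star_star] at h2
        exact h2.symm
  have hadj : ∀ v ∈ Adj, ∀ u ∈ Adj, u * v = v * u := by
    intro v hv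
    induction hv using StarAlgebra.adjoin_induction with
    | mem g hg => intro u hu; exact hadj1 u hu g hg
    | algebraMap r => intro u hu; exact (Algebra.commutes r u).symm
    | add v w _ _ ihv ihw => intro u hu; rw [mul_add, add_mul, ihv u hu, ihw u hu]
    | mul v w _ _ ihv ihw =>
        intro u hu; rw [← mul_assoc, ihv u hu, mul_assoc, ihw u hu, ← mul_assoc]
    | star v _ ihv =>
        intro u hu
        have h1 := ihv (star u) (star_mem hu)
        have h2 := congrArg star h1
        rw [star_mul, star_mul, star_star] at h2
        exact h2.symm
  have hz' : z ∈ closure (Adj : Set B) := hz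
  have hw' : w ∈ closure (Adj : Set B) := hw
  have step1 : ∀ w' ∈ (Adj : Set B), z * w' = w' * z := by
    intro w' hw'
    have hcl : IsClosed {b : B | b * w' = w' * b} :=
      isClosed_eq (continuous_id.mul continuous_const) (continuous_const.mul continuous_id)
    have hsub : (Adj : Set B) ⊆ {b : B | b * w' = w' * b} := fun u hu => hadj w' hw' u hu
    exact closure_minimal hsub hcl hz'
  have step2 : z * w = w * z := by
    have hcl : IsClosed {b : B | z * b = b * z} :=
      isClosed_eq (continuous_const.mul continuous_id) (continuous_id.mul continuous_const)
    have hsub : (Adj : Set B) ⊆ {b : B | z * b = b * z} := fun u hu => step1 u hu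
    exact closure_minimal hsub hcl hw'
  exact step2
end

section
/- The ℂ-linear span of the set {s_μ t_ζ π(x) t_ξ* s_ν* : μ, ν finite words over Σ^ρ, ζ, ξ finite words over Σ^η, x ∈ A} equals the smallest *-subalgebra of B containing π(A), all s_α (α ∈ Σ^ρ) and all t_a (a ∈ Σ^η); in particular every element of that *-subalgebra is a finite linear combination of elements of the form s_μ t_ζ π(x) t_ξ* s_ν*. -/
open scoped Classical

set_option maxHeartbeats 3200000

/-- In a unital C*-algebra, partial isometries whose range projections sum to `1`
have mutually orthogonal ranges. -/
lemma orth_of_sum_proj {B : Type*} [NormedRing B] [StarRing B] [CStarRing B] [CompleteSpace B]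
    [NormedAlgebra ℂ B] [StarModule ℂ B] {ι : Type*} [Fintype ι] (v : ι → B)
    (hpi : ∀ i, v i * star (v i) * v i = v i)
    (hsum : ∑ i, v i * star (v i) = 1) :
    ∀ i j, i ≠ j → star (v i) * v j = 0 := by
  letI : CStarAlgebra B :=
    { ‹NormedRing B›, ‹StarRing B›, ‹CStarRing B›, ‹NormedAlgebra ℂ B›,
      ‹StarModule ℂ B›, ‹CompleteSpace B› with }
  letI : PartialOrder B := CStarAlgebra.spectralOrder B
  letI : StarOrderedRing B := CStarAlgebra.spectralOrderedRing B
  set P : ι → B := fun i => v i * star (v i) with hP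
  have hidem : ∀ i, P i * P i = P i := by
    intro i
    simp only [hP]
    calc v i * star (v i) * (v i * star (v i)) = (v i * star (v i) * v i) * star (v i) := by
          simp [mul_assoc]
      _ = v i * star (v i) := by rw [hpi]
  have hsa : ∀ i, star (P i) = P i := by intro i; simp [hP, mul_assoc]
  -- orthogonality of the projections
  have key : ∀ i j, i ≠ j → P j * P i = 0 := by
    intro i j hij
    have h0 : ∑ k ∈ Finset.univ.erase i, star (P k * P i) * (P k * P i) = 0 := by
      have hterm : ∀ k, star (P k * P i) * (P k * P i) = P i * P k * P i := by
        intro k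
        rw [star_mul, hsa, hsa]
        calc P i * P k * (P k * P i) = P i * (P k * P k) * P i := by simp [mul_assoc]
          _ = P i * P k * P i := by rw [hidem]
      simp only [hterm]
      rw [Finset.sum_erase_eq_sub (Finset.mem_univ i)]
      have hsum' : ∑ k, P i * P k * P i = P i := by
        rw [show ∑ k, P i * P k * P i = P i * (∑ k, P k) * P i by
              simp [Finset.mul_sum, Finset.sum_mul],
          hsum, mul_one, hidem]
      rw [hsum', hidem, hidem, sub_self]
    have hterm2 : star (P j * P i) * (P j * P i) = 0 :=
      (Finset.sum_eq_zero_iff_of_nonneg (fun k _ => star_mul_self_nonneg (P k * P i))).mp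
        h0 j (Finset.mem_erase.mpr ⟨hij.symm, Finset.mem_univ j⟩)
    exact (CStarRing.star_mul_self_eq_zero_iff _).mp hterm2
  intro i j hij
  have h1 : star (v i) = star (v i) * P i := by
    conv_lhs => rw [← hpi i]
    simp [mul_assoc, hP]
  have h2 : v j = P j * v j := by
    conv_lhs => rw [← hpi j]
  calc star (v i) * v j = (star (v i) * P i) * (P j * v j) := by rw [← h1, ← h2]
    _ = star (v i) * (P i * P j) * v j := by simp [mul_assoc]
    _ = 0 := by rw [key j i hij.symm]; simp

lemma mem_span_star_image {B : Type*} [NormedRing B] [StarRing B] [NormedAlgebra ℂ B]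
    [StarModule ℂ B] {S : Set B} {x : B} (hx : x ∈ Submodule.span ℂ S) :
    star x ∈ Submodule.span ℂ (star '' S) := by
  induction hx using Submodule.span_induction with
  | mem z hz => exact Submodule.subset_span ⟨z, hz, rfl⟩
  | zero => rw [star_zero]; exact Submodule.zero_mem _
  | add a b _ _ ha hb => rw [star_add]; exact Submodule.add_mem _ ha hb
  | smul c a _ ha => rw [star_smul]; exact Submodule.smul_mem _ _ ha


variable (A : Type*) [NormedRing A] [StarRing A] [CStarRing A] [CompleteSpace A]
  [NormedAlgebra ℂ A] [StarModule ℂ A] [PartialOrder A] [StarOrderedRing A]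

variable {A}
variable {Sρ Sη : Type*} [Fintype Sρ] [Fintype Sη]

variable {B : Type*} [NormedRing B] [StarRing B] [CStarRing B] [CompleteSpace B]
  [NormedAlgebra ℂ B] [StarModule ℂ B]

/-- The linear span of the elements `s_μ t_ζ π(x) t_ξ* s_ν*` equals the
smallest `*`-subalgebra of `B` containing `π(A)`, all `s_α` and all `t_a`. -/
theorem span_monomials_eq_starAlgebra_adjoin
    (T : CTDS A Sρ Sη)
    (π : A →⋆ₐ[ℂ] B) (hπ : Function.Injective π)
    (s : Sρ → B) (t : Sη → B)
    (hspi : ∀ α, s α * star (s α) * s α = s α)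
    (htpi : ∀ a, t a * star (t a) * t a = t a)
    (hs1 : ∑ β, s β * star (s β) = 1)
    (hs2 : ∀ (x : A) (α : Sρ), π x * (s α * star (s α)) = s α * star (s α) * π x)
    (hs3 : ∀ (x : A) (α : Sρ), star (s α) * π x * s α = π (T.rs.ρ α x))
    (ht1 : ∑ b, t b * star (t b) = 1)
    (ht2 : ∀ (x : A) (a : Sη), π x * (t a * star (t a)) = t a * star (t a) * π x)
    (ht3 : ∀ (x : A) (a : Sη), star (t a) * π x * t a = π (T.es.ρ a x))
    (hst : ∀ p : T.SigmaKappa, s p.1.1 * t p.1.2 = t (T.κ p).1.1 * s (T.κ p).1.2)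
    :
    (Submodule.span ℂ
        {z : B | ∃ (μ ν : List Sρ) (ζ ξ : List Sη) (x : A),
          z = (μ.map s).prod * (ζ.map t).prod * π x *
              star ((ξ.map t).prod) * star ((ν.map s).prod)} : Set B)
      = (StarAlgebra.adjoin ℂ (Set.range ⇑π ∪ Set.range s ∪ Set.range t) : Set B) := by
  classical
  have hπ1 : π (1:A) = 1 := map_one π
  have hss : ∀ α, star (s α) * s α = π (T.rs.ρ α 1) := by
    intro α
    have h := hs3 1 α
    rwa [hπ1, mul_one] at h
  have htt : ∀ a, star (t a) * t a = π (T.es.ρ a 1) := by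
    intro a
    have h := ht3 1 a
    rwa [hπ1, mul_one] at h
  have hcs : ∀ (x : A) (α : Sρ), π x * s α = s α * π (T.rs.ρ α x) := by
    intro x α
    calc π x * s α = π x * (s α * star (s α) * s α) := by rw [hspi]
      _ = (π x * (s α * star (s α))) * s α := by rw [← mul_assoc]
      _ = (s α * star (s α) * π x) * s α := by rw [hs2]
      _ = s α * (star (s α) * π x * s α) := by simp [mul_assoc]
      _ = s α * π (T.rs.ρ α x) := by rw [hs3]
  have hct : ∀ (x : A) (a : Sη), π x * t a = t a * π (T.es.ρ a x) := by
    intro x a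
    calc π x * t a = π x * (t a * star (t a) * t a) := by rw [htpi]
      _ = (π x * (t a * star (t a))) * t a := by rw [← mul_assoc]
      _ = (t a * star (t a) * π x) * t a := by rw [ht2]
      _ = t a * (star (t a) * π x * t a) := by simp [mul_assoc]
      _ = t a * π (T.es.ρ a x) := by rw [ht3]
  have hcs' : ∀ (x : A) (α : Sρ), star (s α) * π x = π (T.rs.ρ α x) * star (s α) := by
    intro x α
    calc star (s α) * π x = star (star (π x) * s α) := by rw [star_mul, star_star]
      _ = star (π (star x) * s α) := by rw [map_star]
      _ = star (s α * π (T.rs.ρ α (star x))) := by rw [hcs]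
      _ = star (π (T.rs.ρ α (star x))) * star (s α) := by rw [star_mul]
      _ = π (T.rs.ρ α x) * star (s α) := by rw [map_star, map_star, star_star]
  have hct' : ∀ (x : A) (a : Sη), star (t a) * π x = π (T.es.ρ a x) * star (t a) := by
    intro x a
    calc star (t a) * π x = star (star (π x) * t a) := by rw [star_mul, star_star]
      _ = star (π (star x) * t a) := by rw [map_star]
      _ = star (t a * π (T.es.ρ a (star x))) := by rw [hct]
      _ = star (π (T.es.ρ a (star x))) * star (t a) := by rw [star_mul]
      _ = π (T.es.ρ a x) * star (t a) := by rw [map_star, map_star, star_star]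
  have hos : ∀ α β, α ≠ β → star (s α) * s β = 0 := orth_of_sum_proj s hspi hs1
  have hot : ∀ a b, a ≠ b → star (t a) * t b = 0 := orth_of_sum_proj t htpi ht1
  have hst0 : ∀ (α : Sρ) (b : Sη), (¬ ∃ x, T.es.ρ b (T.rs.ρ α x) ≠ 0) → s α * t b = 0 := by
    intro α b h
    push_neg at h
    have h1 : T.es.ρ b (T.rs.ρ α 1) = 0 := h 1
    have h2 : star (s α * t b) * (s α * t b) = 0 := by
      rw [star_mul]
      calc star (t b) * star (s α) * (s α * t b)
          = star (t b) * (star (s α) * s α) * t b := by simp [mul_assoc]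
        _ = star (t b) * π (T.rs.ρ α 1) * t b := by rw [hss]
        _ = π (T.es.ρ b (T.rs.ρ α 1)) := ht3 _ b
        _ = 0 := by rw [h1, map_zero]
    exact (CStarRing.star_mul_self_eq_zero_iff _).mp h2
  have hts : ∀ (a : Sη) (β : Sρ), t a * s β = 0 ∨ ∃ α b, t a * s β = s α * t b := by
    intro a β
    by_cases h : ∃ x, T.rs.ρ β (T.es.ρ a x) ≠ 0
    · right
      obtain ⟨p, hp⟩ := T.κ_bij.2 ⟨(a, β), h⟩
      refine ⟨p.1.1, p.1.2, ?_⟩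
      rw [hst p, hp]
    · left
      push_neg at h
      have h1 : T.rs.ρ β (T.es.ρ a 1) = 0 := h 1
      have h2 : star (t a * s β) * (t a * s β) = 0 := by
        rw [star_mul]
        calc star (s β) * star (t a) * (t a * s β)
            = star (s β) * (star (t a) * t a) * s β := by simp [mul_assoc]
          _ = star (s β) * π (T.es.ρ a 1) * s β := by rw [htt]
          _ = π (T.rs.ρ β (T.es.ρ a 1)) := hs3 _ β
          _ = 0 := by rw [h1, map_zero]
      exact (CStarRing.star_mul_self_eq_zero_iff _).mp h2
  have hcS : ∀ (μ : List Sρ) (x : A), ∃ y, π x * (μ.map s).prod = (μ.map s).prod * π y := by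
    intro μ
    induction μ with
    | nil => exact fun x => ⟨x, by simp⟩
    | cons β rest ih =>
      intro x
      obtain ⟨y, hy⟩ := ih (T.rs.ρ β x)
      refine ⟨y, ?_⟩
      calc π x * ((β :: rest).map s).prod = (π x * s β) * (rest.map s).prod := by
            simp [mul_assoc]
        _ = s β * (π (T.rs.ρ β x) * (rest.map s).prod) := by rw [hcs]; simp [mul_assoc]
        _ = s β * ((rest.map s).prod * π y) := by rw [hy]
        _ = ((β :: rest).map s).prod * π y := by simp [mul_assoc]
  have hcT : ∀ (ζ : List Sη) (x : A), ∃ y, π x * (ζ.map t).prod = (ζ.map t).prod * π y := by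
    intro ζ
    induction ζ with
    | nil => exact fun x => ⟨x, by simp⟩
    | cons a rest ih =>
      intro x
      obtain ⟨y, hy⟩ := ih (T.es.ρ a x)
      refine ⟨y, ?_⟩
      calc π x * ((a :: rest).map t).prod = (π x * t a) * (rest.map t).prod := by
            simp [mul_assoc]
        _ = t a * (π (T.es.ρ a x) * (rest.map t).prod) := by rw [hct]; simp [mul_assoc]
        _ = t a * ((rest.map t).prod * π y) := by rw [hy]
        _ = ((a :: rest).map t).prod * π y := by simp [mul_assoc]
  have htS : ∀ (μ : List Sρ) (a : Sη), t a * (μ.map s).prod = 0 ∨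
      ∃ (μ' : List Sρ) (a' : Sη), t a * (μ.map s).prod = ((μ'.map s).prod) * t a' := by
    intro μ
    induction μ with
    | nil => exact fun a => Or.inr ⟨[], a, by simp⟩
    | cons β rest ih =>
      intro a
      have hexp : t a * (((β :: rest)).map s).prod = (t a * s β) * (rest.map s).prod := by
        simp [mul_assoc]
      rcases hts a β with h0 | ⟨α, b, h⟩
      · left; rw [hexp, h0, zero_mul]
      · rcases ih b with h0 | ⟨μ', a', h'⟩
        · left
          rw [hexp, h, mul_assoc, h0, mul_zero]
        · right
          refine ⟨α :: μ', a', ?_⟩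
          rw [hexp, h, mul_assoc, h']
          simp [mul_assoc]
  have hTs : ∀ (ζ : List Sη) (β : Sρ), (ζ.map t).prod * s β = 0 ∨
      ∃ (γ : Sρ) (ζ' : List Sη), (ζ.map t).prod * s β = s γ * (ζ'.map t).prod := by
    intro ζ
    induction ζ with
    | nil => exact fun β => Or.inr ⟨β, [], by simp⟩
    | cons a rest ih =>
      intro β
      have hexp : ((a :: rest).map t).prod * s β = t a * ((rest.map t).prod * s β) := by
        simp [mul_assoc]
      rcases ih β with h0 | ⟨γ, ζ', h⟩
      · left; rw [hexp, h0, mul_zero]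
      · rcases hts a γ with h0 | ⟨α, b, h'⟩
        · left
          rw [hexp, h, ← mul_assoc, h0, zero_mul]
        · right
          refine ⟨α, b :: ζ', ?_⟩
          rw [hexp, h, ← mul_assoc, h']
          simp [mul_assoc]
  have hts_star : ∀ (c : Sη) (α : Sρ), star (t c) * s α ∈
      Submodule.span ℂ {z : B | ∃ (β : Sρ) (y : A) (b : Sη), z = s β * π y * star (t b)} := by
    intro c α
    have hexp : star (t c) * s α = ∑ b, star (t c) * (s α * t b) * star (t b) := by
      calc star (t c) * s α = star (t c) * s α * (∑ b, t b * star (t b)) := by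
            rw [ht1, mul_one]
        _ = ∑ b, star (t c) * s α * (t b * star (t b)) := by rw [Finset.mul_sum]
        _ = ∑ b, star (t c) * (s α * t b) * star (t b) := by
            refine Finset.sum_congr rfl fun b _ => ?_
            simp [mul_assoc]
    rw [hexp]
    refine Submodule.sum_mem _ fun b _ => ?_
    by_cases h : ∃ x, T.es.ρ b (T.rs.ρ α x) ≠ 0
    · have hp := hst ⟨(α, b), h⟩
      rw [hp]
      by_cases hc : c = (T.κ ⟨(α, b), h⟩).1.1
      · rw [hc]
        have heq : star (t ((T.κ ⟨(α, b), h⟩).1.1)) *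
              (t ((T.κ ⟨(α, b), h⟩).1.1) * s ((T.κ ⟨(α, b), h⟩).1.2)) * star (t b)
            = s ((T.κ ⟨(α, b), h⟩).1.2) *
              π (T.rs.ρ ((T.κ ⟨(α, b), h⟩).1.2) (T.es.ρ ((T.κ ⟨(α, b), h⟩).1.1) 1)) *
              star (t b) := by
          calc star (t ((T.κ ⟨(α, b), h⟩).1.1)) *
                (t ((T.κ ⟨(α, b), h⟩).1.1) * s ((T.κ ⟨(α, b), h⟩).1.2)) * star (t b)
              = (star (t ((T.κ ⟨(α, b), h⟩).1.1)) * t ((T.κ ⟨(α, b), h⟩).1.1)) *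
                s ((T.κ ⟨(α, b), h⟩).1.2) * star (t b) := by simp [mul_assoc]
            _ = π (T.es.ρ ((T.κ ⟨(α, b), h⟩).1.1) 1) * s ((T.κ ⟨(α, b), h⟩).1.2) * star (t b) := by
                rw [htt]
            _ = s ((T.κ ⟨(α, b), h⟩).1.2) *
                π (T.rs.ρ ((T.κ ⟨(α, b), h⟩).1.2) (T.es.ρ ((T.κ ⟨(α, b), h⟩).1.1) 1)) *
                star (t b) := by rw [hcs]
        rw [heq]
        exact Submodule.subset_span ⟨_, _, b, rfl⟩
      · have h0 : star (t c) * t ((T.κ ⟨(α, b), h⟩).1.1) = 0 := hot _ _ hc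
        have heq : star (t c) * (t ((T.κ ⟨(α, b), h⟩).1.1) * s ((T.κ ⟨(α, b), h⟩).1.2)) *
            star (t b) = 0 := by
          rw [← mul_assoc, h0, zero_mul, zero_mul]
        rw [heq]
        exact Submodule.zero_mem _
    · rw [hst0 α b h, mul_zero, zero_mul]
      exact Submodule.zero_mem _
  have hst_star : ∀ (α : Sρ) (c : Sη), star (s α) * t c ∈
      Submodule.span ℂ {z : B | ∃ (b : Sη) (y : A) (β : Sρ), z = t b * π y * star (s β)} := by
    intro α c
    have h1 := mem_span_star_image (hts_star c α)
    rw [star_mul, star_star] at h1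
    refine Submodule.span_mono ?_ h1
    rintro _ ⟨z, ⟨β, y, b, rfl⟩, rfl⟩
    exact ⟨b, star y, β, by simp [star_mul, star_star, map_star, mul_assoc]⟩
  have hE1 : ∀ (μ : List Sρ) (a : Sη), star (t a) * (μ.map s).prod ∈
      Submodule.span ℂ {z : B | ∃ (μ' : List Sρ) (y : A) (b : Sη),
        z = (μ'.map s).prod * π y * star (t b)} := by
    intro μ
    induction μ with
    | nil =>
      intro a
      exact Submodule.subset_span ⟨[], 1, a, by simp⟩
    | cons β rest ih =>
      intro a
      have hexp : star (t a) * ((β :: rest).map s).prod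
          = (star (t a) * s β) * (rest.map s).prod := by simp [mul_assoc]
      rw [hexp]
      have key : ∀ w ∈ Submodule.span ℂ
          {z : B | ∃ (γ : Sρ) (y : A) (b : Sη), z = s γ * π y * star (t b)},
          w * (rest.map s).prod ∈ Submodule.span ℂ {z : B | ∃ (μ' : List Sρ) (y : A) (b : Sη),
            z = (μ'.map s).prod * π y * star (t b)} := by
        intro w hw
        induction hw using Submodule.span_induction with
        | mem z hz =>
          obtain ⟨γ, y, b, rfl⟩ := hz
          have hb := ih b
          have key2 : ∀ u ∈ Submodule.span ℂ {z : B | ∃ (μ' : List Sρ) (y : A) (b : Sη),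
              z = (μ'.map s).prod * π y * star (t b)},
              s γ * π y * u ∈ Submodule.span ℂ {z : B | ∃ (μ' : List Sρ) (y : A) (b : Sη),
                z = (μ'.map s).prod * π y * star (t b)} := by
            intro u hu
            induction hu using Submodule.span_induction with
            | mem z hz =>
              obtain ⟨μ', y', b', rfl⟩ := hz
              obtain ⟨y₂, hy₂⟩ := hcS μ' y
              have heq : s γ * π y * ((μ'.map s).prod * π y' * star (t b'))
                  = ((γ :: μ').map s).prod * π (y₂ * y') * star (t b') := by
                calc s γ * π y * ((μ'.map s).prod * π y' * star (t b'))
                    = s γ * ((π y * (μ'.map s).prod) * (π y' * star (t b'))) := by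
                      simp [mul_assoc]
                  _ = s γ * (((μ'.map s).prod * π y₂) * (π y' * star (t b'))) := by rw [hy₂]
                  _ = ((γ :: μ').map s).prod * π (y₂ * y') * star (t b') := by
                      simp [List.map_cons, List.prod_cons, map_mul, mul_assoc]
              rw [heq]
              exact Submodule.subset_span ⟨γ :: μ', y₂ * y', b', rfl⟩
            | zero => rw [mul_zero]; exact Submodule.zero_mem _
            | add u v _ _ hu' hv' => rw [mul_add]; exact Submodule.add_mem _ hu' hv'
            | smul c u _ hu' => rw [mul_smul_comm]; exact Submodule.smul_mem _ _ hu'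
          have heq : (s γ * π y * star (t b)) * (rest.map s).prod
              = s γ * π y * (star (t b) * (rest.map s).prod) := by simp [mul_assoc]
          rw [heq]
          exact key2 _ hb
        | zero => rw [zero_mul]; exact Submodule.zero_mem _
        | add u v _ _ hu' hv' => rw [add_mul]; exact Submodule.add_mem _ hu' hv'
        | smul c u _ hu' => rw [smul_mul_assoc]; exact Submodule.smul_mem _ _ hu'
      exact key _ (hts_star a β)
  have hE2 : ∀ (ζ : List Sη) (α : Sρ), star (s α) * (ζ.map t).prod ∈
      Submodule.span ℂ {z : B | ∃ (ζ' : List Sη) (y : A) (β : Sρ),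
        z = (ζ'.map t).prod * π y * star (s β)} := by
    intro ζ
    induction ζ with
    | nil =>
      intro α
      exact Submodule.subset_span ⟨[], 1, α, by simp⟩
    | cons a rest ih =>
      intro α
      have hexp : star (s α) * ((a :: rest).map t).prod
          = (star (s α) * t a) * (rest.map t).prod := by simp [mul_assoc]
      rw [hexp]
      have key : ∀ w ∈ Submodule.span ℂ
          {z : B | ∃ (b : Sη) (y : A) (β : Sρ), z = t b * π y * star (s β)},
          w * (rest.map t).prod ∈ Submodule.span ℂ {z : B | ∃ (ζ' : List Sη) (y : A) (β : Sρ),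
            z = (ζ'.map t).prod * π y * star (s β)} := by
        intro w hw
        induction hw using Submodule.span_induction with
        | mem z hz =>
          obtain ⟨b, y, β, rfl⟩ := hz
          have hb := ih β
          have key2 : ∀ u ∈ Submodule.span ℂ {z : B | ∃ (ζ' : List Sη) (y : A) (β : Sρ),
              z = (ζ'.map t).prod * π y * star (s β)},
              t b * π y * u ∈ Submodule.span ℂ {z : B | ∃ (ζ' : List Sη) (y : A) (β : Sρ),
                z = (ζ'.map t).prod * π y * star (s β)} := by
            intro u hu
            induction hu using Submodule.span_induction with
            | mem z hz =>
              obtain ⟨ζ', y', β', rfl⟩ := hz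
              obtain ⟨y₂, hy₂⟩ := hcT ζ' y
              have heq : t b * π y * ((ζ'.map t).prod * π y' * star (s β'))
                  = ((b :: ζ').map t).prod * π (y₂ * y') * star (s β') := by
                calc t b * π y * ((ζ'.map t).prod * π y' * star (s β'))
                    = t b * ((π y * (ζ'.map t).prod) * (π y' * star (s β'))) := by
                      simp [mul_assoc]
                  _ = t b * (((ζ'.map t).prod * π y₂) * (π y' * star (s β'))) := by rw [hy₂]
                  _ = ((b :: ζ').map t).prod * π (y₂ * y') * star (s β') := by
                      simp [List.map_cons, List.prod_cons, map_mul, mul_assoc]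
              rw [heq]
              exact Submodule.subset_span ⟨b :: ζ', y₂ * y', β', rfl⟩
            | zero => rw [mul_zero]; exact Submodule.zero_mem _
            | add u v _ _ hu' hv' => rw [mul_add]; exact Submodule.add_mem _ hu' hv'
            | smul c u _ hu' => rw [mul_smul_comm]; exact Submodule.smul_mem _ _ hu'
          have heq : (t b * π y * star (s β)) * (rest.map t).prod
              = t b * π y * (star (s β) * (rest.map t).prod) := by simp [mul_assoc]
          rw [heq]
          exact key2 _ hb
        | zero => rw [zero_mul]; exact Submodule.zero_mem _
        | add u v _ _ hu' hv' => rw [add_mul]; exact Submodule.add_mem _ hu' hv'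
        | smul c u _ hu' => rw [smul_mul_assoc]; exact Submodule.smul_mem _ _ hu'
      exact key _ (hst_star α a)
  have hgπ : ∀ (w : A) (μ ν : List Sρ) (ζ ξ : List Sη) (x : A),
      π w * ((μ.map s).prod * (ζ.map t).prod * π x * star ((ξ.map t).prod) *
        star ((ν.map s).prod)) ∈ Submodule.span ℂ {z : B | ∃ (μ ν : List Sρ) (ζ ξ : List Sη) (x : A), z = (μ.map s).prod * (ζ.map t).prod * π x * star ((ξ.map t).prod) * star ((ν.map s).prod)} := by
    intro w μ ν ζ ξ x
    obtain ⟨y, hy⟩ := hcS μ w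
    obtain ⟨y', hy'⟩ := hcT ζ y
    have heq : π w * ((μ.map s).prod * (ζ.map t).prod * π x * star ((ξ.map t).prod) *
          star ((ν.map s).prod))
        = (μ.map s).prod * (ζ.map t).prod * π (y' * x) * star ((ξ.map t).prod) *
          star ((ν.map s).prod) := by
      calc π w * ((μ.map s).prod * (ζ.map t).prod * π x * star ((ξ.map t).prod) *
            star ((ν.map s).prod))
          = (π w * (μ.map s).prod) * ((ζ.map t).prod * (π x * (star ((ξ.map t).prod) *
            star ((ν.map s).prod)))) := by simp [mul_assoc]
        _ = ((μ.map s).prod * π y) * ((ζ.map t).prod * (π x * (star ((ξ.map t).prod) *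
            star ((ν.map s).prod)))) := by rw [hy]
        _ = (μ.map s).prod * ((π y * (ζ.map t).prod) * (π x * (star ((ξ.map t).prod) *
            star ((ν.map s).prod)))) := by simp [mul_assoc]
        _ = (μ.map s).prod * (((ζ.map t).prod * π y') * (π x * (star ((ξ.map t).prod) *
            star ((ν.map s).prod)))) := by rw [hy']
        _ = (μ.map s).prod * (ζ.map t).prod * (π y' * π x) * star ((ξ.map t).prod) *
            star ((ν.map s).prod) := by simp [mul_assoc]
        _ = (μ.map s).prod * (ζ.map t).prod * π (y' * x) * star ((ξ.map t).prod) *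
            star ((ν.map s).prod) := by rw [map_mul]
    rw [heq]
    exact Submodule.subset_span ⟨μ, ν, ζ, ξ, y' * x, rfl⟩
  have hgs : ∀ (α : Sρ) (μ ν : List Sρ) (ζ ξ : List Sη) (x : A),
      s α * ((μ.map s).prod * (ζ.map t).prod * π x * star ((ξ.map t).prod) *
        star ((ν.map s).prod)) ∈ Submodule.span ℂ {z : B | ∃ (μ ν : List Sρ) (ζ ξ : List Sη) (x : A), z = (μ.map s).prod * (ζ.map t).prod * π x * star ((ξ.map t).prod) * star ((ν.map s).prod)} := by
    intro α μ ν ζ ξ x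
    exact Submodule.subset_span ⟨α :: μ, ν, ζ, ξ, x, by simp [mul_assoc]⟩
  have hgt : ∀ (a : Sη) (μ ν : List Sρ) (ζ ξ : List Sη) (x : A),
      t a * ((μ.map s).prod * (ζ.map t).prod * π x * star ((ξ.map t).prod) *
        star ((ν.map s).prod)) ∈ Submodule.span ℂ {z : B | ∃ (μ ν : List Sρ) (ζ ξ : List Sη) (x : A), z = (μ.map s).prod * (ζ.map t).prod * π x * star ((ξ.map t).prod) * star ((ν.map s).prod)} := by
    intro a μ ν ζ ξ x
    have hexp : t a * ((μ.map s).prod * (ζ.map t).prod * π x * star ((ξ.map t).prod) *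
          star ((ν.map s).prod))
        = (t a * (μ.map s).prod) * ((ζ.map t).prod * (π x * (star ((ξ.map t).prod) *
          star ((ν.map s).prod)))) := by simp [mul_assoc]
    rcases htS μ a with h0 | ⟨μ', a', h⟩
    · rw [hexp, h0, zero_mul]
      exact Submodule.zero_mem _
    · rw [hexp, h]
      refine Submodule.subset_span ⟨μ', ν, a' :: ζ, ξ, x, ?_⟩
      simp [mul_assoc]
  have hgt' : ∀ (a : Sη) (μ ν : List Sρ) (ζ ξ : List Sη) (x : A),
      star (t a) * ((μ.map s).prod * (ζ.map t).prod * π x * star ((ξ.map t).prod) *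
        star ((ν.map s).prod)) ∈ Submodule.span ℂ {z : B | ∃ (μ ν : List Sρ) (ζ ξ : List Sη) (x : A), z = (μ.map s).prod * (ζ.map t).prod * π x * star ((ξ.map t).prod) * star ((ν.map s).prod)} := by
    intro a μ ν ζ ξ x
    have hexp : star (t a) * ((μ.map s).prod * (ζ.map t).prod * π x * star ((ξ.map t).prod) *
          star ((ν.map s).prod))
        = (star (t a) * (μ.map s).prod) * ((ζ.map t).prod * (π x * (star ((ξ.map t).prod) *
          star ((ν.map s).prod)))) := by simp [mul_assoc]
    rw [hexp]
    have key : ∀ w ∈ Submodule.span ℂ {z : B | ∃ (μ' : List Sρ) (y : A) (b : Sη),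
          z = (μ'.map s).prod * π y * star (t b)},
        w * ((ζ.map t).prod * (π x * (star ((ξ.map t).prod) * star ((ν.map s).prod)))) ∈
          Submodule.span ℂ {z : B | ∃ (μ ν : List Sρ) (ζ ξ : List Sη) (x : A), z = (μ.map s).prod * (ζ.map t).prod * π x * star ((ξ.map t).prod) * star ((ν.map s).prod)} := by
      intro w hw
      induction hw using Submodule.span_induction with
      | mem z hz =>
        obtain ⟨μ', y, b, rfl⟩ := hz
        rcases ζ with _ | ⟨c, ζ'⟩
        · have hTb : star (t b) * star ((ξ.map t).prod)
              = star ((((ξ : List Sη) ++ [b]).map t).prod) := by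
            rw [← star_mul]
            congr 1
            simp [List.map_append, List.prod_append]
          have heq : ((μ'.map s).prod * π y * star (t b)) *
                ((List.map t []).prod * (π x * (star ((ξ.map t).prod) * star ((ν.map s).prod))))
              = (μ'.map s).prod * (List.map t []).prod * π (y * T.es.ρ b x) *
                star ((((ξ : List Sη) ++ [b]).map t).prod) * star ((ν.map s).prod) := by
            calc ((μ'.map s).prod * π y * star (t b)) *
                  ((List.map t []).prod * (π x * (star ((ξ.map t).prod) * star ((ν.map s).prod))))
                = (μ'.map s).prod * π y * ((star (t b) * π x) *
                  (star ((ξ.map t).prod) * star ((ν.map s).prod))) := by simp [mul_assoc]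
              _ = (μ'.map s).prod * π y * ((π (T.es.ρ b x) * star (t b)) *
                  (star ((ξ.map t).prod) * star ((ν.map s).prod))) := by rw [hct']
              _ = (μ'.map s).prod * (π y * π (T.es.ρ b x)) *
                  ((star (t b) * star ((ξ.map t).prod)) * star ((ν.map s).prod)) := by
                  simp [mul_assoc]
              _ = (μ'.map s).prod * π (y * T.es.ρ b x) *
                  (star ((((ξ : List Sη) ++ [b]).map t).prod) * star ((ν.map s).prod)) := by
                  rw [← map_mul, hTb]
              _ = (μ'.map s).prod * (List.map t []).prod * π (y * T.es.ρ b x) *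
                  star ((((ξ : List Sη) ++ [b]).map t).prod) * star ((ν.map s).prod) := by
                  simp [mul_assoc]
          rw [heq]
          exact Submodule.subset_span ⟨μ', ν, [], ξ ++ [b], y * T.es.ρ b x, rfl⟩
        · by_cases hbc : b = c
          · subst hbc
            obtain ⟨y₂, hy₂⟩ := hcT ζ' (y * T.es.ρ b 1)
            have heq : ((μ'.map s).prod * π y * star (t b)) * (((b :: ζ').map t).prod *
                  (π x * (star ((ξ.map t).prod) * star ((ν.map s).prod))))
                = (μ'.map s).prod * (ζ'.map t).prod * π (y₂ * x) * star ((ξ.map t).prod) *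
                  star ((ν.map s).prod) := by
              calc ((μ'.map s).prod * π y * star (t b)) * (((b :: ζ').map t).prod *
                    (π x * (star ((ξ.map t).prod) * star ((ν.map s).prod))))
                  = (μ'.map s).prod * ((π y * (star (t b) * t b)) * ((ζ'.map t).prod *
                    (π x * (star ((ξ.map t).prod) * star ((ν.map s).prod))))) := by
                    simp [mul_assoc]
                _ = (μ'.map s).prod * ((π y * π (T.es.ρ b 1)) * ((ζ'.map t).prod *
                    (π x * (star ((ξ.map t).prod) * star ((ν.map s).prod))))) := by rw [htt]
                _ = (μ'.map s).prod * ((π (y * T.es.ρ b 1) * (ζ'.map t).prod) *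
                    (π x * (star ((ξ.map t).prod) * star ((ν.map s).prod)))) := by
                    rw [map_mul]; simp [mul_assoc]
                _ = (μ'.map s).prod * (((ζ'.map t).prod * π y₂) *
                    (π x * (star ((ξ.map t).prod) * star ((ν.map s).prod)))) := by rw [hy₂]
                _ = (μ'.map s).prod * (ζ'.map t).prod * (π y₂ * π x) * star ((ξ.map t).prod) *
                    star ((ν.map s).prod) := by simp [mul_assoc]
                _ = (μ'.map s).prod * (ζ'.map t).prod * π (y₂ * x) * star ((ξ.map t).prod) *
                    star ((ν.map s).prod) := by rw [map_mul]
            rw [heq]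
            exact Submodule.subset_span ⟨μ', ν, ζ', ξ, y₂ * x, rfl⟩
          · have h0 : star (t b) * t c = 0 := hot b c hbc
            have heq : ((μ'.map s).prod * π y * star (t b)) * (((c :: ζ').map t).prod *
                  (π x * (star ((ξ.map t).prod) * star ((ν.map s).prod))))
                = 0 := by
              calc ((μ'.map s).prod * π y * star (t b)) * (((c :: ζ').map t).prod *
                    (π x * (star ((ξ.map t).prod) * star ((ν.map s).prod))))
                  = (μ'.map s).prod * (π y * ((star (t b) * t c) * ((ζ'.map t).prod *
                    (π x * (star ((ξ.map t).prod) * star ((ν.map s).prod)))))) := by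
                    simp [mul_assoc]
                _ = 0 := by rw [h0, zero_mul, mul_zero, mul_zero]
            rw [heq]
            exact Submodule.zero_mem _
      | zero => rw [zero_mul]; exact Submodule.zero_mem _
      | add u v _ _ hu' hv' => rw [add_mul]; exact Submodule.add_mem _ hu' hv'
      | smul c u _ hu' => rw [smul_mul_assoc]; exact Submodule.smul_mem _ _ hu'
    exact key _ (hE1 μ a)
  have hgs' : ∀ (α : Sρ) (μ ν : List Sρ) (ζ ξ : List Sη) (x : A),
      star (s α) * ((μ.map s).prod * (ζ.map t).prod * π x * star ((ξ.map t).prod) *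
        star ((ν.map s).prod)) ∈ Submodule.span ℂ {z : B | ∃ (μ ν : List Sρ) (ζ ξ : List Sη) (x : A), z = (μ.map s).prod * (ζ.map t).prod * π x * star ((ξ.map t).prod) * star ((ν.map s).prod)} := by
    intro α μ ν ζ ξ x
    rcases μ with _ | ⟨β, μ'⟩
    · have hexp : star (s α) * ((List.map s []).prod * (ζ.map t).prod * π x *
            star ((ξ.map t).prod) * star ((ν.map s).prod))
          = (star (s α) * (ζ.map t).prod) * (π x * (star ((ξ.map t).prod) *
            star ((ν.map s).prod))) := by simp [mul_assoc]
      rw [hexp]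
      have key : ∀ w ∈ Submodule.span ℂ {z : B | ∃ (ζ' : List Sη) (y : A) (β : Sρ),
            z = (ζ'.map t).prod * π y * star (s β)},
          w * (π x * (star ((ξ.map t).prod) * star ((ν.map s).prod))) ∈
            Submodule.span ℂ {z : B | ∃ (μ ν : List Sρ) (ζ ξ : List Sη) (x : A), z = (μ.map s).prod * (ζ.map t).prod * π x * star ((ξ.map t).prod) * star ((ν.map s).prod)} := by
        intro w hw
        induction hw using Submodule.span_induction with
        | mem z hz =>
          obtain ⟨ζ', y, β, rfl⟩ := hz
          rcases hTs ξ β with h0 | ⟨γ, ξ', hξ⟩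
          · have hz0 : star (s β) * star ((ξ.map t).prod) = 0 := by
              rw [← star_mul, h0, star_zero]
            have heq : ((ζ'.map t).prod * π y * star (s β)) *
                  (π x * (star ((ξ.map t).prod) * star ((ν.map s).prod))) = 0 := by
              calc ((ζ'.map t).prod * π y * star (s β)) *
                    (π x * (star ((ξ.map t).prod) * star ((ν.map s).prod)))
                  = (ζ'.map t).prod * π y * ((star (s β) * π x) *
                    (star ((ξ.map t).prod) * star ((ν.map s).prod))) := by simp [mul_assoc]
                _ = (ζ'.map t).prod * π y * ((π (T.rs.ρ β x) * star (s β)) *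
                    (star ((ξ.map t).prod) * star ((ν.map s).prod))) := by rw [hcs']
                _ = (ζ'.map t).prod * π y * (π (T.rs.ρ β x) * ((star (s β) *
                    star ((ξ.map t).prod)) * star ((ν.map s).prod))) := by simp [mul_assoc]
                _ = 0 := by rw [hz0, zero_mul, mul_zero, mul_zero]
            rw [heq]
            exact Submodule.zero_mem _
          · have hz1 : star (s β) * star ((ξ.map t).prod)
                = star ((ξ'.map t).prod) * star (s γ) := by
              rw [← star_mul, hξ, star_mul]
            have hz2 : star (s γ) * star ((ν.map s).prod)
                = star ((((ν : List Sρ) ++ [γ]).map s).prod) := by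
              rw [← star_mul]
              congr 1
              simp [List.map_append, List.prod_append]
            have heq : ((ζ'.map t).prod * π y * star (s β)) *
                  (π x * (star ((ξ.map t).prod) * star ((ν.map s).prod)))
                = (List.map s []).prod * (ζ'.map t).prod * π (y * T.rs.ρ β x) *
                  star ((ξ'.map t).prod) * star ((((ν : List Sρ) ++ [γ]).map s).prod) := by
              calc ((ζ'.map t).prod * π y * star (s β)) *
                    (π x * (star ((ξ.map t).prod) * star ((ν.map s).prod)))
                  = (ζ'.map t).prod * π y * ((star (s β) * π x) *
                    (star ((ξ.map t).prod) * star ((ν.map s).prod))) := by simp [mul_assoc]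
                _ = (ζ'.map t).prod * π y * ((π (T.rs.ρ β x) * star (s β)) *
                    (star ((ξ.map t).prod) * star ((ν.map s).prod))) := by rw [hcs']
                _ = (ζ'.map t).prod * (π y * π (T.rs.ρ β x)) * ((star (s β) *
                    star ((ξ.map t).prod)) * star ((ν.map s).prod)) := by simp [mul_assoc]
                _ = (ζ'.map t).prod * π (y * T.rs.ρ β x) * ((star ((ξ'.map t).prod) *
                    star (s γ)) * star ((ν.map s).prod)) := by rw [← map_mul, hz1]
                _ = (ζ'.map t).prod * π (y * T.rs.ρ β x) * (star ((ξ'.map t).prod) *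
                    (star (s γ) * star ((ν.map s).prod))) := by simp [mul_assoc]
                _ = (ζ'.map t).prod * π (y * T.rs.ρ β x) * (star ((ξ'.map t).prod) *
                    star ((((ν : List Sρ) ++ [γ]).map s).prod)) := by rw [hz2]
                _ = (List.map s []).prod * (ζ'.map t).prod * π (y * T.rs.ρ β x) *
                    star ((ξ'.map t).prod) * star ((((ν : List Sρ) ++ [γ]).map s).prod) := by
                    simp [mul_assoc]
            rw [heq]
            exact Submodule.subset_span ⟨[], ν ++ [γ], ζ', ξ', y * T.rs.ρ β x, rfl⟩
        | zero => rw [zero_mul]; exact Submodule.zero_mem _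
        | add u v _ _ hu' hv' => rw [add_mul]; exact Submodule.add_mem _ hu' hv'
        | smul c u _ hu' => rw [smul_mul_assoc]; exact Submodule.smul_mem _ _ hu'
      exact key _ (hE2 ζ α)
    · by_cases hab : α = β
      · subst hab
        obtain ⟨y₂, hy₂⟩ := hcS μ' (T.rs.ρ α 1)
        obtain ⟨y₃, hy₃⟩ := hcT ζ y₂
        have heq : star (s α) * (((α :: μ').map s).prod * (ζ.map t).prod * π x *
              star ((ξ.map t).prod) * star ((ν.map s).prod))
            = (μ'.map s).prod * (ζ.map t).prod * π (y₃ * x) * star ((ξ.map t).prod) *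
              star ((ν.map s).prod) := by
          calc star (s α) * (((α :: μ').map s).prod * (ζ.map t).prod * π x *
                star ((ξ.map t).prod) * star ((ν.map s).prod))
              = (star (s α) * s α) * ((μ'.map s).prod * ((ζ.map t).prod * (π x *
                (star ((ξ.map t).prod) * star ((ν.map s).prod))))) := by simp [mul_assoc]
            _ = (π (T.rs.ρ α 1) * (μ'.map s).prod) * ((ζ.map t).prod * (π x *
                (star ((ξ.map t).prod) * star ((ν.map s).prod)))) := by
                rw [hss]; simp [mul_assoc]
            _ = ((μ'.map s).prod * π y₂) * ((ζ.map t).prod * (π x *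
                (star ((ξ.map t).prod) * star ((ν.map s).prod)))) := by rw [hy₂]
            _ = (μ'.map s).prod * ((π y₂ * (ζ.map t).prod) * (π x *
                (star ((ξ.map t).prod) * star ((ν.map s).prod)))) := by simp [mul_assoc]
            _ = (μ'.map s).prod * (((ζ.map t).prod * π y₃) * (π x *
                (star ((ξ.map t).prod) * star ((ν.map s).prod)))) := by rw [hy₃]
            _ = (μ'.map s).prod * (ζ.map t).prod * (π y₃ * π x) * star ((ξ.map t).prod) *
                star ((ν.map s).prod) := by simp [mul_assoc]
            _ = (μ'.map s).prod * (ζ.map t).prod * π (y₃ * x) * star ((ξ.map t).prod) *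
                star ((ν.map s).prod) := by rw [map_mul]
        rw [heq]
        exact Submodule.subset_span ⟨μ', ν, ζ, ξ, y₃ * x, rfl⟩
      · have h0 : star (s α) * s β = 0 := hos α β hab
        have heq : star (s α) * (((β :: μ').map s).prod * (ζ.map t).prod * π x *
              star ((ξ.map t).prod) * star ((ν.map s).prod)) = 0 := by
          calc star (s α) * (((β :: μ').map s).prod * (ζ.map t).prod * π x *
                star ((ξ.map t).prod) * star ((ν.map s).prod))
              = (star (s α) * s β) * ((μ'.map s).prod * ((ζ.map t).prod * (π x *
                (star ((ξ.map t).prod) * star ((ν.map s).prod))))) := by simp [mul_assoc]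
            _ = 0 := by rw [h0, zero_mul]
        rw [heq]
        exact Submodule.zero_mem _
  have hmulgen : ∀ g ∈ (Set.range ⇑π ∪ Set.range s ∪ Set.range t) ∪ star (Set.range ⇑π ∪ Set.range s ∪ Set.range t), ∀ u ∈ Submodule.span ℂ {z : B | ∃ (μ ν : List Sρ) (ζ ξ : List Sη) (x : A), z = (μ.map s).prod * (ζ.map t).prod * π x * star ((ξ.map t).prod) * star ((ν.map s).prod)},
      g * u ∈ Submodule.span ℂ {z : B | ∃ (μ ν : List Sρ) (ζ ξ : List Sη) (x : A), z = (μ.map s).prod * (ζ.map t).prod * π x * star ((ξ.map t).prod) * star ((ν.map s).prod)} := by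
    intro g hg u hu
    induction hu using Submodule.span_induction with
    | mem z hz =>
      obtain ⟨μ, ν, ζ, ξ, x, rfl⟩ := hz
      rcases hg with ((⟨w, rfl⟩ | ⟨α, rfl⟩) | ⟨a, rfl⟩) | hg
      · exact hgπ w μ ν ζ ξ x
      · exact hgs α μ ν ζ ξ x
      · exact hgt a μ ν ζ ξ x
      · rw [Set.mem_star] at hg
        rcases hg with (⟨w, hw⟩ | ⟨α, hα⟩) | ⟨a, ha⟩
        · have hgw : g = π (star w) := by rw [map_star, hw, star_star]
          rw [hgw]
          exact hgπ (star w) μ ν ζ ξ x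
        · have hgw : g = star (s α) := by rw [hα, star_star]
          rw [hgw]
          exact hgs' α μ ν ζ ξ x
        · have hgw : g = star (t a) := by rw [ha, star_star]
          rw [hgw]
          exact hgt' a μ ν ζ ξ x
    | zero => rw [mul_zero]; exact Submodule.zero_mem _
    | add u v _ _ hu' hv' => rw [mul_add]; exact Submodule.add_mem _ hu' hv'
    | smul c u _ hu' => rw [mul_smul_comm]; exact Submodule.smul_mem _ _ hu'
  have hlist : ∀ l : List B, (∀ y ∈ l, y ∈ (Set.range ⇑π ∪ Set.range s ∪ Set.range t) ∪ star (Set.range ⇑π ∪ Set.range s ∪ Set.range t)) →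
      l.prod ∈ Submodule.span ℂ {z : B | ∃ (μ ν : List Sρ) (ζ ξ : List Sη) (x : A), z = (μ.map s).prod * (ζ.map t).prod * π x * star ((ξ.map t).prod) * star ((ν.map s).prod)} := by
    intro l
    induction l with
    | nil =>
      intro _
      rw [List.prod_nil]
      exact Submodule.subset_span ⟨[], [], [], [], 1, by simp⟩
    | cons g l ih =>
      intro h
      rw [List.prod_cons]
      exact hmulgen g (h g (by simp)) _ (ih fun y hy => h y (by simp [hy]))
  apply subset_antisymm
  · intro z hz
    rw [SetLike.mem_coe] at hz ⊢
    have hπK : ∀ x : A, π x ∈ StarAlgebra.adjoin ℂ (Set.range ⇑π ∪ Set.range s ∪ Set.range t) := fun x =>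
      StarAlgebra.subset_adjoin ℂ _ (Or.inl (Or.inl ⟨x, rfl⟩))
    have hsK : ∀ α, s α ∈ StarAlgebra.adjoin ℂ (Set.range ⇑π ∪ Set.range s ∪ Set.range t) := fun α =>
      StarAlgebra.subset_adjoin ℂ _ (Or.inl (Or.inr ⟨α, rfl⟩))
    have htK : ∀ a, t a ∈ StarAlgebra.adjoin ℂ (Set.range ⇑π ∪ Set.range s ∪ Set.range t) := fun a =>
      StarAlgebra.subset_adjoin ℂ _ (Or.inr ⟨a, rfl⟩)
    have hSK : ∀ μ : List Sρ, (μ.map s).prod ∈ StarAlgebra.adjoin ℂ (Set.range ⇑π ∪ Set.range s ∪ Set.range t) := by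
      intro μ
      induction μ with
      | nil => rw [List.map_nil, List.prod_nil]; exact one_mem _
      | cons β rest ih => rw [List.map_cons, List.prod_cons]; exact mul_mem (hsK β) ih
    have hTK : ∀ ζ : List Sη, (ζ.map t).prod ∈ StarAlgebra.adjoin ℂ (Set.range ⇑π ∪ Set.range s ∪ Set.range t) := by
      intro ζ
      induction ζ with
      | nil => rw [List.map_nil, List.prod_nil]; exact one_mem _
      | cons a rest ih => rw [List.map_cons, List.prod_cons]; exact mul_mem (htK a) ih
    induction hz using Submodule.span_induction with
    | mem w hw =>
      obtain ⟨μ, ν, ζ, ξ, x, rfl⟩ := hw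
      exact mul_mem (mul_mem (mul_mem (mul_mem (hSK μ) (hTK ζ)) (hπK x))
        (star_mem (hTK ξ))) (star_mem (hSK ν))
    | zero => exact zero_mem _
    | add u v _ _ hu' hv' => exact add_mem hu' hv'
    | smul c u _ hu' => exact SMulMemClass.smul_mem c hu'
  · intro z hz
    rw [SetLike.mem_coe] at hz
    have hz1 : z ∈ Subalgebra.toSubmodule (StarAlgebra.adjoin ℂ (Set.range ⇑π ∪ Set.range s ∪ Set.range t)).toSubalgebra := hz
    rw [StarAlgebra.adjoin_eq_span] at hz1
    rw [SetLike.mem_coe]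
    clear hz
    induction hz1 using Submodule.span_induction with
    | mem w hw =>
      obtain ⟨l, hl, rfl⟩ := Submonoid.exists_list_of_mem_closure hw
      exact hlist l hl
    | zero => exact Submodule.zero_mem _
    | add u v _ _ hu' hv' => exact Submodule.add_mem _ hu' hv'
    | smul c u _ hu' => exact Submodule.smul_mem _ _ hu'
end

section
/- Define δ^κ_ω = η_b ∘ ρ_α for ω = (α,b,a,β) ∈ Σ_κ. Then the family {δ^κ_ω}_{ω ∈ Σ_κ} makes (A, δ^κ, Σ_κ) a C*-symbolic dynamical system; explicitly: each δ^κ_ω is a nonzero *-endomorphism of A with δ^κ_ω(Z_A) ⊆ Z_A, the inequality Σ_{ω ∈ Σ_κ} δ^κ_ω(1) ≥ 1 holds in the C*-order, and for every nonzero x ∈ A there exists ω ∈ Σ_κ with δ^κ_ω(x) ≠ 0. -/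
open scoped Classical

variable (A : Type*) [NormedRing A] [StarRing A] [CStarRing A] [CompleteSpace A]
  [NormedAlgebra ℂ A] [StarModule ℂ A] [PartialOrder A] [StarOrderedRing A]

variable {A}
variable {Sρ Sη : Type*} [Fintype Sρ] [Fintype Sη]

/-- A star homomorphism between star-ordered rings is monotone. -/
lemma starHom_mono' (φ : A →⋆ₙₐ[ℂ] A) {a b : A} (h : a ≤ b) : φ a ≤ φ b := by
  rw [StarOrderedRing.le_iff] at h ⊢
  obtain ⟨c, hc, rfl⟩ := h
  refine ⟨φ c, ?_, by simp⟩
  induction hc using AddSubmonoid.closure_induction with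
  | mem x hx =>
    obtain ⟨s, rfl⟩ := hx
    exact AddSubmonoid.subset_closure ⟨φ s, by simp [map_star, map_mul]⟩
  | zero => simpa using AddSubmonoid.zero_mem _
  | add x y _ _ hx hy => simpa using AddSubmonoid.add_mem _ hx hy

/-- If the composite kills `1`, it kills everything. -/
lemma comp_one_ne_zero' (φ ψ : A →⋆ₙₐ[ℂ] A) {x : A} (hx : φ (ψ x) ≠ 0) :
    φ (ψ 1) ≠ 0 := by
  intro h
  apply hx
  have : ψ x = ψ 1 * ψ x := by rw [← map_mul, one_mul]
  rw [this, map_mul, h, zero_mul]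

/-- The family `δ^κ_ω = η_b ∘ ρ_α` (`ω = (α,b,a,β) ∈ Σ_κ`) makes
`(A, δ^κ, Σ_κ)` a `C*`-symbolic dynamical system; explicitly, each `δ^κ_ω` is a nonzero
`*`-endomorphism preserving the center, `Σ_ω δ^κ_ω(1) ≥ 1`, and the family is faithful. -/
theorem deltaKappa_is_CSDS (T : CTDS A Sρ Sη) :
    (∃ D : CSDS A T.SigmaKappa,
        ∀ (ω : T.SigmaKappa) (x : A), D.ρ ω x = T.es.ρ ω.1.2 (T.rs.ρ ω.1.1 x)) ∧
    (∀ ω : T.SigmaKappa,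
        (fun x : A => T.es.ρ ω.1.2 (T.rs.ρ ω.1.1 x)) ≠ fun _ => (0 : A)) ∧
    (∀ ω : T.SigmaKappa, ∀ x ∈ Set.center A,
        T.es.ρ ω.1.2 (T.rs.ρ ω.1.1 x) ∈ Set.center A) ∧
    (1 ≤ ∑ ω : T.SigmaKappa, T.es.ρ ω.1.2 (T.rs.ρ ω.1.1 1)) ∧
    (∀ x : A, x ≠ 0 → ∃ ω : T.SigmaKappa, T.es.ρ ω.1.2 (T.rs.ρ ω.1.1 x) ≠ 0) := by
  have hcentral : ∀ ω : T.SigmaKappa, ∀ x ∈ Set.center A,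
      T.es.ρ ω.1.2 (T.rs.ρ ω.1.1 x) ∈ Set.center A := fun ω x hx =>
    T.es.central _ _ (T.rs.central _ _ hx)
  have hfaithful : ∀ x : A, x ≠ 0 → ∃ ω : T.SigmaKappa,
      T.es.ρ ω.1.2 (T.rs.ρ ω.1.1 x) ≠ 0 := by
    intro x hx
    obtain ⟨α, hα⟩ := T.rs.faithful x hx
    obtain ⟨b, hb⟩ := T.es.faithful _ hα
    exact ⟨⟨(α, b), ⟨x, hb⟩⟩, hb⟩
  have hess : 1 ≤ ∑ ω : T.SigmaKappa, T.es.ρ ω.1.2 (T.rs.ρ ω.1.1 1) := by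
    have h1 : ∑ ω : T.SigmaKappa, T.es.ρ ω.1.2 (T.rs.ρ ω.1.1 1)
        = ∑ p : Sρ × Sη, T.es.ρ p.2 (T.rs.ρ p.1 1) := by
      rw [← Finset.sum_subtype (Finset.univ.filter
        (fun p : Sρ × Sη => ∃ x, T.es.ρ p.2 (T.rs.ρ p.1 x) ≠ 0))
        (by simp) (fun p => T.es.ρ p.2 (T.rs.ρ p.1 1))]
      refine Finset.sum_subset (Finset.filter_subset _ _) ?_
      intro p _ hp
      simp only [Finset.mem_filter, Finset.mem_univ, true_and, not_exists, not_not] at hp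
      exact hp 1
    have h2 : ∑ p : Sρ × Sη, T.es.ρ p.2 (T.rs.ρ p.1 1)
        = ∑ b : Sη, T.es.ρ b (∑ α : Sρ, T.rs.ρ α 1) := by
      rw [Fintype.sum_prod_type_right]
      exact Finset.sum_congr rfl fun b _ => (map_sum (T.es.ρ b) _ _).symm
    rw [h1, h2]
    calc (1 : A) ≤ ∑ b : Sη, T.es.ρ b 1 := T.es.essential
      _ ≤ ∑ b : Sη, T.es.ρ b (∑ α : Sρ, T.rs.ρ α 1) :=
        Finset.sum_le_sum fun b _ => starHom_mono' (T.es.ρ b) T.rs.essential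
  have hone : ∀ ω : T.SigmaKappa, T.es.ρ ω.1.2 (T.rs.ρ ω.1.1 1) ≠ 0 := fun ω => by
    obtain ⟨x, hx⟩ := ω.2
    exact comp_one_ne_zero' (T.es.ρ ω.1.2) (T.rs.ρ ω.1.1) hx
  refine ⟨⟨⟨fun ω => (T.es.ρ ω.1.2).comp (T.rs.ρ ω.1.1), fun ω => hone ω,
      fun ω => hcentral ω, by simpa using hess, fun x hx => by simpa using hfaithful x hx⟩,
      fun ω x => rfl⟩, ?_, hcentral, hess, hfaithful⟩
  intro ω h
  exact hone ω (congrFun h 1)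
end

section
/- Fix j, k ≥ 0 and a family of elements x_{μ,ζ,ξ,ν} ∈ A indexed by words μ, ν of length j over Σ^ρ and words ζ, ξ of length k over Σ^η. If Σ_{μ,ν,ζ,ξ} s_μ t_ζ π(x_{μ,ζ,ξ,ν}) t_ξ* s_ν* = 0 in B, then η_ζ(ρ_μ(1)) · x_{μ,ζ,ξ,ν} · η_ξ(ρ_ν(1)) = 0 in A for every index (μ,ζ,ξ,ν), and consequently each summand s_μ t_ζ π(x_{μ,ζ,ξ,ν}) t_ξ* s_ν* is zero. -/
open scoped Classical

variable (A : Type*) [NormedRing A] [StarRing A] [CStarRing A] [CompleteSpace A]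
  [NormedAlgebra ℂ A] [StarModule ℂ A] [PartialOrder A] [StarOrderedRing A]

variable {A}
variable {Sρ Sη : Type*} [Fintype Sρ] [Fintype Sη]

variable {B : Type*} [NormedRing B] [StarRing B] [CStarRing B] [CompleteSpace B]
  [NormedAlgebra ℂ B] [StarModule ℂ B]

/-- `ρ_μ = ρ_{μ_j} ∘ ⋯ ∘ ρ_{μ_1}` applied to `x`. -/
noncomputable def rhoW (T : CTDS A Sρ Sη) (μ : List Sρ) (x : A) : A :=
  μ.foldl (fun y α => T.rs.ρ α y) x

/-- `η_ζ = η_{ζ_k} ∘ ⋯ ∘ η_{ζ_1}` applied to `x`. -/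
noncomputable def etaW (T : CTDS A Sρ Sη) (ζ : List Sη) (x : A) : A :=
  ζ.foldl (fun y a => T.es.ρ a y) x


set_option linter.unusedSectionVars false

section Aux

variable {A : Type*} [NormedRing A] [StarRing A] [CStarRing A] [CompleteSpace A]
  [NormedAlgebra ℂ A] [StarModule ℂ A]
variable {B : Type*} [NormedRing B] [StarRing B] [CStarRing B] [CompleteSpace B]
  [NormedAlgebra ℂ B] [StarModule ℂ B]
variable {I : Type*} (π : A →⋆ₐ[ℂ] B) (u : I → B) (f : A → I → A)

/-- projections with sum 1 are mutually orthogonal -/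
lemma aux_ortho [Fintype I]
    (hpi : ∀ i, u i * star (u i) * u i = u i)
    (hone : ∑ i, u i * star (u i) = 1)
    {i j : I} (hij : i ≠ j) :
    (u i * star (u i)) * (u j * star (u j)) = 0 := by
  letI : CStarAlgebra B := {}
  letI : PartialOrder B := CStarAlgebra.spectralOrder B
  letI : StarOrderedRing B := CStarAlgebra.spectralOrderedRing B
  set p : I → B := fun i => u i * star (u i) with hp
  have hsa : ∀ i, star (p i) = p i := by
    intro i; simp [hp, star_mul, mul_assoc]
  have hidem : ∀ i, p i * p i = p i := by
    intro i
    calc p i * p i = (u i * star (u i) * u i) * star (u i) := by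
          simp [hp, mul_assoc]
      _ = p i := by rw [hpi]
  have hsum : ∑ l, p j * p l * p j = p j := by
    calc ∑ l, p j * p l * p j = p j * (∑ l, p l) * p j := by
          rw [Finset.mul_sum, Finset.sum_mul]
      _ = p j := by rw [hone, mul_one, hidem]
  have hkey : ∀ l, p j * p l * p j = star (p l * p j) * (p l * p j) := by
    intro l
    rw [star_mul, hsa, hsa]
    calc p j * p l * p j = p j * (p l * p l) * p j := by rw [hidem]
      _ = p j * p l * (p l * p j) := by noncomm_ring
  have hrest : ∑ l ∈ Finset.univ.erase j, p j * p l * p j = 0 := by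
    have h := Finset.add_sum_erase Finset.univ (fun l => p j * p l * p j)
      (Finset.mem_univ j)
    rw [hsum, hidem, hidem] at h
    exact (add_eq_left).1 h
  have hterm : p j * p i * p j = 0 := by
    have := (Finset.sum_eq_zero_iff_of_nonneg ?_).1 hrest i
      (Finset.mem_erase.2 ⟨hij, Finset.mem_univ i⟩)
    · exact this
    · intro l _
      rw [hkey l]
      exact star_mul_self_nonneg _
  have : star (p i * p j) * (p i * p j) = 0 := by rw [← hkey, hterm]
  exact (CStarRing.star_mul_self_eq_zero_iff _).1 this


section Words

variable (hpi : ∀ i, u i * star (u i) * u i = u i)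
  (hcomm : ∀ (x : A) (i : I), π x * (u i * star (u i)) = u i * star (u i) * π x)
  (hcond : ∀ (x : A) (i : I), star (u i) * π x * u i = π (f x i))

include hpi hcomm hcond

lemma aux_shift_letter (z : A) (i : I) : π z * u i = u i * π (f z i) := by
  calc π z * u i = π z * (u i * star (u i) * u i) := by rw [hpi]
    _ = (π z * (u i * star (u i))) * u i := (mul_assoc _ _ _).symm
    _ = (u i * star (u i) * π z) * u i := by rw [hcomm]
    _ = u i * (star (u i) * π z * u i) := by simp only [mul_assoc]
    _ = u i * π (f z i) := by rw [hcond]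

lemma aux_cond' (z : A) (i : I) : star (u i) * (π z * u i) = π (f z i) := by
  rw [← mul_assoc, hcond]

lemma aux_absorb_letter (i : I) : u i * π (f 1 i) = u i := by
  have h : π (f 1 i) = star (u i) * u i := by
    rw [← hcond]; simp
  rw [h, ← mul_assoc, hpi]

lemma aux_shift (l : List I) (z : A) :
    π z * (l.map u).prod = (l.map u).prod * π (l.foldl f z) := by
  induction l generalizing z with
  | nil => simp
  | cons i l ih =>
    simp only [List.map_cons, List.prod_cons, List.foldl_cons]
    calc π z * (u i * (l.map u).prod) = (π z * u i) * (l.map u).prod := by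
          rw [mul_assoc]
      _ = (u i * π (f z i)) * (l.map u).prod := by
          rw [aux_shift_letter π u f hpi hcomm hcond]
      _ = u i * (π (f z i) * (l.map u).prod) := by rw [mul_assoc]
      _ = u i * ((l.map u).prod * π (l.foldl f (f z i))) := by rw [ih]
      _ = _ := by rw [mul_assoc]

lemma aux_absorb (l : List I) :
    (l.map u).prod * π (l.foldl f 1) = (l.map u).prod := by
  induction l with
  | nil => simp
  | cons i l ih =>
    simp only [List.map_cons, List.prod_cons, List.foldl_cons]
    rw [mul_assoc, ← aux_shift π u f hpi hcomm hcond, ← mul_assoc,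
      aux_absorb_letter π u f hpi hcomm hcond]

lemma aux_collapse (l : List I) (z : A) :
    star ((l.map u).prod) * (π z * (l.map u).prod) =
      π (l.foldl f z) := by
  induction l generalizing z with
  | nil => simp
  | cons i l ih =>
    simp only [List.map_cons, List.prod_cons, List.foldl_cons, star_mul]
    calc (star ((l.map u).prod) * star (u i)) * (π z * (u i * (l.map u).prod))
        = star ((l.map u).prod) * ((star (u i) * (π z * u i)) * (l.map u).prod) := by
          simp only [mul_assoc]
      _ = star ((l.map u).prod) * (π (f z i) * (l.map u).prod) := by
          rw [aux_cond' π u f hpi hcomm hcond]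
      _ = _ := ih _

lemma aux_collapse' (l : List I) (z : A) (b : B) :
    star ((l.map u).prod) * (π z * ((l.map u).prod * b)) =
      π (l.foldl f z) * b := by
  rw [← aux_collapse π u f hpi hcomm hcond l z]
  simp only [mul_assoc]

lemma aux_collapse1' (l : List I) (b : B) :
    star ((l.map u).prod) * ((l.map u).prod * b) =
      π (l.foldl f 1) * b := by
  have h := aux_collapse' π u f hpi hcomm hcond l 1 b
  simpa using h

end Words

section WordsOrtho

variable [Fintype I]
variable (hpi : ∀ i, u i * star (u i) * u i = u i)
  (hcomm : ∀ (x : A) (i : I), π x * (u i * star (u i)) = u i * star (u i) * π x)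
  (hcond : ∀ (x : A) (i : I), star (u i) * π x * u i = π (f x i))
  (hone : ∑ i, u i * star (u i) = 1)

include hpi hcomm hcond hone

lemma aux_cross_letter {i i' : I} (h : i ≠ i') (z : A) :
    star (u i) * (π z * u i') = 0 := by
  have h1 : star (u i) = star (u i) * (u i * star (u i)) := by
    conv_lhs => rw [← hpi i]
    simp only [star_mul, star_star, mul_assoc]
  calc star (u i) * (π z * u i')
      = star (u i) * (π z * (u i' * star (u i') * u i')) := by rw [hpi]
    _ = star (u i) * ((π z * (u i' * star (u i'))) * u i') := by simp only [mul_assoc]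
    _ = star (u i) * ((u i' * star (u i') * π z) * u i') := by rw [hcomm]
    _ = (star (u i) * (u i' * star (u i'))) * (π z * u i') := by simp only [mul_assoc]
    _ = (star (u i) * (u i * star (u i)) * (u i' * star (u i'))) * (π z * u i') := by
          rw [← h1]
    _ = (star (u i) * ((u i * star (u i)) * (u i' * star (u i')))) * (π z * u i') := by
          simp only [mul_assoc]
    _ = 0 := by rw [aux_ortho u hpi hone h]; simp

lemma aux_vanish : ∀ (l l' : List I), l.length = l'.length → l ≠ l' → ∀ z : A,
    star ((l.map u).prod) * (π z * (l'.map u).prod) = 0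
  | [], [], _, hne, _ => absurd rfl hne
  | [], i' :: l', hlen, _, _ => by simp at hlen
  | i :: l, [], hlen, _, _ => by simp at hlen
  | i :: l, i' :: l', hlen, hne, z => by
    simp only [List.map_cons, List.prod_cons, star_mul]
    by_cases hi : i = i'
    · subst hi
      have hne' : l ≠ l' := by rintro rfl; exact hne rfl
      have hlen' : l.length = l'.length := by simpa using hlen
      calc (star ((l.map u).prod) * star (u i)) * (π z * (u i * (l'.map u).prod))
          = star ((l.map u).prod) * ((star (u i) * (π z * u i)) * (l'.map u).prod) := by
            simp only [mul_assoc]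
        _ = star ((l.map u).prod) * (π (f z i) * (l'.map u).prod) := by
            rw [aux_cond' π u f hpi hcomm hcond]
        _ = 0 := aux_vanish l l' hlen' hne' _
    · calc (star ((l.map u).prod) * star (u i)) * (π z * (u i' * (l'.map u).prod))
          = star ((l.map u).prod) * ((star (u i) * (π z * u i')) * (l'.map u).prod) := by
            simp only [mul_assoc]
        _ = 0 := by rw [aux_cross_letter π u f hpi hcomm hcond hone hi]; simp

lemma aux_vanish' (l l' : List I) (hlen : l.length = l'.length) (hne : l ≠ l')
    (z : A) (b : B) :
    star ((l.map u).prod) * (π z * ((l'.map u).prod * b)) = 0 := by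
  have h := aux_vanish π u f hpi hcomm hcond hone l l' hlen hne z
  calc star ((l.map u).prod) * (π z * ((l'.map u).prod * b))
      = (star ((l.map u).prod) * (π z * (l'.map u).prod)) * b := by simp only [mul_assoc]
    _ = 0 := by rw [h]; simp

lemma aux_vanish1' (l l' : List I) (hlen : l.length = l'.length) (hne : l ≠ l') (b : B) :
    star ((l.map u).prod) * ((l'.map u).prod * b) = 0 := by
  have h := aux_vanish' π u f hpi hcomm hcond hone l l' hlen hne 1 b
  simpa using h

end WordsOrtho

lemma aux_foldl_star (hgstar : ∀ (i : I) (y : A), f (star y) i = star (f y i))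
    (l : List I) : ∀ x : A, l.foldl f (star x)
      = star (l.foldl f x) := by
  induction l with
  | nil => intro x; rfl
  | cons i l ih => intro x; simp only [List.foldl_cons, hgstar]; exact ih _

end Aux


/-- If a sum `Σ s_μ t_ζ π(x_{μ,ζ,ξ,ν}) t_ξ* s_ν*` over all words `μ, ν` of
length `j` and `ζ, ξ` of length `k` vanishes, then each coefficient satisfies
`η_ζ(ρ_μ(1)) x_{μ,ζ,ξ,ν} η_ξ(ρ_ν(1)) = 0`, and each summand vanishes. -/
theorem summands_vanish_of_sum_eq_zero
    (T : CTDS A Sρ Sη)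
    (π : A →⋆ₐ[ℂ] B) (hπ : Function.Injective π)
    (s : Sρ → B) (t : Sη → B)
    (hspi : ∀ α, s α * star (s α) * s α = s α)
    (htpi : ∀ a, t a * star (t a) * t a = t a)
    (hs1 : ∑ β, s β * star (s β) = 1)
    (hs2 : ∀ (x : A) (α : Sρ), π x * (s α * star (s α)) = s α * star (s α) * π x)
    (hs3 : ∀ (x : A) (α : Sρ), star (s α) * π x * s α = π (T.rs.ρ α x))
    (ht1 : ∑ b, t b * star (t b) = 1)
    (ht2 : ∀ (x : A) (a : Sη), π x * (t a * star (t a)) = t a * star (t a) * π x)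
    (ht3 : ∀ (x : A) (a : Sη), star (t a) * π x * t a = π (T.es.ρ a x))
    (hst : ∀ p : T.SigmaKappa, s p.1.1 * t p.1.2 = t (T.κ p).1.1 * s (T.κ p).1.2)
    (j k : ℕ)
    (x : (Fin j → Sρ) → (Fin k → Sη) → (Fin k → Sη) → (Fin j → Sρ) → A)
    (hsum : ∑ μ : Fin j → Sρ, ∑ ν : Fin j → Sρ, ∑ ζ : Fin k → Sη, ∑ ξ : Fin k → Sη,
        ((List.ofFn μ).map s).prod * ((List.ofFn ζ).map t).prod * π (x μ ζ ξ ν) *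
          star (((List.ofFn ξ).map t).prod) * star (((List.ofFn ν).map s).prod) = 0) :
    ∀ (μ ν : Fin j → Sρ) (ζ ξ : Fin k → Sη),
      etaW T (List.ofFn ζ) (rhoW T (List.ofFn μ) 1) * x μ ζ ξ ν *
          etaW T (List.ofFn ξ) (rhoW T (List.ofFn ν) 1) = 0 ∧
      ((List.ofFn μ).map s).prod * ((List.ofFn ζ).map t).prod * π (x μ ζ ξ ν) *
          star (((List.ofFn ξ).map t).prod) * star (((List.ofFn ν).map s).prod) = 0 := by
  
  intro μ ν ζ ξ
  -- specialize the auxiliary lemmas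
  have SC1' := aux_collapse1' π s (fun y α => T.rs.ρ α y) hspi hs2 hs3
  have Sshift := aux_shift π s (fun y α => T.rs.ρ α y) hspi hs2 hs3
  have Sabsorb := aux_absorb π s (fun y α => T.rs.ρ α y) hspi hs2 hs3
  have SV1' := aux_vanish1' π s (fun y α => T.rs.ρ α y) hspi hs2 hs3 hs1
  have TC := aux_collapse π t (fun y a => T.es.ρ a y) htpi ht2 ht3
  have TC' := aux_collapse' π t (fun y a => T.es.ρ a y) htpi ht2 ht3
  have Tshift := aux_shift π t (fun y a => T.es.ρ a y) htpi ht2 ht3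
  have TV := aux_vanish π t (fun y a => T.es.ρ a y) htpi ht2 ht3 ht1
  have TV' := aux_vanish' π t (fun y a => T.es.ρ a y) htpi ht2 ht3 ht1
  -- the two central elements
  set h1 : A := List.foldl (fun y a => T.es.ρ a y)
      (List.foldl (fun y α => T.rs.ρ α y) 1 (List.ofFn μ)) (List.ofFn ζ) with hh1
  set h2 : A := List.foldl (fun y a => T.es.ρ a y)
      (List.foldl (fun y α => T.rs.ρ α y) 1 (List.ofFn ν)) (List.ofFn ξ) with hh2
  -- evaluation of each transformed summand
  have z1 : ∀ (μ' ν' : Fin j → Sρ) (ζ' ξ' : Fin k → Sη), μ' ≠ μ →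
      star ((List.ofFn ζ).map t).prod * star ((List.ofFn μ).map s).prod *
        (((List.ofFn μ').map s).prod * ((List.ofFn ζ').map t).prod * π (x μ' ζ' ξ' ν') *
          star (((List.ofFn ξ').map t).prod) * star (((List.ofFn ν').map s).prod)) *
        (((List.ofFn ν).map s).prod * ((List.ofFn ξ).map t).prod) = 0 := by
    intro μ' ν' ζ' ξ' hne
    have hne' : List.ofFn μ ≠ List.ofFn μ' := fun h => hne (List.ofFn_injective h).symm
    simp only [mul_assoc]
    rw [SV1' (List.ofFn μ) (List.ofFn μ') (by simp) hne']
    simp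
  have z2 : ∀ (ν' : Fin j → Sρ) (ζ' ξ' : Fin k → Sη), ν' ≠ ν →
      star ((List.ofFn ζ).map t).prod * star ((List.ofFn μ).map s).prod *
        (((List.ofFn μ).map s).prod * ((List.ofFn ζ').map t).prod * π (x μ ζ' ξ' ν') *
          star (((List.ofFn ξ').map t).prod) * star (((List.ofFn ν').map s).prod)) *
        (((List.ofFn ν).map s).prod * ((List.ofFn ξ).map t).prod) = 0 := by
    intro ν' ζ' ξ' hne
    have hne' : List.ofFn ν' ≠ List.ofFn ν := fun h => hne (List.ofFn_injective h)
    simp only [mul_assoc]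
    rw [SV1' (List.ofFn ν') (List.ofFn ν) (by simp) hne']
    simp
  have z3 : ∀ (ζ' ξ' : Fin k → Sη), ζ' ≠ ζ →
      star ((List.ofFn ζ).map t).prod * star ((List.ofFn μ).map s).prod *
        (((List.ofFn μ).map s).prod * ((List.ofFn ζ').map t).prod * π (x μ ζ' ξ' ν) *
          star (((List.ofFn ξ').map t).prod) * star (((List.ofFn ν).map s).prod)) *
        (((List.ofFn ν).map s).prod * ((List.ofFn ξ).map t).prod) = 0 := by
    intro ζ' ξ' hne
    have hne' : List.ofFn ζ ≠ List.ofFn ζ' := fun h => hne (List.ofFn_injective h).symm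
    simp only [mul_assoc]
    rw [SC1' (List.ofFn μ)]
    rw [TV' (List.ofFn ζ) (List.ofFn ζ') (by simp) hne']
  have z4 : ∀ (ξ' : Fin k → Sη), ξ' ≠ ξ →
      star ((List.ofFn ζ).map t).prod * star ((List.ofFn μ).map s).prod *
        (((List.ofFn μ).map s).prod * ((List.ofFn ζ).map t).prod * π (x μ ζ ξ' ν) *
          star (((List.ofFn ξ').map t).prod) * star (((List.ofFn ν).map s).prod)) *
        (((List.ofFn ν).map s).prod * ((List.ofFn ξ).map t).prod) = 0 := by
    intro ξ' hne
    have hne' : List.ofFn ξ' ≠ List.ofFn ξ := fun h => hne (List.ofFn_injective h)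
    simp only [mul_assoc]
    rw [SC1' (List.ofFn ν)]
    rw [TV (List.ofFn ξ') (List.ofFn ξ) (by simp) hne']
    simp
  have hval :
      star ((List.ofFn ζ).map t).prod * star ((List.ofFn μ).map s).prod *
        (((List.ofFn μ).map s).prod * ((List.ofFn ζ).map t).prod * π (x μ ζ ξ ν) *
          star (((List.ofFn ξ).map t).prod) * star (((List.ofFn ν).map s).prod)) *
        (((List.ofFn ν).map s).prod * ((List.ofFn ξ).map t).prod)
      = π (h1 * (x μ ζ ξ ν * h2)) := by
    simp only [mul_assoc]
    rw [SC1' (List.ofFn ν)]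
    rw [TC (List.ofFn ξ)]
    rw [← map_mul]
    rw [SC1' (List.ofFn μ)]
    rw [TC' (List.ofFn ζ)]
    rw [← map_mul]
  -- the multiplied sum
  have hdist :
      (∑ μ' : Fin j → Sρ, ∑ ν' : Fin j → Sρ, ∑ ζ' : Fin k → Sη, ∑ ξ' : Fin k → Sη,
        star ((List.ofFn ζ).map t).prod * star ((List.ofFn μ).map s).prod *
          (((List.ofFn μ').map s).prod * ((List.ofFn ζ').map t).prod * π (x μ' ζ' ξ' ν') *
            star (((List.ofFn ξ').map t).prod) * star (((List.ofFn ν').map s).prod)) *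
          (((List.ofFn ν).map s).prod * ((List.ofFn ξ).map t).prod)) = 0 := by
    have h : star ((List.ofFn ζ).map t).prod * star ((List.ofFn μ).map s).prod *
        (∑ μ' : Fin j → Sρ, ∑ ν' : Fin j → Sρ, ∑ ζ' : Fin k → Sη, ∑ ξ' : Fin k → Sη,
          ((List.ofFn μ').map s).prod * ((List.ofFn ζ').map t).prod * π (x μ' ζ' ξ' ν') *
            star (((List.ofFn ξ').map t).prod) * star (((List.ofFn ν').map s).prod)) *
        (((List.ofFn ν).map s).prod * ((List.ofFn ξ).map t).prod) = 0 := by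
      rw [hsum, mul_zero, zero_mul]
    rw [← h]
    simp only [Finset.mul_sum, Finset.sum_mul]
  have hsum2 :
      (∑ μ' : Fin j → Sρ, ∑ ν' : Fin j → Sρ, ∑ ζ' : Fin k → Sη, ∑ ξ' : Fin k → Sη,
        star ((List.ofFn ζ).map t).prod * star ((List.ofFn μ).map s).prod *
          (((List.ofFn μ').map s).prod * ((List.ofFn ζ').map t).prod * π (x μ' ζ' ξ' ν') *
            star (((List.ofFn ξ').map t).prod) * star (((List.ofFn ν').map s).prod)) *
          (((List.ofFn ν).map s).prod * ((List.ofFn ξ).map t).prod))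
      = π (h1 * (x μ ζ ξ ν * h2)) := by
    rw [Finset.sum_eq_single_of_mem μ (Finset.mem_univ μ)
      (fun b _ hb => Finset.sum_eq_zero fun ν' _ => Finset.sum_eq_zero fun ζ' _ =>
        Finset.sum_eq_zero fun ξ' _ => z1 b ν' ζ' ξ' hb)]
    rw [Finset.sum_eq_single_of_mem ν (Finset.mem_univ ν)
      (fun b _ hb => Finset.sum_eq_zero fun ζ' _ => Finset.sum_eq_zero fun ξ' _ =>
        z2 b ζ' ξ' hb)]
    rw [Finset.sum_eq_single_of_mem ζ (Finset.mem_univ ζ)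
      (fun b _ hb => Finset.sum_eq_zero fun ξ' _ => z3 b ξ' hb)]
    rw [Finset.sum_eq_single_of_mem ξ (Finset.mem_univ ξ)
      (fun b _ hb => z4 b hb)]
    exact hval
  have hπy : π (h1 * (x μ ζ ξ ν * h2)) = 0 := hsum2.symm.trans hdist
  have hA : h1 * (x μ ζ ξ ν * h2) = 0 := hπ (by rw [map_zero]; exact hπy)
  constructor
  · rw [mul_assoc]
    exact hA
  · -- the summand vanishes
    have e1 : ((List.ofFn μ).map s).prod * ((List.ofFn ζ).map t).prod
        = ((List.ofFn μ).map s).prod * (((List.ofFn ζ).map t).prod * π h1) := by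
      calc ((List.ofFn μ).map s).prod * ((List.ofFn ζ).map t).prod
          = ((List.ofFn μ).map s).prod *
              π (List.foldl (fun y α => T.rs.ρ α y) 1 (List.ofFn μ)) *
              ((List.ofFn ζ).map t).prod := by rw [Sabsorb]
        _ = ((List.ofFn μ).map s).prod *
              (π (List.foldl (fun y α => T.rs.ρ α y) 1 (List.ofFn μ)) *
              ((List.ofFn ζ).map t).prod) := by rw [mul_assoc]
        _ = _ := by rw [Tshift]
    have e2 : ((List.ofFn ν).map s).prod * ((List.ofFn ξ).map t).prod
        = ((List.ofFn ν).map s).prod * (((List.ofFn ξ).map t).prod * π h2) := by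
      calc ((List.ofFn ν).map s).prod * ((List.ofFn ξ).map t).prod
          = ((List.ofFn ν).map s).prod *
              π (List.foldl (fun y α => T.rs.ρ α y) 1 (List.ofFn ν)) *
              ((List.ofFn ξ).map t).prod := by rw [Sabsorb]
        _ = ((List.ofFn ν).map s).prod *
              (π (List.foldl (fun y α => T.rs.ρ α y) 1 (List.ofFn ν)) *
              ((List.ofFn ξ).map t).prod) := by rw [mul_assoc]
        _ = _ := by rw [Tshift]
    have hsa2 : star h2 = h2 := by
      have t1 : star (List.foldl (fun y α => T.rs.ρ α y) 1 (List.ofFn ν))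
          = List.foldl (fun y α => T.rs.ρ α y) 1 (List.ofFn ν) := by
        rw [← aux_foldl_star (fun y α => T.rs.ρ α y)
          (fun i y => map_star (T.rs.ρ i) y) (List.ofFn ν) 1, star_one]
      rw [hh2, ← aux_foldl_star (fun y a => T.es.ρ a y)
        (fun i y => map_star (T.es.ρ i) y) (List.ofFn ξ), t1]
    have e2' : star ((List.ofFn ξ).map t).prod * star ((List.ofFn ν).map s).prod
        = π h2 * (star ((List.ofFn ξ).map t).prod * star ((List.ofFn ν).map s).prod) := by
      have h := congrArg star e2
      simp only [star_mul, mul_assoc] at h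
      rw [← map_star, hsa2] at h
      exact h
    have e1b : ∀ b : B, ((List.ofFn μ).map s).prod * (((List.ofFn ζ).map t).prod * b)
        = ((List.ofFn μ).map s).prod * (((List.ofFn ζ).map t).prod * (π h1 * b)) := by
      intro b
      have h := congrArg (· * b) e1
      simpa only [mul_assoc] using h
    simp only [mul_assoc]
    rw [e2']
    rw [← mul_assoc (π (x μ ζ ξ ν)), ← map_mul]
    rw [e1b]
    rw [← mul_assoc (π h1), ← map_mul, hA, map_zero]
    simp
end
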